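/- arXiv:2405.16045 — 7 statements merged into one kernel-verified Lean document; each statement's English description precedes it below -/
import Mathlib

section
/- Let n, m ≥ 1, let L_1, …, L_{n+m} be positive real numbers, let α, β ∈ (0,1), and let F̄ : ℝ^{n+m} → ℝ be a continuous function that is L_j-periodic in its j-th argument for every 1 ≤ j ≤ n+m. Assume that (1/L_1, …, 1/L_n) are linearly independent over ℚ, that (1/L_{n+1}, …, 1/L_{n+m}) are linearly independent over ℚ, and, in case α = β, that the full family (1/L_1, …, 1/L_{n+m}) is linearly independent over ℚ. For ε ∈ (0,1) define F_ε : ℝ → ℝ by F_ε(x) = F̄(x/ε^α, …, x/ε^α, x/ε^β, …, x/ε^β), where the first n arguments equal x/ε^α and the last m arguments equal x/ε^β. Then for every closed bounded interval I = [a,b] with a < b, the family F_ε converges weakly in L²(I) to the constant function μ(F̄) as ε → 0⁺. -/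
open MeasureTheory Filter Set Topology Submodule


lemma rpow_inv_tendsto {α : ℝ} (hα : 0 < α) :
    Tendsto (fun ε : ℝ => (ε ^ α)⁻¹) (𝓝[>] 0) atTop := by
  have h1 : Tendsto (fun ε : ℝ => (ε⁻¹) ^ α) (𝓝[>] 0) atTop :=
    (tendsto_rpow_atTop hα).comp tendsto_inv_nhdsGT_zero
  refine h1.congr' ?_
  filter_upwards [self_mem_nhdsWithin] with ε (hε : 0 < ε)
  rw [← Real.inv_rpow hε.le]

lemma rpow_tendsto_zero {α : ℝ} (hα : 0 < α) :
    Tendsto (fun ε : ℝ => ε ^ α) (𝓝[>] 0) (𝓝 0) := by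
  have := (rpow_inv_tendsto hα).inv_tendsto_atTop
  refine this.congr' ?_
  filter_upwards [self_mem_nhdsWithin] with ε (hε : 0 < ε)
  simp

/-- helper: case β < α, i.e. `ε^(-α)` dominates. -/
lemma freq_tendsto_aux {α β lam mu : ℝ} (hα : 0 < α) (hβ : 0 < β) (hβα : β < α)
    (h : ¬(lam = 0 ∧ mu = 0)) :
    Tendsto (fun ε : ℝ => |lam * (ε ^ α)⁻¹ + mu * (ε ^ β)⁻¹|) (𝓝[>] 0) atTop := by
  rcases eq_or_ne lam 0 with hlam | hlam
  · have hmu : mu ≠ 0 := by tauto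
    have : Tendsto (fun ε : ℝ => |mu| * (ε ^ β)⁻¹) (𝓝[>] 0) atTop :=
      (rpow_inv_tendsto hβ).const_mul_atTop (abs_pos.mpr hmu)
    refine this.congr' ?_
    filter_upwards [self_mem_nhdsWithin] with ε (hε : 0 < ε)
    rw [hlam, zero_mul, zero_add, abs_mul,
      abs_of_pos (by positivity : (0:ℝ) < (ε ^ β)⁻¹)]
  · -- lam ≠ 0 : |f ε| = (ε^α)⁻¹ * |lam + mu * ε^(α-β)|
    have hlim : Tendsto (fun ε : ℝ => |lam + mu * ε ^ (α - β)|) (𝓝[>] 0) (𝓝 |lam|) := by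
      have : Tendsto (fun ε : ℝ => lam + mu * ε ^ (α - β)) (𝓝[>] 0) (𝓝 (lam + mu * 0)) :=
        (tendsto_const_nhds.add ((rpow_tendsto_zero (by linarith)).const_mul mu))
      simpa using this.abs
    have main : Tendsto (fun ε : ℝ => (ε ^ α)⁻¹ * |lam + mu * ε ^ (α - β)|) (𝓝[>] 0) atTop :=
      Filter.Tendsto.atTop_mul_pos (abs_pos.mpr hlam) (rpow_inv_tendsto hα) hlim
    refine main.congr' ?_
    filter_upwards [self_mem_nhdsWithin] with ε (hε : 0 < ε)
    have hεα : ε ^ α ≠ 0 := by positivity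
    have hεβ : ε ^ β ≠ 0 := by positivity
    have hsub : ε ^ (α - β) = ε ^ α / ε ^ β := Real.rpow_sub hε _ _
    have hkey : lam * (ε ^ α)⁻¹ + mu * (ε ^ β)⁻¹ = (ε ^ α)⁻¹ * (lam + mu * ε ^ (α - β)) := by
      rw [hsub]; field_simp
    rw [hkey, abs_mul, abs_of_pos (by positivity : (0:ℝ) < (ε ^ α)⁻¹)]

lemma freq_tendsto {α β lam mu : ℝ} (hα : 0 < α) (hβ : 0 < β)
    (h : ¬(lam = 0 ∧ mu = 0)) (heq : α = β → lam + mu ≠ 0) :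
    Tendsto (fun ε : ℝ => lam * (ε ^ α)⁻¹ + mu * (ε ^ β)⁻¹) (𝓝[>] 0) (cocompact ℝ) := by
  have key : Tendsto (fun ε : ℝ => |lam * (ε ^ α)⁻¹ + mu * (ε ^ β)⁻¹|) (𝓝[>] 0) atTop := by
    rcases lt_trichotomy β α with hba | hba | hba
    · exact freq_tendsto_aux hα hβ hba h
    · subst hba
      have : Tendsto (fun ε : ℝ => |lam + mu| * (ε ^ β)⁻¹) (𝓝[>] 0) atTop :=
        (rpow_inv_tendsto hβ).const_mul_atTop (abs_pos.mpr (heq rfl))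
      refine this.congr' ?_
      filter_upwards [self_mem_nhdsWithin] with ε (hε : 0 < ε)
      rw [← add_mul, abs_mul, abs_of_pos (by positivity : (0:ℝ) < (ε ^ β)⁻¹)]
    · have := freq_tendsto_aux (lam := mu) (mu := lam) hβ hα hba (by tauto)
      refine this.congr fun ε => ?_
      rw [add_comm]
  refine tendsto_cocompact_of_tendsto_dist_comp_atTop (0 : ℝ) ?_
  simpa [Real.dist_eq] using key

namespace QP
variable {d : ℕ} (L : Fin d → ℝ)

abbrev Torus (L : Fin d → ℝ) : Type := Π j : Fin d, AddCircle (L j)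

noncomputable def qpi : (Fin d → ℝ) → Torus L := Pi.map (fun j (t : ℝ) => (t : AddCircle (L j)))

lemma continuous_qpi : Continuous (qpi L) :=
  continuous_pi fun j => continuous_quotient_mk'.comp (continuous_apply j)

lemma isOpenQuotientMap_qpi : IsOpenQuotientMap (qpi L) :=
  IsOpenQuotientMap.piMap fun _ => QuotientAddGroup.isOpenQuotientMap_mk

/-- Invariance of a function under the lattice. -/
def Inv (H : (Fin d → ℝ) → ℂ) : Prop :=
  ∀ x y : Fin d → ℝ, (∀ j, x j - y j ∈ AddSubgroup.zmultiples (L j)) → H x = H y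

noncomputable def qlift (H : (Fin d → ℝ) → ℂ) : Torus L → ℂ :=
  fun t => H (fun j => (t j).out)

lemma qlift_qpi {H} (hH : Inv L H) (x : Fin d → ℝ) : qlift L H (qpi L x) = H x := by
  apply hH
  intro j
  rw [← QuotientAddGroup.eq_iff_sub_mem]
  exact QuotientAddGroup.out_eq' _

lemma continuous_qlift {H} (hH : Inv L H) (hc : Continuous H) : Continuous (qlift L H) := by
  have h : qlift L H ∘ qpi L = H := funext (qlift_qpi L hH)
  refine (isOpenQuotientMap_qpi L).isQuotientMap.continuous_iff.mpr ?_
  rw [h]; exact hc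

noncomputable def efun (k : Fin d → ℤ) : (Fin d → ℝ) → ℂ :=
  fun y => Complex.exp ((↑(∑ j, (k j : ℝ) * y j / L j) : ℂ) * (2 * Real.pi * Complex.I))

lemma efun_continuous (k : Fin d → ℤ) : Continuous (efun L k) := by
  apply Complex.continuous_exp.comp
  apply Continuous.mul _ continuous_const
  apply Complex.continuous_ofReal.comp
  exact continuous_finset_sum _ fun j _ => (continuous_const.mul (continuous_apply j)).div_const _

lemma efun_inv (hL : ∀ j, 0 < L j) (k : Fin d → ℤ) : Inv L (efun L k) := by
  intro x y hxy
  choose c hc using fun j => (AddSubgroup.mem_zmultiples_iff).mp (hxy j)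
  have key : (∑ j, (k j:ℝ) * x j / L j)
      = (∑ j, (k j:ℝ) * y j / L j) + ((∑ j, k j * c j : ℤ) : ℝ) := by
    push_cast
    rw [← Finset.sum_add_distrib]
    refine Finset.sum_congr rfl fun j _ => ?_
    have hcj : (c j : ℝ) * L j = x j - y j := by
      have := hc j; rw [zsmul_eq_mul] at this; exact this
    have hLj : L j ≠ 0 := (hL j).ne'
    have hx : x j = y j + (c j : ℝ) * L j := by linarith
    rw [hx]
    field_simp
  unfold efun
  rw [key, Complex.ofReal_add, add_mul, Complex.exp_add]
  rw [show (((∑ j, k j * c j : ℤ) : ℝ) : ℂ) = ((∑ j, k j * c j : ℤ) : ℂ) by push_cast; ring,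
    Complex.exp_int_mul_two_pi_mul_I, mul_one]

variable [hF : ∀ j, Fact (0 < L j)]

noncomputable def char (k : Fin d → ℤ) : C(Torus L, ℂ) :=
  ⟨qlift L (efun L k),
    continuous_qlift L (efun_inv L (fun j => (hF j).out) k) (efun_continuous L k)⟩

lemma char_qpi (k : Fin d → ℤ) (x : Fin d → ℝ) : char L k (qpi L x) = efun L k x :=
  qlift_qpi L (efun_inv L (fun j => (hF j).out) k) x

lemma char_zero : char L (0 : Fin d → ℤ) = 1 := by
  ext t
  show efun L 0 _ = 1
  simp [efun]

lemma char_mul (k l : Fin d → ℤ) : char L k * char L l = char L (k + l) := by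
  ext t
  show efun L k _ * efun L l _ = efun L (k + l) _
  have hs : (∑ j, ((k + l) j : ℝ) * (t j).out / L j)
      = (∑ j, (k j : ℝ) * (t j).out / L j) + ∑ j, (l j : ℝ) * (t j).out / L j := by
    rw [← Finset.sum_add_distrib]
    refine Finset.sum_congr rfl fun j _ => ?_
    push_cast [Pi.add_apply]; ring
  unfold efun
  rw [hs, Complex.ofReal_add, add_mul, Complex.exp_add]

lemma char_star (k : Fin d → ℤ) : star (char L k) = char L (-k) := by
  ext t
  show (starRingEnd ℂ) (efun L k _) = efun L (-k) _
  have hs : (∑ j, ((-k) j : ℝ) * (t j).out / L j)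
      = -(∑ j, (k j : ℝ) * (t j).out / L j) := by
    rw [← Finset.sum_neg_distrib]
    refine Finset.sum_congr rfl fun j _ => ?_
    push_cast [Pi.neg_apply]; ring
  unfold efun
  rw [hs, ← Complex.exp_conj]
  congr 1
  simp only [map_mul, Complex.conj_ofReal, map_ofNat, Complex.conj_I, Complex.ofReal_neg]
  ring


noncomputable def charAlg : StarSubalgebra ℂ C(Torus L, ℂ) where
  toSubalgebra := Algebra.adjoin ℂ (Set.range (char L))
  star_mem' := by
    show Algebra.adjoin ℂ (Set.range (char L)) ≤
      star (Algebra.adjoin ℂ (Set.range (char L)))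
    refine Algebra.adjoin_le ?_
    rintro - ⟨k, rfl⟩
    exact Algebra.subset_adjoin ⟨-k, (char_star L k).symm⟩

theorem charAlg_coe :
    Subalgebra.toSubmodule (charAlg L).toSubalgebra = span ℂ (Set.range (char L)) := by
  apply Algebra.adjoin_eq_span_of_subset
  refine Subset.trans ?_ Submodule.subset_span
  intro x hx
  refine Submonoid.closure_induction (fun _ => id) ⟨0, ?_⟩ ?_ hx
  · rw [char_zero]
  · rintro - - - - ⟨k, rfl⟩ ⟨l, rfl⟩
    exact ⟨k + l, (char_mul L k l).symm⟩

theorem charAlg_separatesPoints : (charAlg L).SeparatesPoints := by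
  intro t t' htt'
  obtain ⟨j, hj⟩ := Function.ne_iff.mp htt'
  refine ⟨_, ⟨char L (Pi.single j 1), Algebra.subset_adjoin ⟨_, rfl⟩, rfl⟩, ?_⟩
  dsimp only
  have hval : ∀ s : Torus L, char L (Pi.single j 1) s
      = Complex.exp ((((s j).out / L j : ℝ) : ℂ) * (2 * Real.pi * Complex.I)) := by
    intro s
    show efun L (Pi.single j 1) _ = _
    unfold efun
    congr 2
    rw [Finset.sum_eq_single j]
    · simp
    · intro i _ hij
      rw [Pi.single_eq_of_ne hij]
      simp
    · simp
  rw [hval, hval]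
  intro heq
  obtain ⟨N, hN⟩ := Complex.exp_eq_exp_iff_exists_int.mp heq
  have hLj : L j ≠ 0 := (hF j).out.ne'
  have h2 : ((((t j).out / L j : ℝ) : ℂ) - (((t' j).out / L j : ℝ) : ℂ) - N)
      * (2 * Real.pi * Complex.I) = 0 := by
    rw [sub_mul, sub_mul, hN]; ring
  have h3 : (((t j).out / L j : ℝ) : ℂ) - (((t' j).out / L j : ℝ) : ℂ) - N = 0 :=
    by
      rcases mul_eq_zero.mp h2 with h | h
      · exact h
      · exact absurd h Complex.two_pi_I_ne_zero
  push_cast at h3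
  have h4 : (((t j).out / L j - (t' j).out / L j - (N : ℝ) : ℝ)) = 0 := by
    have : ((((t j).out / L j - (t' j).out / L j - (N : ℝ) : ℝ)) : ℂ) = 0 := by
      push_cast
      linear_combination h3
    exact_mod_cast this
  apply hj
  have hmem : (t j).out - (t' j).out ∈ AddSubgroup.zmultiples (L j) := by
    refine ⟨N, ?_⟩
    show (N : ℤ) • L j = (t j).out - (t' j).out
    rw [zsmul_eq_mul]
    field_simp at h4
    linarith [h4]
  have := (QuotientAddGroup.eq_iff_sub_mem).mpr hmem
  rwa [QuotientAddGroup.out_eq', QuotientAddGroup.out_eq'] at this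

theorem charAlg_closure_eq_top : (charAlg L).topologicalClosure = ⊤ :=
  ContinuousMap.starSubalgebra_topologicalClosure_eq_top_of_separatesPoints _
    (charAlg_separatesPoints L)

theorem span_char_closure_eq_top :
    (span ℂ (Set.range (char L))).topologicalClosure = ⊤ := by
  rw [← charAlg_coe]
  exact congr_arg (Subalgebra.toSubmodule <| StarSubalgebra.toSubalgebra ·)
    (charAlg_closure_eq_top L)


def cell : Set (Fin d → ℝ) := univ.pi fun j => Ioo 0 (L j)

lemma cell_measurable : MeasurableSet (cell L) :=
  MeasurableSet.univ_pi fun _ => measurableSet_Ioo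

noncomputable def meanT (G : C(Torus L, ℂ)) : ℂ :=
  (((∏ j, L j)⁻¹ : ℝ) : ℂ) * ∫ y in cell L, G (qpi L y)

lemma integral_Ioo_char {Lj : ℝ} (hLj : 0 < Lj) (kj : ℤ) :
    ∫ t in Ioo (0:ℝ) Lj, Complex.exp ((((kj : ℝ) * t / Lj : ℝ) : ℂ) * (2 * Real.pi * Complex.I))
      = if kj = 0 then (Lj : ℂ) else 0 := by
  rcases eq_or_ne kj 0 with hk | hk
  · subst hk
    simp only [Int.cast_zero, zero_mul, zero_div, Complex.ofReal_zero, Complex.exp_zero,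
      if_true]
    rw [setIntegral_const]
    simp [Real.volume_Ioo, hLj.le]
  · rw [if_neg hk]
    set c : ℂ := 2 * Real.pi * Complex.I * kj / Lj with hc
    have hcast : ∀ t : ℝ, ((((kj : ℝ) * t / Lj : ℝ) : ℂ) * (2 * Real.pi * Complex.I))
        = c * t := by
      intro t; rw [hc]; push_cast; ring
    have hcne : c ≠ 0 := by
      rw [hc]
      apply div_ne_zero
      · exact mul_ne_zero Complex.two_pi_I_ne_zero (Int.cast_ne_zero.mpr hk)
      · exact_mod_cast hLj.ne'
    calc ∫ t in Ioo (0:ℝ) Lj, Complex.exp ((((kj : ℝ) * t / Lj : ℝ) : ℂ)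
            * (2 * Real.pi * Complex.I))
        = ∫ t in Ioo (0:ℝ) Lj, Complex.exp (c * t) := by
          refine setIntegral_congr_fun measurableSet_Ioo fun t _ => ?_
          rw [hcast]
      _ = ∫ t in (0:ℝ)..Lj, Complex.exp (c * t) := by
          rw [intervalIntegral.integral_of_le hLj.le, integral_Ioc_eq_integral_Ioo]
      _ = (Complex.exp (c * Lj) - Complex.exp (c * 0)) / c := integral_exp_mul_complex hcne
      _ = 0 := by
          have h1 : c * Lj = (kj : ℂ) * (2 * Real.pi * Complex.I) := by
            rw [hc]
            have : (Lj : ℂ) ≠ 0 := by exact_mod_cast hLj.ne'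
            field_simp
          rw [h1, Complex.exp_int_mul_two_pi_mul_I, mul_zero, Complex.exp_zero, sub_self,
            zero_div]

lemma integral_cell_efun (k : Fin d → ℤ) (hL : ∀ j, 0 < L j) :
    ∫ y in cell L, efun L k y = ∏ j, ((if k j = 0 then (L j : ℂ) else 0)) := by
  have hsplit : ∀ y : Fin d → ℝ, efun L k y
      = ∏ j, Complex.exp ((((k j : ℝ) * y j / L j : ℝ) : ℂ) * (2 * Real.pi * Complex.I)) := by
    intro y
    unfold efun
    rw [← Complex.exp_sum]
    congr 1
    rw [Complex.ofReal_sum, Finset.sum_mul]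
  set f : Fin d → ℝ → ℂ :=
    fun j t => Complex.exp ((((k j : ℝ) * t / L j : ℝ) : ℂ) * (2 * Real.pi * Complex.I)) with hf
  calc ∫ y in cell L, efun L k y
      = ∫ y : Fin d → ℝ, (cell L).indicator (fun y => ∏ j, f j (y j)) y := by
        rw [integral_indicator (cell_measurable L)]
        exact setIntegral_congr_fun (cell_measurable L) fun y _ => hsplit y
    _ = ∫ y : Fin d → ℝ, ∏ j, (Ioo (0:ℝ) (L j)).indicator (f j) (y j) := by
        refine integral_congr_ae (Eventually.of_forall fun y => ?_)
        by_cases hy : y ∈ cell L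
        · rw [indicator_of_mem hy]
          have hmem := (Set.mem_univ_pi).mp hy
          exact Finset.prod_congr rfl fun j _ => (indicator_of_mem (hmem j) (f j)).symm
        · rw [indicator_of_notMem hy]
          obtain ⟨j, hj⟩ := not_forall.mp (fun hall => hy (Set.mem_univ_pi.mpr hall))
          exact (Finset.prod_eq_zero (Finset.mem_univ j)
            (indicator_of_notMem hj (f j))).symm
    _ = ∏ j, ∫ t : ℝ, (Ioo (0:ℝ) (L j)).indicator (f j) t :=
        MeasureTheory.integral_fintype_prod_eq_prod
          (fun j => (Ioo (0:ℝ) (L j)).indicator (f j))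
    _ = ∏ j, ((if k j = 0 then (L j : ℂ) else 0)) := by
        refine Finset.prod_congr rfl fun j _ => ?_
        rw [integral_indicator measurableSet_Ioo]
        exact integral_Ioo_char (hL j) (k j)

lemma meanT_char_of_ne (k : Fin d → ℤ) (hk : k ≠ 0) : meanT L (char L k) = 0 := by
  have hL : ∀ j, 0 < L j := fun j => (hF j).out
  unfold meanT
  have : ∫ y in cell L, (char L k) (qpi L y) = ∫ y in cell L, efun L k y :=
    setIntegral_congr_fun (cell_measurable L) fun y _ => char_qpi L k y
  rw [this, integral_cell_efun L k hL]
  obtain ⟨j, hj⟩ := Function.ne_iff.mp hk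
  have hj' : k j ≠ 0 := by simpa using hj
  have hz : (∏ j, if k j = 0 then (L j : ℂ) else 0) = 0 :=
    Finset.prod_eq_zero (Finset.mem_univ j) (if_neg hj')
  rw [hz, mul_zero]

lemma meanT_char_zero : meanT L (char L (0 : Fin d → ℤ)) = 1 := by
  have hL : ∀ j, 0 < L j := fun j => (hF j).out
  unfold meanT
  have : ∫ y in cell L, (char L 0) (qpi L y) = ∫ y in cell L, efun L 0 y :=
    setIntegral_congr_fun (cell_measurable L) fun y _ => char_qpi L 0 y
  rw [this, integral_cell_efun L 0 hL]
  simp only [Pi.zero_apply, if_true]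
  rw [← Complex.ofReal_prod, ← Complex.ofReal_mul]
  norm_cast
  rw [inv_mul_cancel₀]
  exact (Finset.prod_pos fun j _ => hL j).ne'


section Conv
open scoped FourierTransform

variable (r : ℝ → Fin d → ℝ) (a b : ℝ) (g : ℝ → ℝ)

/-- The convergence predicate. -/
def Conv (G : C(Torus L, ℂ)) : Prop :=
  Tendsto (fun ε : ℝ => ∫ x in Icc a b, G (qpi L (fun j => x * r ε j)) * (g x : ℂ))
    (𝓝[>] (0:ℝ)) (𝓝 (meanT L G * ∫ x in Icc a b, (g x : ℂ)))

lemma continuous_inner (G : C(Torus L, ℂ)) (w : Fin d → ℝ) :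
    Continuous fun x : ℝ => G (qpi L (fun j => x * w j)) :=
  G.continuous.comp ((continuous_qpi L).comp
    (continuous_pi fun j => continuous_id.mul continuous_const))

lemma integrable_inner (hg : IntegrableOn g (Icc a b)) (G : C(Torus L, ℂ)) (w : Fin d → ℝ) :
    IntegrableOn (fun x => G (qpi L (fun j => x * w j)) * (g x : ℂ)) (Icc a b) :=
  Integrable.bdd_mul hg.ofReal
    (continuous_inner L G w).aestronglyMeasurable.restrict
    (Eventually.of_forall fun x => G.norm_coe_le_norm _)

lemma norm_integral_inner_le (hg : IntegrableOn g (Icc a b)) (G : C(Torus L, ℂ))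
    (w : Fin d → ℝ) :
    ‖∫ x in Icc a b, G (qpi L (fun j => x * w j)) * (g x : ℂ)‖
      ≤ ‖G‖ * ∫ x in Icc a b, |g x| := by
  refine (norm_integral_le_integral_norm _).trans ?_
  have hle : (fun x => ‖G (qpi L (fun j => x * w j)) * (g x : ℂ)‖)
      ≤ᵐ[volume.restrict (Icc a b)] fun x => ‖G‖ * |g x| := by
    refine Eventually.of_forall fun x => ?_
    show ‖G (qpi L fun j => x * w j) * (g x : ℂ)‖ ≤ ‖G‖ * |g x|
    rw [norm_mul, Complex.norm_real, Real.norm_eq_abs]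
    exact mul_le_mul_of_nonneg_right (G.norm_coe_le_norm _) (abs_nonneg _)
  refine le_trans (integral_mono_of_nonneg (Eventually.of_forall fun x => norm_nonneg _)
    ((hg.norm.const_mul ‖G‖).congr (Eventually.of_forall fun x => by
      show ‖G‖ * ‖g x‖ = ‖G‖ * |g x|
      rw [Real.norm_eq_abs])) hle) ?_
  rw [integral_const_mul]

lemma volume_cell : volume (cell L) = ENNReal.ofReal (∏ j, L j) := by
  have hL : ∀ j, 0 < L j := fun j => (hF j).out
  rw [cell, volume_pi_pi]
  rw [ENNReal.ofReal_prod_of_nonneg fun j _ => (hL j).le]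
  exact Finset.prod_congr rfl fun j _ => by rw [Real.volume_Ioo, sub_zero]

lemma volume_cell_toReal : (volume (cell L)).toReal = ∏ j, L j := by
  rw [volume_cell L]
  exact ENNReal.toReal_ofReal (Finset.prod_nonneg fun j _ => ((hF j).out).le)

lemma volume_cell_lt_top : volume (cell L) < ⊤ := by
  rw [volume_cell L]; exact ENNReal.ofReal_lt_top

lemma integrableOn_cell (G : C(Torus L, ℂ)) :
    IntegrableOn (fun y => G (qpi L y)) (cell L) := by
  have hc : Continuous fun y => G (qpi L y) := G.continuous.comp (continuous_qpi L)
  have := hc.continuousOn.integrableOn_compact (μ := volume)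
    (isCompact_univ_pi (s := fun j => Icc (0:ℝ) (L j)) fun j => isCompact_Icc)
  exact this.mono_set (Set.pi_mono fun j _ => Ioo_subset_Icc_self)

lemma norm_meanT_le (G : C(Torus L, ℂ)) : ‖meanT L G‖ ≤ ‖G‖ := by
  have hL : ∀ j, 0 < L j := fun j => (hF j).out
  have hprod : (0:ℝ) < ∏ j, L j := Finset.prod_pos fun j _ => hL j
  unfold meanT
  rw [norm_mul, Complex.norm_real, Real.norm_eq_abs, abs_of_pos (inv_pos.mpr hprod)]
  have hb : ‖∫ y in cell L, G (qpi L y)‖ ≤ ‖G‖ * (volume (cell L)).toReal :=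
    norm_setIntegral_le_of_norm_le_const (volume_cell_lt_top L)
      (fun y _ => G.norm_coe_le_norm _)
  rw [volume_cell_toReal L] at hb
  calc (∏ j, L j)⁻¹ * ‖∫ y in cell L, G (qpi L y)‖
      ≤ (∏ j, L j)⁻¹ * (‖G‖ * ∏ j, L j) :=
        mul_le_mul_of_nonneg_left hb (inv_pos.mpr hprod).le
    _ = ‖G‖ := by field_simp

lemma meanT_add (G H : C(Torus L, ℂ)) : meanT L (G + H) = meanT L G + meanT L H := by
  unfold meanT
  have : ∫ y in cell L, (G + H) (qpi L y)
      = (∫ y in cell L, G (qpi L y)) + ∫ y in cell L, H (qpi L y) := by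
    rw [← integral_add (integrableOn_cell L G) (integrableOn_cell L H)]
    rfl
  rw [this, mul_add]

lemma meanT_smul (c : ℂ) (G : C(Torus L, ℂ)) : meanT L (c • G) = c * meanT L G := by
  unfold meanT
  have : ∫ y in cell L, (c • G) (qpi L y) = c * ∫ y in cell L, G (qpi L y) := by
    rw [← integral_const_mul]
    rfl
  rw [this]; ring

lemma conv_zero : Conv L r a b g (0 : C(Torus L, ℂ)) := by
  have h0 : meanT L (0 : C(Torus L, ℂ)) = 0 := by
    unfold meanT
    simp
  unfold Conv
  rw [h0, zero_mul]
  refine tendsto_const_nhds.congr fun ε => ?_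
  simp

lemma conv_add (G H : C(Torus L, ℂ)) (hg : IntegrableOn g (Icc a b))
    (h1 : Conv L r a b g G) (h2 : Conv L r a b g H) : Conv L r a b g (G + H) := by
  unfold Conv
  rw [meanT_add, add_mul]
  refine (h1.add h2).congr fun ε => ?_
  rw [← integral_add (integrable_inner L a b g hg G _) (integrable_inner L a b g hg H _)]
  refine setIntegral_congr_fun measurableSet_Icc fun x _ => ?_
  show G _ * _ + H _ * _ = (G + H) _ * _
  rw [ContinuousMap.add_apply]; ring

lemma conv_smul (c : ℂ) (G : C(Torus L, ℂ)) (h : Conv L r a b g G) :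
    Conv L r a b g (c • G) := by
  unfold Conv
  rw [meanT_smul, mul_assoc]
  refine (h.const_mul c).congr fun ε => ?_
  rw [← integral_const_mul]
  refine setIntegral_congr_fun measurableSet_Icc fun x _ => ?_
  show c * (G _ * _) = (c • G) _ * _
  rw [ContinuousMap.smul_apply, smul_eq_mul]; ring

lemma conv_char_zero : Conv L r a b g (char L (0 : Fin d → ℤ)) := by
  unfold Conv
  rw [meanT_char_zero, one_mul]
  refine tendsto_const_nhds.congr fun ε => ?_
  refine (setIntegral_congr_fun measurableSet_Icc fun x _ => ?_).symm
  rw [char_zero]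
  show (1 : C(Torus L, ℂ)) _ * _ = _
  rw [ContinuousMap.one_apply, one_mul]

lemma conv_char (hg : IntegrableOn g (Icc a b)) (k : Fin d → ℤ) (hk : k ≠ 0)
    (hfreq : Tendsto (fun ε : ℝ => ∑ j, ((-k) j : ℝ) * r ε j / L j) (𝓝[>] (0:ℝ))
      (cocompact ℝ)) :
    Conv L r a b g (char L k) := by
  unfold Conv
  rw [meanT_char_of_ne L k hk, zero_mul]
  set f : ℝ → ℂ := (Icc a b).indicator fun x => (g x : ℂ) with hf
  set w : ℝ → ℝ := fun ε => ∑ j, ((-k) j : ℝ) * r ε j / L j with hw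
  have hRL : Tendsto (fun u : ℝ => ∫ v : ℝ, Real.fourierChar (-(v * u)) • f v)
      (cocompact ℝ) (𝓝 0) := Real.tendsto_integral_exp_smul_cocompact f
  refine (hRL.comp hfreq).congr fun ε => ?_
  show ∫ v : ℝ, Real.fourierChar (-(v * w ε)) • f v = _
  have key : ∀ x : ℝ, (Real.fourierChar (-(x * w ε)) : ℂ) = efun L k (fun j => x * r ε j) := by
    intro x
    rw [Real.fourierChar_apply]
    unfold efun
    have hsum : (∑ j, (k j : ℝ) * (x * r ε j) / L j) = -(x * w ε) := by
      rw [hw]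
      dsimp only
      rw [Finset.mul_sum, ← Finset.sum_neg_distrib]
      refine Finset.sum_congr rfl fun j _ => ?_
      push_cast [Pi.neg_apply]
      ring
    rw [hsum]
    congr 1
    push_cast
    ring
  calc ∫ v : ℝ, Real.fourierChar (-(v * w ε)) • f v
      = ∫ v : ℝ, (Icc a b).indicator
          (fun x => (Real.fourierChar (-(x * w ε)) : ℂ) * (g x : ℂ)) v := by
        refine integral_congr_ae (Eventually.of_forall fun v => ?_)
        show Real.fourierChar (-(v * w ε)) • f v = _
        rw [Circle.smul_def, smul_eq_mul, hf]
        by_cases hv : v ∈ Icc a b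
        · rw [indicator_of_mem hv, indicator_of_mem hv]
        · rw [indicator_of_notMem hv, indicator_of_notMem hv, mul_zero]
    _ = ∫ x in Icc a b, (Real.fourierChar (-(x * w ε)) : ℂ) * (g x : ℂ) :=
        integral_indicator measurableSet_Icc
    _ = ∫ x in Icc a b, char L k (qpi L fun j => x * r ε j) * (g x : ℂ) := by
        refine setIntegral_congr_fun measurableSet_Icc fun x _ => ?_
        rw [key x, char_qpi]


lemma meanT_sub (G P : C(Torus L, ℂ)) : meanT L (G - P) = meanT L G - meanT L P := by
  unfold meanT
  have : ∫ y in cell L, (G - P) (qpi L y)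
      = (∫ y in cell L, G (qpi L y)) - ∫ y in cell L, P (qpi L y) := by
    rw [← integral_sub (integrableOn_cell L G) (integrableOn_cell L P)]
    rfl
  rw [this, mul_sub]

lemma conv_span (hg : IntegrableOn g (Icc a b))
    (hfreq : ∀ k : Fin d → ℤ, k ≠ 0 →
      Tendsto (fun ε : ℝ => ∑ j, (k j : ℝ) * r ε j / L j) (𝓝[>] (0:ℝ)) (cocompact ℝ))
    {G : C(Torus L, ℂ)} (hG : G ∈ Submodule.span ℂ (Set.range (char L))) :
    Conv L r a b g G := by
  induction hG using Submodule.span_induction with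
  | mem x h =>
    obtain ⟨k, rfl⟩ := h
    rcases eq_or_ne k 0 with rfl | hk
    · exact conv_char_zero L r a b g
    · exact conv_char L r a b g hg k hk (hfreq (-k) (neg_ne_zero.mpr hk))
  | zero => exact conv_zero L r a b g
  | add x y hx hy ihx ihy => exact conv_add L r a b g x y hg ihx ihy
  | smul c x hx ih => exact conv_smul L r a b g c x ih

lemma conv_all (hg : IntegrableOn g (Icc a b))
    (hfreq : ∀ k : Fin d → ℤ, k ≠ 0 →
      Tendsto (fun ε : ℝ => ∑ j, (k j : ℝ) * r ε j / L j) (𝓝[>] (0:ℝ)) (cocompact ℝ))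
    (G : C(Torus L, ℂ)) : Conv L r a b g G := by
  have hdense : G ∈ closure ((Submodule.span ℂ (Set.range (char L)) : Submodule ℂ _) :
      Set C(Torus L, ℂ)) := by
    have h := span_char_closure_eq_top L
    have : G ∈ (Submodule.span ℂ (Set.range (char L))).topologicalClosure := by
      rw [h]; trivial
    exact this
  unfold Conv
  rw [Metric.tendsto_nhds]
  intro η hη
  set A := ∫ x in Icc a b, |g x| with hA_def
  set B := ‖∫ x in Icc a b, (g x : ℂ)‖ with hB_def
  have hA : 0 ≤ A := integral_nonneg fun x => abs_nonneg _
  have hB : 0 ≤ B := norm_nonneg _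
  set δ := η / (2 * (A + B + 1)) with hδ_def
  have hδ : 0 < δ := by rw [hδ_def]; positivity
  have hδ_eq : δ * (A + B + 1) = η / 2 := by
    rw [hδ_def]; field_simp
  obtain ⟨P, hPmem, hPdist⟩ := Metric.mem_closure_iff.mp hdense δ hδ
  have hconvP := conv_span L r a b g hg hfreq hPmem
  have hnorm : ‖G - P‖ ≤ δ := by rw [← dist_eq_norm]; exact hPdist.le
  have hev := Metric.tendsto_nhds.mp hconvP (η/2) (by positivity)
  filter_upwards [hev] with ε hε
  set IG := ∫ x in Icc a b, G (qpi L (fun j => x * r ε j)) * (g x : ℂ) with hIG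
  set IP := ∫ x in Icc a b, P (qpi L (fun j => x * r ε j)) * (g x : ℂ) with hIP
  set C := ∫ x in Icc a b, (g x : ℂ) with hC
  have h1 : dist IG IP ≤ δ * A := by
    rw [dist_eq_norm]
    have hsub : IG - IP = ∫ x in Icc a b,
        (G - P) (qpi L (fun j => x * r ε j)) * (g x : ℂ) := by
      rw [hIG, hIP, ← integral_sub (integrable_inner L a b g hg G _)
        (integrable_inner L a b g hg P _)]
      refine setIntegral_congr_fun measurableSet_Icc fun x _ => ?_
      show G _ * _ - P _ * _ = (G - P) _ * _
      rw [ContinuousMap.sub_apply]; ring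
    rw [hsub]
    calc ‖∫ x in Icc a b, (G - P) (qpi L (fun j => x * r ε j)) * (g x : ℂ)‖
        ≤ ‖G - P‖ * A := norm_integral_inner_le L a b g hg (G - P) _
      _ ≤ δ * A := mul_le_mul_of_nonneg_right hnorm hA
  have h2 : dist (meanT L P * C) (meanT L G * C) ≤ δ * B := by
    rw [dist_eq_norm, ← sub_mul, norm_mul]
    have : meanT L P - meanT L G = meanT L (P - G) := (meanT_sub L P G).symm
    rw [this]
    calc ‖meanT L (P - G)‖ * ‖C‖ ≤ ‖P - G‖ * B :=
          mul_le_mul_of_nonneg_right (norm_meanT_le L (P - G)) (norm_nonneg _)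
      _ ≤ δ * B := by
          rw [norm_sub_rev]
          exact mul_le_mul_of_nonneg_right hnorm hB
  have htri : dist IG (meanT L G * C) ≤ dist IG IP + dist IP (meanT L P * C)
      + dist (meanT L P * C) (meanT L G * C) := dist_triangle4 _ _ _ _
  have : dist IG (meanT L G * C) < δ * A + η / 2 + δ * B := by
    refine lt_of_le_of_lt htri ?_
    exact add_lt_add_of_lt_of_le (add_lt_add_of_le_of_lt h1 hε) h2
  refine lt_of_lt_of_le this ?_
  nlinarith [hδ, hA, hB, hδ_eq]

end Conv
end QP


lemma li_int {ι : Type*} [Fintype ι] {v : ι → ℝ} (h : LinearIndependent ℚ v) {k : ι → ℤ}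
    (hk : ∑ i, (k i : ℝ) * v i = 0) : ∀ i, k i = 0 := by
  have h2 : ∑ i, ((k i : ℚ)) • v i = 0 := by
    rw [← hk]
    refine Finset.sum_congr rfl fun i _ => ?_
    rw [Rat.smul_def]
    norm_cast
  have h3 := Fintype.linearIndependent_iff.mp h (fun i => (k i : ℚ)) h2
  intro i
  have h4 : (k i : ℚ) = 0 := h3 i
  exact_mod_cast h4

lemma update_zsmul_periodic {d : ℕ} (L : Fin d → ℝ) (F : (Fin d → ℝ) → ℝ)
    (hFper : ∀ x j, F (Function.update x j (x j + L j)) = F x)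
    (j : Fin d) (c : ℤ) (x : Fin d → ℝ) :
    F (Function.update x j (x j + c • L j)) = F x := by
  induction c using Int.induction_on with
  | zero => simp
  | succ c ih =>
      have hz : Function.update x j (x j + ((c : ℤ) + 1) • L j)
          = Function.update (Function.update x j (x j + (c : ℤ) • L j)) j
            ((Function.update x j (x j + (c : ℤ) • L j)) j + L j) := by
        rw [Function.update_self, Function.update_idem]
        congr 1
        push_cast [add_zsmul, one_zsmul]
        ring
      rw [hz, hFper, ih]
  | pred c ih =>
      have hster : ∀ y : Fin d → ℝ, F (Function.update y j (y j - L j)) = F y := by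
        intro y
        have h := hFper (Function.update y j (y j - L j)) j
        rw [Function.update_idem, Function.update_self, sub_add_cancel] at h
        rw [Function.update_eq_self] at h
        exact h.symm
      have hz : Function.update x j (x j + (-(c : ℤ) - 1) • L j)
          = Function.update (Function.update x j (x j + (-(c : ℤ)) • L j)) j
            ((Function.update x j (x j + (-(c : ℤ)) • L j)) j - L j) := by
        rw [Function.update_self, Function.update_idem]
        congr 1
        push_cast [sub_zsmul, neg_zsmul, one_zsmul]
        ring
      rw [hz, hster, ih]

lemma periodic_inv {d : ℕ} (L : Fin d → ℝ) (F : (Fin d → ℝ) → ℝ)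
    (hFper : ∀ x j, F (Function.update x j (x j + L j)) = F x) :
    QP.Inv L (fun y => (F y : ℂ)) := by
  intro x y hxy
  show ((F x : ℝ) : ℂ) = ((F y : ℝ) : ℂ)
  norm_cast
  choose c hc using fun j => (AddSubgroup.mem_zmultiples_iff).mp (hxy j)
  suffices h : ∀ s : Finset (Fin d),
      F (fun j => if j ∈ s then y j + (x j - y j) else y j) = F y by
    have h2 := h Finset.univ
    simp only [Finset.mem_univ, if_true] at h2
    have hx : (fun j => y j + (x j - y j)) = x := funext fun j => by ring
    rw [hx] at h2
    exact h2
  intro s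
  induction s using Finset.induction_on with
  | empty => simp
  | @insert j s hjs ih =>
    have heq : (fun j' => if j' ∈ insert j s then y j' + (x j' - y j') else y j')
        = Function.update (fun j' => if j' ∈ s then y j' + (x j' - y j') else y j') j
          ((fun j' => if j' ∈ s then y j' + (x j' - y j') else y j') j + c j • L j) := by
      funext j'
      rcases eq_or_ne j' j with rfl | hne
      · rw [Function.update_self]
        show (if j' ∈ insert j' s then y j' + (x j' - y j') else y j')
          = (if j' ∈ s then y j' + (x j' - y j') else y j') + c j' • L j'
        rw [if_pos (Finset.mem_insert_self j' s), if_neg hjs, hc j']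
      · rw [Function.update_of_ne hne]
        simp only [Finset.mem_insert, hne, false_or]
    rw [heq, update_zsmul_periodic L F hFper, ih]


open QP in
/-- Weak L² convergence of quasi-periodic functions with two oscillation scales to the
cell average of the underlying periodic function. -/
theorem quasiPeriodic_weak_convergence_to_mean
    (n m : ℕ) (hn : 1 ≤ n) (hm : 1 ≤ m)
    (L : Fin (n + m) → ℝ) (hL : ∀ j, 0 < L j)
    (α β : ℝ) (hα : α ∈ Set.Ioo (0 : ℝ) 1) (hβ : β ∈ Set.Ioo (0 : ℝ) 1)
    (F : (Fin (n + m) → ℝ) → ℝ) (hFcont : Continuous F)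
    (hFper : ∀ (x : Fin (n + m) → ℝ) (j : Fin (n + m)),
      F (Function.update x j (x j + L j)) = F x)
    (hindep1 : LinearIndependent ℚ (fun j : Fin n => (L (j.castAdd m))⁻¹))
    (hindep2 : LinearIndependent ℚ (fun j : Fin m => (L (j.natAdd n))⁻¹))
    (hindep3 : α = β → LinearIndependent ℚ (fun j : Fin (n + m) => (L j)⁻¹))
    (μF : ℝ)
    (hμF : μF = (∏ j, L j)⁻¹ * ∫ x in Set.univ.pi (fun j => Set.Ioo 0 (L j)), F x) :
    ∀ a b : ℝ, a < b → ∀ g : ℝ → ℝ,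
      MemLp g 2 (volume.restrict (Set.Icc a b)) →
      Tendsto
        (fun ε : ℝ =>
          ∫ x in Set.Icc a b,
            F (fun j => if (j : ℕ) < n then x / ε ^ α else x / ε ^ β) * g x)
        (nhdsWithin 0 (Set.Ioi 0))
        (nhds (∫ x in Set.Icc a b, μF * g x)) := by
  intro a b hab g hg2
  haveI hFact : ∀ j, Fact (0 < L j) := fun j => ⟨hL j⟩
  haveI hfin : IsFiniteMeasure (volume.restrict (Icc a b)) := by
    constructor
    rw [Measure.restrict_apply_univ, Real.volume_Icc]
    exact ENNReal.ofReal_lt_top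
  have hg : IntegrableOn g (Icc a b) := hg2.integrable one_le_two
  set r : ℝ → Fin (n + m) → ℝ :=
    fun ε j => (if (j : ℕ) < n then ε ^ α else ε ^ β)⁻¹ with hr
  have hfreq : ∀ k : Fin (n + m) → ℤ, k ≠ 0 →
      Tendsto (fun ε : ℝ => ∑ j, (k j : ℝ) * r ε j / L j) (𝓝[>] (0:ℝ)) (cocompact ℝ) := by
    intro k hk
    set lam := ∑ i : Fin n, (k (i.castAdd m) : ℝ) * (L (i.castAdd m))⁻¹ with hlam
    set mu := ∑ i : Fin m, (k (i.natAdd n) : ℝ) * (L (i.natAdd n))⁻¹ with hmu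
    have hsum : ∀ ε : ℝ, (∑ j, (k j : ℝ) * r ε j / L j)
        = lam * (ε ^ α)⁻¹ + mu * (ε ^ β)⁻¹ := by
      intro ε
      rw [Fin.sum_univ_add (f := fun j => (k j : ℝ) * r ε j / L j)]
      congr 1
      · rw [hlam, Finset.sum_mul]
        refine Finset.sum_congr rfl fun i _ => ?_
        have hlt : ((i.castAdd m : Fin (n+m)) : ℕ) < n := by
          simpa using i.isLt
        rw [hr]
        dsimp only
        rw [if_pos hlt]
        ring
      · rw [hmu, Finset.sum_mul]
        refine Finset.sum_congr rfl fun i _ => ?_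
        have hlt : ¬ ((i.natAdd n : Fin (n+m)) : ℕ) < n := by simp
        rw [hr]
        dsimp only
        rw [if_neg hlt]
        ring
    have h1 : ¬(lam = 0 ∧ mu = 0) := by
      rintro ⟨hlam0, hmu0⟩
      apply hk
      have hfirst := li_int hindep1 (k := fun i => k (i.castAdd m)) hlam0
      have hsecond := li_int hindep2 (k := fun i => k (i.natAdd n)) hmu0
      funext j
      show k j = 0
      refine Fin.addCases (fun i => hfirst i) (fun i => hsecond i) j
    have h2 : α = β → lam + mu ≠ 0 := by
      intro hab' hsum0
      apply hk
      have htot : ∑ j, (k j : ℝ) * (L j)⁻¹ = 0 := by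
        rw [Fin.sum_univ_add (f := fun j => (k j : ℝ) * (L j)⁻¹)]
        rw [← hlam, ← hmu]
        exact hsum0
      have hall := li_int (hindep3 hab') htot
      funext j
      show k j = 0
      exact hall j
    have hmain := freq_tendsto hα.1 hβ.1 h1 h2
    exact hmain.congr fun ε => (hsum ε).symm
  have hFinv := periodic_inv L F hFper
  set H : C(Torus L, ℂ) := ⟨qlift L (fun y => (F y : ℂ)),
    continuous_qlift L hFinv (Complex.continuous_ofReal.comp hFcont)⟩ with hH
  have hHq : ∀ y, H (qpi L y) = (F y : ℂ) := fun y => qlift_qpi L hFinv y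
  have hconv := conv_all L r a b g hg hfreq H
  have hmean : meanT L H = (μF : ℂ) := by
    unfold meanT
    have hcc : ∫ y in cell L, H (qpi L y) = ∫ y in cell L, ((F y : ℝ) : ℂ) :=
      setIntegral_congr_fun (cell_measurable L) fun y _ => hHq y
    rw [hcc,
      show (∫ y in cell L, ((F y : ℝ) : ℂ)) = ((∫ y in cell L, F y : ℝ) : ℂ) from
        integral_ofReal, ← Complex.ofReal_mul, hμF]
    rfl
  unfold Conv at hconv
  rw [hmean] at hconv
  have hfun : ∀ ε : ℝ, (∫ x in Icc a b, H (qpi L fun j => x * r ε j) * (g x : ℂ))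
      = ((∫ x in Icc a b,
          F (fun j => if (j : ℕ) < n then x / ε ^ α else x / ε ^ β) * g x : ℝ) : ℂ) := by
    intro ε
    rw [show ((∫ x in Icc a b,
          F (fun j => if (j : ℕ) < n then x / ε ^ α else x / ε ^ β) * g x : ℝ) : ℂ)
        = ∫ x in Icc a b,
            ((F (fun j => if (j : ℕ) < n then x / ε ^ α else x / ε ^ β) * g x : ℝ) : ℂ)
      from integral_ofReal.symm]
    refine setIntegral_congr_fun measurableSet_Icc fun x _ => ?_
    rw [hHq (fun j => x * r ε j)]
    have harg : (fun j => x * r ε j)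
        = fun j : Fin (n + m) => if (j : ℕ) < n then x / ε ^ α else x / ε ^ β := by
      funext j
      rw [hr]
      by_cases hj : (j : ℕ) < n
      · rw [if_pos hj]
        dsimp only
        rw [if_pos hj, div_eq_mul_inv]
      · rw [if_neg hj]
        dsimp only
        rw [if_neg hj, div_eq_mul_inv]
    rw [harg]
    push_cast
    ring
  have hconv2 : Tendsto (fun ε : ℝ => ((∫ x in Icc a b,
      F (fun j => if (j : ℕ) < n then x / ε ^ α else x / ε ^ β) * g x : ℝ) : ℂ))
      (𝓝[>] (0:ℝ)) (𝓝 ((μF : ℂ) * ∫ x in Icc a b, (g x : ℂ))) :=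
    hconv.congr fun ε => hfun ε
  have hrhs : ((μF : ℂ) * ∫ x in Icc a b, (g x : ℂ))
      = ((∫ x in Icc a b, μF * g x : ℝ) : ℂ) := by
    rw [show (∫ x in Icc a b, (g x : ℂ)) = ((∫ x in Icc a b, g x : ℝ) : ℂ) from
      integral_ofReal, ← Complex.ofReal_mul, ← integral_const_mul]
  rw [hrhs] at hconv2
  have hre := (Complex.continuous_re.tendsto _).comp hconv2
  simpa [Function.comp_def] using hre
end

section
/- Let n, m ≥ 1, let L_1, …, L_{n+m} be positive real numbers, let α, β ∈ (0,1), let S be a finite subset of ℤ^{n+m} \ {0}, and let a_0 ∈ ℂ and a_k ∈ ℂ for each k ∈ S. For k ∈ S set λ_k = Σ_{j=1}^{n} k_j/L_j and μ_k = Σ_{j=n+1}^{n+m} k_j/L_j. Assume that for every k ∈ S one has (λ_k, μ_k) ≠ (0,0), and in addition λ_k + μ_k ≠ 0 whenever α = β. For ε ∈ (0,1) define F_ε : ℝ → ℂ by F_ε(x) = a_0 + Σ_{k∈S} a_k exp(2πi(λ_k x ε^{−α} + μ_k x ε^{−β})). Then for all real numbers a < b, ∫_a^b F_ε(x) dx →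 (b − a) a_0 as ε → 0⁺. -/
open MeasureTheory Filter Set

private lemma rpow_neg_tendsto_atTop {γ : ℝ} (hγ : 0 < γ) :
    Tendsto (fun ε : ℝ => ε ^ (-γ)) (nhdsWithin 0 (Set.Ioi 0)) atTop := by
  have h1 : Tendsto (fun ε : ℝ => ε⁻¹) (nhdsWithin 0 (Set.Ioi 0)) atTop :=
    tendsto_inv_nhdsGT_zero
  have h2 : Tendsto (fun x : ℝ => x ^ γ) atTop atTop := tendsto_rpow_atTop hγ
  refine Tendsto.congr' ?_ (h2.comp h1)
  filter_upwards [self_mem_nhdsWithin] with ε (hε : ε ∈ Set.Ioi 0)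
  simp only [Function.comp_apply]
  rw [Real.inv_rpow (le_of_lt hε), ← Real.rpow_neg (le_of_lt hε)]

private lemma rpow_tendsto_zero_s1 {γ : ℝ} (hγ : 0 < γ) :
    Tendsto (fun ε : ℝ => ε ^ γ) (nhdsWithin 0 (Set.Ioi 0)) (nhds 0) := by
  have := (Real.continuousAt_rpow_const 0 γ (Or.inr hγ.le)).tendsto
  rw [Real.zero_rpow hγ.ne'] at this
  exact this.mono_left nhdsWithin_le_nhds

private lemma keyB {l m α β : ℝ} (hβ : 0 < β) (hαβ : α < β) (hm : m ≠ 0) :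
    Tendsto (fun ε : ℝ => |l * ε ^ (-α) + m * ε ^ (-β)|)
      (nhdsWithin 0 (Set.Ioi 0)) atTop := by
  have h1 : Tendsto (fun ε : ℝ => |l * ε ^ (β - α) + m|)
      (nhdsWithin 0 (Set.Ioi 0)) (nhds |m|) := by
    have := ((rpow_tendsto_zero_s1 (sub_pos.2 hαβ)).const_mul l).add_const m
    simpa using this.abs
  have h2 := rpow_neg_tendsto_atTop hβ
  refine Tendsto.congr' ?_ (h1.pos_mul_atTop (abs_pos.2 hm) h2)
  filter_upwards [self_mem_nhdsWithin] with ε (hε : ε ∈ Set.Ioi 0)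
  have hε' : (0:ℝ) < ε := hε
  have hr : ε ^ (β - α) * ε ^ (-β) = ε ^ (-α) := by
    rw [← Real.rpow_add hε']; ring_nf
  have habs : |ε ^ (-β)| = ε ^ (-β) := abs_of_nonneg (Real.rpow_nonneg hε'.le _)
  calc |l * ε ^ (β - α) + m| * ε ^ (-β)
      = |(l * ε ^ (β - α) + m) * ε ^ (-β)| := by rw [abs_mul, habs]
    _ = |l * ε ^ (-α) + m * ε ^ (-β)| := by rw [add_mul, mul_assoc, hr]

private lemma keyA {l m α β : ℝ} (hα : 0 < α) (hβ : 0 < β)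
    (hne : ¬(l = 0 ∧ m = 0)) (hs : α = β → l + m ≠ 0) :
    Tendsto (fun ε : ℝ => |l * ε ^ (-α) + m * ε ^ (-β)|)
      (nhdsWithin 0 (Set.Ioi 0)) atTop := by
  rcases eq_or_ne m 0 with hm | hm
  · have hl : l ≠ 0 := by tauto
    refine Tendsto.congr' ?_ ((rpow_neg_tendsto_atTop hα).const_mul_atTop (abs_pos.2 hl))
    filter_upwards [self_mem_nhdsWithin] with ε (hε : ε ∈ Set.Ioi 0)
    rw [hm, zero_mul, add_zero, abs_mul, abs_of_nonneg (Real.rpow_nonneg (le_of_lt hε) (-α))]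
  · rcases eq_or_ne l 0 with hl | hl
    · refine Tendsto.congr' ?_ ((rpow_neg_tendsto_atTop hβ).const_mul_atTop (abs_pos.2 hm))
      filter_upwards [self_mem_nhdsWithin] with ε (hε : ε ∈ Set.Ioi 0)
      rw [hl, zero_mul, zero_add, abs_mul, abs_of_nonneg (Real.rpow_nonneg (le_of_lt hε) (-β))]
    · rcases lt_trichotomy α β with h | h | h
      · exact keyB hβ h hm
      · subst h
        have hlm := hs rfl
        refine Tendsto.congr' ?_ ((rpow_neg_tendsto_atTop hα).const_mul_atTop (abs_pos.2 hlm))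
        filter_upwards [self_mem_nhdsWithin] with ε (hε : ε ∈ Set.Ioi 0)
        rw [← add_mul, abs_mul, abs_of_nonneg (Real.rpow_nonneg (le_of_lt hε) (-α))]
      · exact (keyB hα h hl).congr fun ε => by rw [add_comm]

private lemma keyI {l m α β : ℝ} (hα : 0 < α) (hβ : 0 < β)
    (hne : ¬(l = 0 ∧ m = 0)) (hs : α = β → l + m ≠ 0) (a b : ℝ) :
    Tendsto (fun ε : ℝ => ∫ x in a..b,
        Complex.exp (2 * Real.pi * Complex.I *
          ((l * x * ε ^ (-α) + m * x * ε ^ (-β) : ℝ) : ℂ)))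
      (nhdsWithin 0 (Set.Ioi 0)) (nhds 0) := by
  set c : ℝ → ℝ := fun ε => l * ε ^ (-α) + m * ε ^ (-β) with hc_def
  have hc : Tendsto (fun ε => |c ε|) (nhdsWithin 0 (Set.Ioi 0)) atTop := keyA hα hβ hne hs
  have hg : Tendsto (fun ε => (Real.pi * |c ε|)⁻¹) (nhdsWithin 0 (Set.Ioi 0)) (nhds 0) :=
    (hc.const_mul_atTop Real.pi_pos).inv_tendsto_atTop
  refine squeeze_zero_norm' ?_ hg
  filter_upwards [hc.eventually_ge_atTop 1] with ε hε1
  have hcpos : (0:ℝ) < |c ε| := lt_of_lt_of_le one_pos hε1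
  have hcne : c ε ≠ 0 := fun h => by rw [h] at hcpos; simp at hcpos
  have hdne : 2 * (Real.pi:ℂ) * Complex.I * (c ε : ℂ) ≠ 0 :=
    mul_ne_zero (mul_ne_zero (mul_ne_zero two_ne_zero
      (Complex.ofReal_ne_zero.2 Real.pi_ne_zero)) Complex.I_ne_zero)
      (Complex.ofReal_ne_zero.2 hcne)
  have hfun : ∀ x : ℝ, 2 * (Real.pi:ℂ) * Complex.I *
      ((l * x * ε ^ (-α) + m * x * ε ^ (-β) : ℝ) : ℂ)
      = 2 * (Real.pi:ℂ) * Complex.I * (c ε : ℂ) * x := by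
    intro x; simp only [hc_def]; push_cast; ring
  have hint : (∫ x in a..b, Complex.exp (2 * Real.pi * Complex.I *
        ((l * x * ε ^ (-α) + m * x * ε ^ (-β) : ℝ) : ℂ)))
      = (Complex.exp (2 * (Real.pi:ℂ) * Complex.I * (c ε:ℂ) * b) -
          Complex.exp (2 * (Real.pi:ℂ) * Complex.I * (c ε:ℂ) * a)) /
        (2 * (Real.pi:ℂ) * Complex.I * (c ε:ℂ)) := by
    simp only [hfun]
    rw [integral_exp_mul_complex hdne]
  have hb1 : ‖Complex.exp (2 * (Real.pi:ℂ) * Complex.I * (c ε:ℂ) * b)‖ = 1 := by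
    have h : 2 * (Real.pi:ℂ) * Complex.I * (c ε:ℂ) * b
        = ((2 * Real.pi * c ε * b : ℝ) : ℂ) * Complex.I := by push_cast; ring
    rw [h, Complex.norm_exp_ofReal_mul_I]
  have hb2 : ‖Complex.exp (2 * (Real.pi:ℂ) * Complex.I * (c ε:ℂ) * a)‖ = 1 := by
    have h : 2 * (Real.pi:ℂ) * Complex.I * (c ε:ℂ) * a
        = ((2 * Real.pi * c ε * a : ℝ) : ℂ) * Complex.I := by push_cast; ring
    rw [h, Complex.norm_exp_ofReal_mul_I]
  have hd : ‖2 * (Real.pi:ℂ) * Complex.I * (c ε:ℂ)‖ = 2 * Real.pi * |c ε| := by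
    simp [Complex.norm_I, Complex.norm_real,
      abs_of_pos Real.pi_pos]
  rw [hint, norm_div, hd]
  calc ‖Complex.exp (2 * (Real.pi:ℂ) * Complex.I * (c ε:ℂ) * b) -
          Complex.exp (2 * (Real.pi:ℂ) * Complex.I * (c ε:ℂ) * a)‖ / (2 * Real.pi * |c ε|)
      ≤ (1 + 1) / (2 * Real.pi * |c ε|) := by
        gcongr
        calc ‖_ - _‖ ≤ ‖_‖ + ‖_‖ := norm_sub_le _ _
          _ = 1 + 1 := by rw [hb1, hb2]
    _ = (Real.pi * |c ε|)⁻¹ := by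
        rw [mul_assoc, div_mul_eq_div_div]
        norm_num [one_div]

/-- The integral over `[a,b]` of a two-scale quasi-periodic trigonometric polynomial
converges to `(b - a)` times its constant Fourier coefficient as `ε → 0⁺`. -/
theorem trigPoly_two_scale_integral_tendsto
    (n m : ℕ) (hn : 1 ≤ n) (hm : 1 ≤ m)
    (L : Fin (n + m) → ℝ) (hL : ∀ j, 0 < L j)
    (α β : ℝ) (hα : α ∈ Set.Ioo (0 : ℝ) 1) (hβ : β ∈ Set.Ioo (0 : ℝ) 1)
    (S : Finset (Fin (n + m) → ℤ)) (hS : (0 : Fin (n + m) → ℤ) ∉ S)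
    (a₀ : ℂ) (acoef : (Fin (n + m) → ℤ) → ℂ)
    (lam mu : (Fin (n + m) → ℤ) → ℝ)
    (hlam : ∀ k, lam k = ∑ j : Fin n, (k (j.castAdd m) : ℝ) / L (j.castAdd m))
    (hmu : ∀ k, mu k = ∑ j : Fin m, (k (j.natAdd n) : ℝ) / L (j.natAdd n))
    (hnz : ∀ k ∈ S, ¬(lam k = 0 ∧ mu k = 0))
    (hsum : α = β → ∀ k ∈ S, lam k + mu k ≠ 0) :
    ∀ a b : ℝ, a < b →
      Tendsto
        (fun ε : ℝ =>
          ∫ x in a..b,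
            (a₀ + ∑ k ∈ S, acoef k *
              Complex.exp (2 * Real.pi * Complex.I *
                ((lam k * x * ε ^ (-α) + mu k * x * ε ^ (-β) : ℝ) : ℂ))))
        (nhdsWithin 0 (Set.Ioi 0))
        (nhds (((b - a : ℝ) : ℂ) * a₀)) := by
  
  intro a b hab
  have hcont : ∀ (k : Fin (n + m) → ℤ) (ε : ℝ), Continuous fun x : ℝ =>
      Complex.exp (2 * Real.pi * Complex.I *
        ((lam k * x * ε ^ (-α) + mu k * x * ε ^ (-β) : ℝ) : ℂ)) := by
    intro k ε
    apply Complex.continuous_exp.comp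
    exact continuous_const.mul (Complex.continuous_ofReal.comp (by continuity))
  have hrw : ∀ ε : ℝ,
      (∫ x in a..b, (a₀ + ∑ k ∈ S, acoef k *
          Complex.exp (2 * Real.pi * Complex.I *
            ((lam k * x * ε ^ (-α) + mu k * x * ε ^ (-β) : ℝ) : ℂ))))
      = ((b - a : ℝ) : ℂ) * a₀ + ∑ k ∈ S, acoef k *
          ∫ x in a..b, Complex.exp (2 * Real.pi * Complex.I *
            ((lam k * x * ε ^ (-α) + mu k * x * ε ^ (-β) : ℝ) : ℂ)) := by
    intro ε
    rw [intervalIntegral.integral_add intervalIntegrable_const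
      (((continuous_finset_sum S fun k _ => continuous_const.mul (hcont k ε) : Continuous fun x : ℝ => ∑ k ∈ S, acoef k * Complex.exp (2 * Real.pi * Complex.I * ((lam k * x * ε ^ (-α) + mu k * x * ε ^ (-β) : ℝ) : ℂ)))).intervalIntegrable a b),
      intervalIntegral.integral_const,
      intervalIntegral.integral_finset_sum
        (f := fun k x => acoef k * Complex.exp (2 * Real.pi * Complex.I * ((lam k * x * ε ^ (-α) + mu k * x * ε ^ (-β) : ℝ) : ℂ)))
          (fun k _ => (continuous_const.mul (hcont k ε)).intervalIntegrable a b)]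
    simp_rw [intervalIntegral.integral_const_mul]
    congr 1
  refine Tendsto.congr (fun ε => (hrw ε).symm) ?_
  have h0 : Tendsto (fun ε : ℝ => ∑ k ∈ S, acoef k *
      ∫ x in a..b, Complex.exp (2 * Real.pi * Complex.I *
        ((lam k * x * ε ^ (-α) + mu k * x * ε ^ (-β) : ℝ) : ℂ)))
      (nhdsWithin 0 (Set.Ioi 0)) (nhds 0) := by
    have := tendsto_finset_sum S (fun k hk => by
      simpa using
        (keyI hα.1 hβ.1 (hnz k hk) (fun he => hsum he k hk) a b).const_mul (acoef k))
    simpa using this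
  simpa using tendsto_const_nhds.add h0
end

section
/- Let L_1, L_2 > 0 with L_1/L_2 irrational, and let g, h : ℝ → ℝ be continuous functions with g being L_1-periodic and h being L_2-periodic, satisfying g(y) + h(z) ≥ c for all y, z ∈ ℝ and some constant c > 0. Then the limit lim_{T→∞} (1/T) ∫_0^T 1/(g(y) + h(y)) dy exists and equals (1/(L_1 L_2)) ∫_0^{L_1} ∫_0^{L_2} 1/(g(y) + h(z)) dz dy. -/
open MeasureTheory Filter Set intervalIntegral Complex Real

lemma aux_char_tendsto_zero {θ : ℝ} (hθ : θ ≠ 0) :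
    Tendsto (fun T : ℝ => (1 / T : ℝ) • ∫ y in (0:ℝ)..T, Complex.exp ((θ * Complex.I) * y))
      atTop (nhds 0) := by
  have hc : (θ : ℂ) * Complex.I ≠ 0 := by
    simp [Complex.ext_iff, hθ]
  have h1 : ∀ t : ℝ, ‖Complex.exp ((θ * Complex.I) * t)‖ = 1 := by
    intro t
    rw [show ((θ:ℂ) * Complex.I) * (t:ℂ) = ((θ * t : ℝ) : ℂ) * Complex.I by push_cast; ring,
      Complex.norm_exp_ofReal_mul_I]
  have hbound : ∀ T : ℝ, ‖∫ y in (0:ℝ)..T, Complex.exp ((θ * Complex.I) * y)‖ ≤ 2 / |θ| := by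
    intro T
    rw [integral_exp_mul_complex hc]
    rw [norm_div]
    have hden : ‖(θ:ℂ) * Complex.I‖ = |θ| := by
      simp
    rw [hden]
    gcongr
    calc ‖Complex.exp ((θ * Complex.I) * T) - Complex.exp ((θ * Complex.I) * 0)‖
        ≤ ‖Complex.exp ((θ * Complex.I) * T)‖ + ‖Complex.exp ((θ * Complex.I) * 0)‖ :=
          norm_sub_le _ _
      _ = 2 := by rw [h1 T]; norm_num
  rw [tendsto_zero_iff_norm_tendsto_zero]
  apply squeeze_zero' (g := fun T : ℝ => (1 / T) * (2 / |θ|))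
  · filter_upwards [eventually_ge_atTop (1:ℝ)] with T hT
    positivity
  · filter_upwards [eventually_ge_atTop (1:ℝ)] with T hT
    rw [norm_smul]
    have : ‖(1/T : ℝ)‖ = 1 / T := by
      rw [Real.norm_eq_abs, abs_of_pos (by positivity)]
    rw [this]
    gcongr
    exact hbound T
  · have h0 := tendsto_inv_atTop_zero (𝕜 := ℝ)
    have := h0.mul_const (2 / |θ|)
    rw [zero_mul] at this
    simpa [one_div] using this

lemma aux_fourier_coe (L : ℝ) (hL : 0 < L) (m : ℤ) (y : ℝ) :
    fourier m (y : AddCircle L) = Complex.exp ((((2 * π * ↑m / L : ℝ) : ℂ) * Complex.I) * y) := by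
  rw [fourier_coe_apply]
  congr 1
  push_cast
  ring

lemma aux_integral_fourier_zero (L : ℝ) (hL : 0 < L) {m : ℤ} (hm : m ≠ 0) :
    (∫ y in (0:ℝ)..L, fourier m (y : AddCircle L)) = 0 := by
  simp_rw [aux_fourier_coe L hL m]
  have hc : ((2 * π * m / L : ℝ) : ℂ) * Complex.I ≠ 0 := by
    have : (2 * π * m / L : ℝ) ≠ 0 := by
      have := Real.pi_pos
      have hm' : (m:ℝ) ≠ 0 := Int.cast_ne_zero.mpr hm
      positivity
    exact mul_ne_zero (Complex.ofReal_ne_zero.mpr this) Complex.I_ne_zero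
  rw [integral_exp_mul_complex hc]
  have : ((2 * π * m / L : ℝ) : ℂ) * Complex.I * (L : ℂ) = (m : ℂ) * (2 * π * Complex.I) := by
    have hL' : (L:ℂ) ≠ 0 := by exact_mod_cast hL.ne'
    push_cast
    field_simp
  rw [this, Complex.exp_int_mul_two_pi_mul_I]
  simp

section framework
variable (L₁ L₂ : ℝ) [hL₁ : Fact (0 < L₁)] [hL₂ : Fact (0 < L₂)]

noncomputable def eChar (m n : ℤ) : C(AddCircle L₁ × AddCircle L₂, ℂ) :=
  ((fourier m).comp ContinuousMap.fst) * ((fourier n).comp ContinuousMap.snd)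

lemma eChar_apply (m n : ℤ) (p : AddCircle L₁ × AddCircle L₂) :
    eChar L₁ L₂ m n p = fourier m p.1 * fourier n p.2 := rfl

noncomputable def timeAvg (F : C(AddCircle L₁ × AddCircle L₂, ℂ)) (T : ℝ) : ℂ :=
  (1 / T : ℝ) • ∫ y in (0:ℝ)..T, F (↑y, ↑y)

noncomputable def cellAvg (F : C(AddCircle L₁ × AddCircle L₂, ℂ)) : ℂ :=
  (1 / (L₁ * L₂) : ℝ) • ∫ y in (0:ℝ)..L₁, ∫ z in (0:ℝ)..L₂, F (↑y, ↑z)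

lemma cont_diag (F : C(AddCircle L₁ × AddCircle L₂, ℂ)) :
    Continuous fun y : ℝ => F (↑y, ↑y) :=
  F.continuous.comp ((AddCircle.continuous_mk' L₁).prodMk (AddCircle.continuous_mk' L₂))

lemma cont_uncurry (F : C(AddCircle L₁ × AddCircle L₂, ℂ)) :
    Continuous (Function.uncurry fun y z : ℝ => F (↑y, ↑z)) :=
  F.continuous.comp (((AddCircle.continuous_mk' L₁).comp continuous_fst).prodMk
    ((AddCircle.continuous_mk' L₂).comp continuous_snd))

lemma cont_slice (F : C(AddCircle L₁ × AddCircle L₂, ℂ)) (y : ℝ) :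
    Continuous fun z : ℝ => F (↑y, ↑z) :=
  F.continuous.comp (continuous_const.prodMk (AddCircle.continuous_mk' L₂))

lemma cont_inner (F : C(AddCircle L₁ × AddCircle L₂, ℂ)) :
    Continuous fun y : ℝ => ∫ z in (0:ℝ)..L₂, F (↑y, ↑z) :=
  continuous_parametric_intervalIntegral_of_continuous' (cont_uncurry L₁ L₂ F) 0 L₂

lemma timeAvg_sub (F G : C(AddCircle L₁ × AddCircle L₂, ℂ)) (T : ℝ) :
    timeAvg L₁ L₂ (F - G) T = timeAvg L₁ L₂ F T - timeAvg L₁ L₂ G T := by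
  unfold timeAvg
  rw [← smul_sub, ← integral_sub ((cont_diag L₁ L₂ F).intervalIntegrable _ _)
    ((cont_diag L₁ L₂ G).intervalIntegrable _ _)]
  simp

lemma cellAvg_sub (F G : C(AddCircle L₁ × AddCircle L₂, ℂ)) :
    cellAvg L₁ L₂ (F - G) = cellAvg L₁ L₂ F - cellAvg L₁ L₂ G := by
  unfold cellAvg
  rw [← smul_sub, ← integral_sub ((cont_inner L₁ L₂ F).intervalIntegrable _ _)
    ((cont_inner L₁ L₂ G).intervalIntegrable _ _)]
  congr 1
  apply intervalIntegral.integral_congr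
  intro y _
  simp only
  rw [← integral_sub ((cont_slice L₁ L₂ F y).intervalIntegrable _ _)
    ((cont_slice L₁ L₂ G y).intervalIntegrable _ _)]
  simp

lemma norm_timeAvg_le (F : C(AddCircle L₁ × AddCircle L₂, ℂ)) {T : ℝ} (hT : 0 < T) :
    ‖timeAvg L₁ L₂ F T‖ ≤ ‖F‖ := by
  unfold timeAvg
  rw [norm_smul]
  have h1 : ‖∫ y in (0:ℝ)..T, F (↑y, ↑y)‖ ≤ ‖F‖ * |T - 0| :=
    intervalIntegral.norm_integral_le_of_norm_le_const fun x _ => F.norm_coe_le_norm _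
  calc ‖(1/T : ℝ)‖ * ‖∫ y in (0:ℝ)..T, F (↑y, ↑y)‖
      ≤ ‖(1/T : ℝ)‖ * (‖F‖ * |T - 0|) := by gcongr
    _ = ‖F‖ := by
        rw [Real.norm_eq_abs, sub_zero, abs_of_pos hT, abs_of_pos (by positivity : (0:ℝ) < 1/T)]
        field_simp

lemma norm_cellAvg_le (F : C(AddCircle L₁ × AddCircle L₂, ℂ)) :
    ‖cellAvg L₁ L₂ F‖ ≤ ‖F‖ := by
  have h₁ := hL₁.out
  have h₂ := hL₂.out
  unfold cellAvg
  rw [norm_smul]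
  have hin : ∀ y : ℝ, ‖∫ z in (0:ℝ)..L₂, F (↑y, ↑z)‖ ≤ ‖F‖ * |L₂ - 0| := fun y =>
    intervalIntegral.norm_integral_le_of_norm_le_const fun z _ => F.norm_coe_le_norm _
  have hout : ‖∫ y in (0:ℝ)..L₁, ∫ z in (0:ℝ)..L₂, F (↑y, ↑z)‖ ≤ (‖F‖ * |L₂ - 0|) * |L₁ - 0| :=
    intervalIntegral.norm_integral_le_of_norm_le_const fun y _ => hin y
  calc ‖(1/(L₁*L₂) : ℝ)‖ * ‖∫ y in (0:ℝ)..L₁, ∫ z in (0:ℝ)..L₂, F (↑y, ↑z)‖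
      ≤ ‖(1/(L₁*L₂) : ℝ)‖ * ((‖F‖ * |L₂ - 0|) * |L₁ - 0|) := by gcongr
    _ = ‖F‖ := by
        rw [Real.norm_eq_abs, sub_zero, sub_zero, abs_of_pos h₁, abs_of_pos h₂,
          abs_of_pos (by positivity : (0:ℝ) < 1/(L₁*L₂))]
        field_simp


lemma echar_tendsto (hirr : Irrational (L₁ / L₂)) (m n : ℤ) :
    Tendsto (fun T => timeAvg L₁ L₂ (eChar L₁ L₂ m n) T) atTop
      (nhds (cellAvg L₁ L₂ (eChar L₁ L₂ m n))) := by
  have h₁ := hL₁.out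
  have h₂ := hL₂.out
  by_cases hmn : m = 0 ∧ n = 0
  · obtain ⟨rfl, rfl⟩ := hmn
    have h1 : ∀ p : AddCircle L₁ × AddCircle L₂, eChar L₁ L₂ 0 0 p = 1 := by
      intro p; rw [eChar_apply, fourier_zero, fourier_zero, mul_one]
    have hcell : cellAvg L₁ L₂ (eChar L₁ L₂ 0 0) = 1 := by
      unfold cellAvg
      simp only [h1, intervalIntegral.integral_const, sub_zero, smul_smul, smul_eq_mul]
      push_cast
      field_simp
      simp
    rw [hcell]
    have : ∀ᶠ T in atTop, (1:ℂ) = timeAvg L₁ L₂ (eChar L₁ L₂ 0 0) T := by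
      filter_upwards [eventually_gt_atTop (0:ℝ)] with T hT
      unfold timeAvg
      simp only [h1, intervalIntegral.integral_const, sub_zero, smul_smul, smul_eq_mul]
      push_cast
      field_simp
      simp
    exact tendsto_const_nhds.congr' this
  · set θ : ℝ := 2 * π * ((m:ℝ) / L₁ + (n:ℝ) / L₂) with hθdef
    have hθ : θ ≠ 0 := by
      intro h0
      have hpi := Real.pi_ne_zero
      have hsum : (m:ℝ) / L₁ + (n:ℝ) / L₂ = 0 := by
        have h2 : (2:ℝ) * π ≠ 0 := by positivity
        have h0' : 2 * π * ((m:ℝ) / L₁ + (n:ℝ) / L₂) = 0 := by rw [← hθdef]; exact h0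
        rcases mul_eq_zero.mp h0' with h | h
        · exact absurd h h2
        · exact h
      by_cases hn : n = 0
      · subst hn
        simp at hsum
        rcases hsum with h | h
        · exact hmn ⟨by exact_mod_cast h, rfl⟩
        · exact absurd h h₁.ne'
      · apply hirr
        refine ⟨-(m:ℚ)/(n:ℚ), ?_⟩
        have hn' : (n:ℝ) ≠ 0 := Int.cast_ne_zero.mpr hn
        have : (m:ℝ) * L₂ = -((n:ℝ) * L₁) := by
          field_simp at hsum
          linarith
        push_cast
        rw [div_eq_div_iff (by exact hn') h₂.ne']
        linarith
    have hE : ∀ y : ℝ, eChar L₁ L₂ m n (↑y, ↑y) = Complex.exp ((θ * Complex.I) * y) := by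
      intro y
      rw [eChar_apply, aux_fourier_coe L₁ h₁, aux_fourier_coe L₂ h₂, ← Complex.exp_add]
      congr 1
      have e1 : (L₁:ℂ) ≠ 0 := by exact_mod_cast h₁.ne'
      have e2 : (L₂:ℂ) ≠ 0 := by exact_mod_cast h₂.ne'
      rw [hθdef]
      push_cast
      field_simp
    have hcell : cellAvg L₁ L₂ (eChar L₁ L₂ m n) = 0 := by
      unfold cellAvg
      have hinner : ∀ y : ℝ, (∫ z in (0:ℝ)..L₂, eChar L₁ L₂ m n (↑y, ↑z))
          = fourier m (y : AddCircle L₁) * ∫ z in (0:ℝ)..L₂, fourier n (z : AddCircle L₂) := by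
        intro y
        rw [← intervalIntegral.integral_const_mul]
        rfl
      by_cases hn : n = 0
      · have hm : m ≠ 0 := fun hm => hmn ⟨hm, hn⟩
        subst hn
        have : (∫ y in (0:ℝ)..L₁, ∫ z in (0:ℝ)..L₂, eChar L₁ L₂ m 0 (↑y, ↑z))
            = (L₂ : ℂ) * ∫ y in (0:ℝ)..L₁, fourier m (y : AddCircle L₁) := by
          rw [← intervalIntegral.integral_const_mul]
          apply intervalIntegral.integral_congr
          intro y _
          simp only
          rw [hinner y]
          have hf0 : (∫ z in (0:ℝ)..L₂, fourier 0 (z : AddCircle L₂)) = (L₂:ℂ) := by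
            simp [fourier_zero]
          rw [hf0]
          ring
        rw [this, aux_integral_fourier_zero L₁ h₁ hm]
        simp
      · have hz : ∀ y : ℝ, (∫ z in (0:ℝ)..L₂, eChar L₁ L₂ m n (↑y, ↑z)) = 0 := by
          intro y
          rw [hinner y, aux_integral_fourier_zero L₂ h₂ hn, mul_zero]
        simp only [hz, intervalIntegral.integral_zero, smul_zero]
    rw [hcell]
    have heq : (fun T => timeAvg L₁ L₂ (eChar L₁ L₂ m n) T)
        = fun T : ℝ => (1 / T : ℝ) • ∫ y in (0:ℝ)..T, Complex.exp ((θ * Complex.I) * y) := by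
      funext T
      unfold timeAvg
      congr 1
      exact intervalIntegral.integral_congr fun y _ => hE y
    rw [heq]
    exact aux_char_tendsto_zero hθ

lemma echar_mul (m n m' n' : ℤ) :
    eChar L₁ L₂ m n * eChar L₁ L₂ m' n' = eChar L₁ L₂ (m + m') (n + n') := by
  ext p
  simp only [ContinuousMap.mul_apply, eChar_apply, fourier_add]
  ring

lemma echar_one : eChar L₁ L₂ 0 0 = 1 := by
  ext p
  simp only [eChar_apply, fourier_zero, mul_one, ContinuousMap.one_apply]

def echarSet : Set C(AddCircle L₁ × AddCircle L₂, ℂ) :=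
  Set.range fun q : ℤ × ℤ => eChar L₁ L₂ q.1 q.2

noncomputable def echarSubalgebra : StarSubalgebra ℂ C(AddCircle L₁ × AddCircle L₂, ℂ) where
  toSubalgebra := Algebra.adjoin ℂ (echarSet L₁ L₂)
  star_mem' := by
    show Algebra.adjoin ℂ (echarSet L₁ L₂) ≤ star (Algebra.adjoin ℂ (echarSet L₁ L₂))
    refine Algebra.adjoin_le ?_
    rintro - ⟨⟨m, n⟩, rfl⟩
    refine Algebra.subset_adjoin ⟨(-m, -n), ?_⟩
    ext p
    simp only [eChar_apply, ContinuousMap.star_apply, star_mul', eChar_apply,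
      fourier_neg, RCLike.star_def]

lemma echar_separates : (echarSubalgebra L₁ L₂).SeparatesPoints := by
  intro x y hxy
  rcases Prod.ext_iff.not.mp hxy |> not_and_or.mp with hx | hx
  · refine ⟨_, ⟨eChar L₁ L₂ 1 0, Algebra.subset_adjoin ⟨(1, 0), rfl⟩, rfl⟩, ?_⟩
    simp only [eChar_apply, fourier_zero, mul_one, fourier_one]
    intro hc
    rw [Circle.coe_inj] at hc
    exact hx (AddCircle.injective_toCircle hL₁.out.ne' hc)
  · refine ⟨_, ⟨eChar L₁ L₂ 0 1, Algebra.subset_adjoin ⟨(0, 1), rfl⟩, rfl⟩, ?_⟩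
    simp only [eChar_apply, fourier_zero, one_mul, fourier_one]
    intro hc
    rw [Circle.coe_inj] at hc
    exact hx (AddCircle.injective_toCircle hL₂.out.ne' hc)

lemma echar_closure_eq_top : (echarSubalgebra L₁ L₂).topologicalClosure = ⊤ :=
  ContinuousMap.starSubalgebra_topologicalClosure_eq_top_of_separatesPoints _
    (echar_separates L₁ L₂)

lemma exists_echar_approx (F : C(AddCircle L₁ × AddCircle L₂, ℂ)) {ε : ℝ} (hε : 0 < ε) :
    ∃ p ∈ Algebra.adjoin ℂ (echarSet L₁ L₂), ‖F - p‖ < ε := by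
  have hdense : F ∈ closure ((echarSubalgebra L₁ L₂) : Set _) := by
    rw [← StarSubalgebra.topologicalClosure_coe, echar_closure_eq_top]
    trivial
  obtain ⟨p, hp, hd⟩ := Metric.mem_closure_iff.mp hdense ε hε
  exact ⟨p, hp, by rwa [← dist_eq_norm]⟩

lemma timeAvg_add (F G : C(AddCircle L₁ × AddCircle L₂, ℂ)) (T : ℝ) :
    timeAvg L₁ L₂ (F + G) T = timeAvg L₁ L₂ F T + timeAvg L₁ L₂ G T := by
  unfold timeAvg
  rw [← smul_add, ← integral_add ((cont_diag L₁ L₂ F).intervalIntegrable _ _)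
    ((cont_diag L₁ L₂ G).intervalIntegrable _ _)]
  simp

lemma cellAvg_add (F G : C(AddCircle L₁ × AddCircle L₂, ℂ)) :
    cellAvg L₁ L₂ (F + G) = cellAvg L₁ L₂ F + cellAvg L₁ L₂ G := by
  unfold cellAvg
  rw [← smul_add, ← integral_add ((cont_inner L₁ L₂ F).intervalIntegrable _ _)
    ((cont_inner L₁ L₂ G).intervalIntegrable _ _)]
  congr 1
  apply intervalIntegral.integral_congr
  intro y _
  simp only
  rw [← integral_add ((cont_slice L₁ L₂ F y).intervalIntegrable _ _)
    ((cont_slice L₁ L₂ G y).intervalIntegrable _ _)]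
  simp

lemma timeAvg_smul (a : ℂ) (F : C(AddCircle L₁ × AddCircle L₂, ℂ)) (T : ℝ) :
    timeAvg L₁ L₂ (a • F) T = a • timeAvg L₁ L₂ F T := by
  unfold timeAvg
  rw [smul_comm]
  congr 1
  rw [← intervalIntegral.integral_smul]
  simp

lemma cellAvg_smul (a : ℂ) (F : C(AddCircle L₁ × AddCircle L₂, ℂ)) :
    cellAvg L₁ L₂ (a • F) = a • cellAvg L₁ L₂ F := by
  unfold cellAvg
  rw [smul_comm]
  congr 1
  rw [← intervalIntegral.integral_smul]
  apply intervalIntegral.integral_congr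
  intro y _
  simp only
  rw [← intervalIntegral.integral_smul]
  simp

lemma timeAvg_zero (T : ℝ) : timeAvg L₁ L₂ 0 T = 0 := by
  unfold timeAvg; simp

lemma cellAvg_zero : cellAvg L₁ L₂ 0 = 0 := by
  unfold cellAvg; simp

lemma tendsto_of_mem_adjoin (hirr : Irrational (L₁ / L₂))
    {p : C(AddCircle L₁ × AddCircle L₂, ℂ)} (hp : p ∈ Algebra.adjoin ℂ (echarSet L₁ L₂)) :
    Tendsto (fun T => timeAvg L₁ L₂ p T) atTop (nhds (cellAvg L₁ L₂ p)) := by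
  have hmono : ∀ q ∈ Submonoid.closure (echarSet L₁ L₂), ∃ m n : ℤ, q = eChar L₁ L₂ m n := by
    intro q hq
    induction hq using Submonoid.closure_induction with
    | mem x hx => obtain ⟨⟨m, n⟩, rfl⟩ := hx; exact ⟨m, n, rfl⟩
    | one => exact ⟨0, 0, (echar_one L₁ L₂).symm⟩
    | mul x y _ _ hx hy =>
      obtain ⟨m, n, rfl⟩ := hx
      obtain ⟨m', n', rfl⟩ := hy
      exact ⟨m + m', n + n', echar_mul L₁ L₂ m n m' n'⟩
  rw [← Subalgebra.mem_toSubmodule, Algebra.adjoin_eq_span] at hp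
  induction hp using Submodule.span_induction with
  | mem x hx =>
    obtain ⟨m, n, rfl⟩ := hmono x hx
    exact echar_tendsto L₁ L₂ hirr m n
  | zero =>
    simp only [timeAvg_zero, cellAvg_zero]
    exact tendsto_const_nhds
  | add x y _ _ hx hy =>
    simp only [timeAvg_add, cellAvg_add]
    exact hx.add hy
  | smul a x _ hx =>
    simp only [timeAvg_smul, cellAvg_smul]
    exact hx.const_smul a

theorem key_tendsto (hirr : Irrational (L₁ / L₂)) (F : C(AddCircle L₁ × AddCircle L₂, ℂ)) :
    Tendsto (fun T => timeAvg L₁ L₂ F T) atTop (nhds (cellAvg L₁ L₂ F)) := by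
  rw [Metric.tendsto_nhds]
  intro ε hε
  obtain ⟨p, hpA, hpF⟩ := exists_echar_approx L₁ L₂ F (by positivity : (0:ℝ) < ε/3)
  have h1 := tendsto_of_mem_adjoin L₁ L₂ hirr hpA
  have h2 := (Metric.tendsto_nhds.mp h1) (ε/3) (by positivity)
  filter_upwards [h2, eventually_gt_atTop (0:ℝ)] with T hT hT0
  have d1 : dist (timeAvg L₁ L₂ F T) (timeAvg L₁ L₂ p T) < ε/3 := by
    rw [dist_eq_norm, ← timeAvg_sub]
    exact lt_of_le_of_lt (norm_timeAvg_le L₁ L₂ (F - p) hT0) hpF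
  have d3 : dist (cellAvg L₁ L₂ p) (cellAvg L₁ L₂ F) < ε/3 := by
    rw [dist_eq_norm, ← cellAvg_sub]
    refine lt_of_le_of_lt (norm_cellAvg_le L₁ L₂ (p - F)) ?_
    rwa [norm_sub_rev]
  calc dist (timeAvg L₁ L₂ F T) (cellAvg L₁ L₂ F)
      ≤ dist (timeAvg L₁ L₂ F T) (timeAvg L₁ L₂ p T) + dist (timeAvg L₁ L₂ p T) (cellAvg L₁ L₂ p)
        + dist (cellAvg L₁ L₂ p) (cellAvg L₁ L₂ F) := dist_triangle4 _ _ _ _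
    _ < ε/3 + ε/3 + ε/3 := by gcongr
    _ = ε := by ring

end framework

/-- Mean value of the reciprocal of a sum of two periodic functions with incommensurable
periods equals the average over the periodicity cell. -/
theorem mean_value_reciprocal_sum_two_periods
    (L₁ L₂ : ℝ) (hL₁ : 0 < L₁) (hL₂ : 0 < L₂) (hirr : Irrational (L₁ / L₂))
    (g h : ℝ → ℝ) (hgcont : Continuous g) (hhcont : Continuous h)
    (hgper : ∀ x, g (x + L₁) = g x) (hhper : ∀ x, h (x + L₂) = h x)
    (c : ℝ) (hc : 0 < c) (hlb : ∀ y z : ℝ, c ≤ g y + h z) :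
    Tendsto (fun T : ℝ => (1 / T) * ∫ y in (0 : ℝ)..T, (g y + h y)⁻¹)
      atTop
      (nhds ((1 / (L₁ * L₂)) *
        ∫ y in (0 : ℝ)..L₁, ∫ z in (0 : ℝ)..L₂, (g y + h z)⁻¹)) := by
  haveI : Fact (0 < L₁) := ⟨hL₁⟩
  haveI : Fact (0 < L₂) := ⟨hL₂⟩
  have hgper' : Function.Periodic g L₁ := hgper
  have hhper' : Function.Periodic h L₂ := hhper
  set G : AddCircle L₁ → ℝ := hgper'.lift with hGdef
  set H : AddCircle L₂ → ℝ := hhper'.lift with hHdef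
  have hGcont : Continuous G := hgcont.quotient_liftOn' _
  have hHcont : Continuous H := hhcont.quotient_liftOn' _
  have hGH_pos : ∀ p : AddCircle L₁ × AddCircle L₂, 0 < G p.1 + H p.2 := by
    rintro ⟨a, b⟩
    induction a using QuotientAddGroup.induction_on with | H y =>
    induction b using QuotientAddGroup.induction_on with | H z =>
    have : G (y : AddCircle L₁) = g y := hgper'.lift_coe y
    have h2 : H (z : AddCircle L₂) = h z := hhper'.lift_coe z
    simp only [this, h2]
    linarith [hlb y z]
  set F : C(AddCircle L₁ × AddCircle L₂, ℂ) :=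
    ⟨fun p => (((G p.1 + H p.2 : ℝ) : ℂ))⁻¹, by
      exact (Complex.continuous_ofReal.comp
          ((hGcont.comp continuous_fst).add (hHcont.comp continuous_snd))).inv₀
        fun p => Complex.ofReal_ne_zero.mpr (hGH_pos p).ne'⟩ with hFdef
  have hFval : ∀ y z : ℝ, F ((y : AddCircle L₁), (z : AddCircle L₂)) = (((g y + h z)⁻¹ : ℝ) : ℂ) := by
    intro y z
    simp only [hFdef, ContinuousMap.coe_mk, hgper'.lift_coe, hhper'.lift_coe]
    push_cast
    rfl
  have hkey := key_tendsto L₁ L₂ hirr F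
  have htime : ∀ T : ℝ, timeAvg L₁ L₂ F T
      = (((1 / T) * ∫ y in (0 : ℝ)..T, (g y + h y)⁻¹ : ℝ) : ℂ) := by
    intro T
    unfold timeAvg
    have : (∫ y in (0:ℝ)..T, F (↑y, ↑y)) = (((∫ y in (0:ℝ)..T, (g y + h y)⁻¹ : ℝ)) : ℂ) := by
      rw [show (fun y : ℝ => F (↑y, ↑y)) = fun y : ℝ => (((g y + h y)⁻¹ : ℝ) : ℂ) from
        funext fun y => hFval y y]
      exact RCLike.intervalIntegral_ofReal
    rw [this, Complex.real_smul, Complex.ofReal_mul]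
  have hcell : cellAvg L₁ L₂ F
      = (((1 / (L₁ * L₂)) * ∫ y in (0 : ℝ)..L₁, ∫ z in (0 : ℝ)..L₂, (g y + h z)⁻¹ : ℝ) : ℂ) := by
    unfold cellAvg
    have hin : (fun y : ℝ => ∫ z in (0:ℝ)..L₂, F (↑y, ↑z))
        = fun y : ℝ => (((∫ z in (0:ℝ)..L₂, (g y + h z)⁻¹ : ℝ)) : ℂ) := by
      funext y
      rw [show (fun z : ℝ => F (↑y, ↑z)) = fun z : ℝ => (((g y + h z)⁻¹ : ℝ) : ℂ) from
        funext fun z => hFval y z]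
      exact RCLike.intervalIntegral_ofReal
    have hout : (∫ y in (0:ℝ)..L₁, ((∫ z in (0:ℝ)..L₂, (g y + h z)⁻¹ : ℝ) : ℂ))
        = ((∫ y in (0:ℝ)..L₁, ∫ z in (0:ℝ)..L₂, (g y + h z)⁻¹ : ℝ) : ℂ) :=
      RCLike.intervalIntegral_ofReal
    rw [hin, hout, Complex.real_smul, Complex.ofReal_mul]
  rw [← Filter.tendsto_ofReal_iff]
  have hfun : (fun T : ℝ => (((1 / T) * ∫ y in (0 : ℝ)..T, (g y + h y)⁻¹ : ℝ) : ℂ))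
      = fun T => timeAvg L₁ L₂ F T := funext fun T => (htime T).symm
  rw [hfun, ← hcell]
  exact hkey
end

section
/- Let I = [a,b] ⊂ ℝ with a < b, let γ > 0, ε ∈ (0,1), let K : I → ℝ be continuous with 0 < K_0 ≤ K(x) ≤ K_1, and let H : I → ℝ be measurable with 0 ≤ H(x) ≤ H_1, where ε^γ H_1 ≤ K_0. Define R_a^ε = {(x,y) ∈ ℝ² : x ∈ I, 0 < y < ε K(x)} and the narrow strip θ₁^ε = {(x,y) ∈ ℝ² : x ∈ I, ε(K(x) − ε^γ H(x)) < y < ε K(x)}. Then for every function v that is continuously differentiable on an open set containing the closure of R_a^ε, (1/ε^γ) ∫_{θ₁^ε} v² dx dy ≤ (2H_1/K_0) ∫_{R_a^ε} v² dx dy + ε² H_1 K_1 ∫_{R_a^ε} (∂v/∂y)² dx dy. -/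
open MeasureTheory Filter Set

/-- Core one-dimensional estimate on a vertical slice. -/
private lemma oneD_slice (c lb s : ℝ) (hc : 0 < c) (hlb0 : 0 ≤ lb) (hlbc : lb ≤ c)
    (hs : 0 < s) (w dw : ℝ → ℝ)
    (hderiv : ∀ t ∈ Set.Icc 0 c, HasDerivAt w (dw t) t)
    (hcont' : ContinuousOn dw (Set.Icc 0 c)) :
    ∫ y in Set.Ioo lb c, (w y) ^ 2 ≤
      (c - lb) * ((1 / c + 1 / s) * (∫ t in Set.Ioo 0 c, (w t) ^ 2)
        + s * ∫ t in Set.Ioo 0 c, (dw t) ^ 2) := by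
  have hwcont : ContinuousOn w (Set.Icc 0 c) := fun t ht =>
    (hderiv t ht).continuousAt.continuousWithinAt
  set A := ∫ t in Set.Ioo 0 c, (w t) ^ 2 with hAdef
  set C := ∫ t in Set.Ioo 0 c, (dw t) ^ 2 with hCdef
  set B := ∫ t in Set.Ioo 0 c, |w t| * |dw t| with hBdef
  have hIw2 : IntegrableOn (fun t => (w t) ^ 2) (Set.Icc 0 c) :=
    (hwcont.pow 2).integrableOn_compact isCompact_Icc
  have hIdw2 : IntegrableOn (fun t => (dw t) ^ 2) (Set.Icc 0 c) :=
    (hcont'.pow 2).integrableOn_compact isCompact_Icc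
  have hIwd : IntegrableOn (fun t => |w t| * |dw t|) (Set.Icc 0 c) :=
    (hwcont.abs.mul hcont'.abs).integrableOn_compact isCompact_Icc
  have hIabs : IntegrableOn (fun t => 2 * |w t| * |dw t|) (Set.Icc 0 c) :=
    (((continuousOn_const (c := (2:ℝ))).mul hwcont.abs).mul hcont'.abs).integrableOn_compact
      isCompact_Icc
  have hA0 : 0 ≤ A := setIntegral_nonneg measurableSet_Ioo fun t _ => sq_nonneg _
  have hB0 : 0 ≤ B := setIntegral_nonneg measurableSet_Ioo fun t _ =>
    mul_nonneg (abs_nonneg _) (abs_nonneg _)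
  have hC0 : 0 ≤ C := setIntegral_nonneg measurableSet_Ioo fun t _ => sq_nonneg _
  -- pointwise bound on the strip
  have key : ∀ y ∈ Set.Ioo lb c, (w y) ^ 2 ≤ A / c + 2 * B := by
    intro y hy
    have hy0 : 0 < y := lt_of_le_of_lt hlb0 hy.1
    have hyIcc : y ∈ Set.Icc 0 c := ⟨hy0.le, hy.2.le⟩
    have hzstep : ∀ z ∈ Set.Ioo 0 c, (w y) ^ 2 ≤ (w z) ^ 2 + 2 * B := by
      intro z hz
      have hzIcc : z ∈ Set.Icc 0 c := ⟨hz.1.le, hz.2.le⟩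
      have huIcc : Set.uIcc z y ⊆ Set.Icc 0 c := Set.uIcc_subset_Icc hzIcc hyIcc
      have hftc : ∫ t in z..y, 2 * w t * dw t = (w y) ^ 2 - (w z) ^ 2 := by
        apply intervalIntegral.integral_eq_sub_of_hasDerivAt
        · intro t ht
          have h : HasDerivAt (fun y => w y ^ 2) _ t := (hderiv t (huIcc ht)).pow 2
          simpa [mul_comm, mul_assoc, mul_left_comm] using h
        · exact (((continuousOn_const (c := (2:ℝ))).mul hwcont).mul hcont').mono huIcc
            |>.intervalIntegrable
      have habs : ∫ t in z..y, 2 * w t * dw t ≤ 2 * B := by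
        have h1 : ∫ t in z..y, 2 * w t * dw t ≤ |∫ t in z..y, 2 * w t * dw t| := le_abs_self _
        have h2 : |∫ t in z..y, 2 * w t * dw t| ≤ ∫ t in Set.uIoc z y, 2 * |w t| * |dw t| := by
          simpa [Real.norm_eq_abs] using
            (intervalIntegral.norm_integral_le_integral_norm_uIoc
              (f := fun t => 2 * w t * dw t) (a := z) (b := y) (μ := volume))
        have hsubset : Set.uIoc z y ⊆ Set.Ioc 0 c := by
          rw [Set.uIoc]
          exact Set.Ioc_subset_Ioc (le_min hz.1.le hy0.le) (max_le hz.2.le hy.2.le)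
        have h3 : ∫ t in Set.uIoc z y, 2 * |w t| * |dw t| ≤
            ∫ t in Set.Ioc 0 c, 2 * |w t| * |dw t| :=
          setIntegral_mono_set (hIabs.mono_set Set.Ioc_subset_Icc_self)
            (Eventually.of_forall fun t => by positivity)
            (HasSubset.Subset.eventuallyLE hsubset)
        have h4 : ∫ t in Set.Ioc 0 c, 2 * |w t| * |dw t| = 2 * B := by
          rw [integral_Ioc_eq_integral_Ioo]
          simp_rw [mul_assoc]
          rw [integral_const_mul]
        linarith
      linarith [hftc ▸ habs]
    -- average over z
    have hconst : ∫ _z in Set.Ioo 0 c, (w y) ^ 2 = c * (w y) ^ 2 := by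
      rw [setIntegral_const, Real.volume_real_Ioo_of_le hc.le, smul_eq_mul]
      simp [ENNReal.toReal_ofReal hc.le]
    have hmono : ∫ z in Set.Ioo 0 c, (w y) ^ 2 ≤ ∫ z in Set.Ioo 0 c, ((w z) ^ 2 + 2 * B) := by
      apply setIntegral_mono_on (integrableOn_const (by simp [Real.volume_Ioo]))
        ((hIw2.mono_set Set.Ioo_subset_Icc_self).add
          (integrableOn_const (by simp [Real.volume_Ioo]))) measurableSet_Ioo
      exact hzstep
    have hrhs : ∫ z in Set.Ioo 0 c, ((w z) ^ 2 + 2 * B) = A + c * (2 * B) := by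
      rw [integral_add (hIw2.mono_set Set.Ioo_subset_Icc_self)
        (integrableOn_const (by simp [Real.volume_Ioo]))]
      rw [setIntegral_const, Real.volume_real_Ioo_of_le hc.le, smul_eq_mul]
      simp [ENNReal.toReal_ofReal hc.le, hAdef]
    have hcy : c * (w y) ^ 2 ≤ A + c * (2 * B) := by
      rw [← hconst, ← hrhs]; exact hmono
    have : (w y) ^ 2 ≤ (A + c * (2 * B)) / c := by
      rw [le_div_iff₀ hc]; linarith [hcy]
    calc (w y) ^ 2 ≤ (A + c * (2 * B)) / c := this
      _ = A / c + 2 * B := by field_simp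
  -- Young's inequality step
  have hyoung : 2 * B ≤ (1 / s) * A + s * C := by
    have hpt : ∀ t ∈ Set.Ioo 0 c, 2 * (|w t| * |dw t|) ≤ (1 / s) * (w t) ^ 2 + s * (dw t) ^ 2 := by
      intro t _
      have h1 : 2 * (|w t| * |dw t|) * s ≤ (w t) ^ 2 + s ^ 2 * (dw t) ^ 2 := by
        nlinarith [sq_nonneg (|w t| - s * |dw t|), sq_abs (w t), sq_abs (dw t),
          abs_nonneg (w t), abs_nonneg (dw t), hs]
      have h2 : 2 * (|w t| * |dw t|) = (2 * (|w t| * |dw t|) * s) / s := by field_simp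
      rw [h2]
      rw [div_le_iff₀ hs]
      calc 2 * (|w t| * |dw t|) * s ≤ (w t) ^ 2 + s ^ 2 * (dw t) ^ 2 := h1
        _ = ((1 / s) * (w t) ^ 2 + s * (dw t) ^ 2) * s := by field_simp
    have hint : ∫ t in Set.Ioo 0 c, 2 * (|w t| * |dw t|) ≤
        ∫ t in Set.Ioo 0 c, ((1 / s) * (w t) ^ 2 + s * (dw t) ^ 2) := by
      apply setIntegral_mono_on ((hIwd.mono_set Set.Ioo_subset_Icc_self).const_mul 2)
        (((hIw2.mono_set Set.Ioo_subset_Icc_self).const_mul _).add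
          ((hIdw2.mono_set Set.Ioo_subset_Icc_self).const_mul _)) measurableSet_Ioo hpt
    rw [integral_const_mul] at hint
    rw [integral_add ((hIw2.mono_set Set.Ioo_subset_Icc_self).const_mul _)
      ((hIdw2.mono_set Set.Ioo_subset_Icc_self).const_mul _), integral_const_mul,
      integral_const_mul] at hint
    linarith [hint]
  -- integrate over the strip
  have hstrip : ∫ y in Set.Ioo lb c, (w y) ^ 2 ≤ (c - lb) * (A / c + 2 * B) := by
    have hsub : Set.Ioo lb c ⊆ Set.Icc 0 c := fun y hy =>
      ⟨(lt_of_le_of_lt hlb0 hy.1).le, hy.2.le⟩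
    have h1 : ∫ y in Set.Ioo lb c, (w y) ^ 2 ≤ ∫ _y in Set.Ioo lb c, (A / c + 2 * B) := by
      apply setIntegral_mono_on (hIw2.mono_set hsub)
        (integrableOn_const (by simp [Real.volume_Ioo])) measurableSet_Ioo key
    have h2 : ∫ _y in Set.Ioo lb c, (A / c + 2 * B) = (c - lb) * (A / c + 2 * B) := by
      rw [setIntegral_const, Real.volume_real_Ioo_of_le hlbc, smul_eq_mul]
    linarith [h1, h2 ▸ h1]
  have hAc : A / c = (1 / c) * A := by ring
  calc ∫ y in Set.Ioo lb c, (w y) ^ 2 ≤ (c - lb) * (A / c + 2 * B) := hstrip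
    _ ≤ (c - lb) * ((1 / c + 1 / s) * A + s * C) := by
        apply mul_le_mul_of_nonneg_left _ (by linarith : (0:ℝ) ≤ c - lb)
        rw [hAc]; linarith [hyoung]

/-- Fubini slicing for a region between two graphs over a base set. -/
private lemma slice_integral_eq (I : Set ℝ) (hI : MeasurableSet I) (lo hi : ℝ → ℝ)
    (hlo : Measurable lo) (hhi : Measurable hi) (f : ℝ × ℝ → ℝ)
    (hf : IntegrableOn f {p : ℝ × ℝ | p.1 ∈ I ∧ lo p.1 < p.2 ∧ p.2 < hi p.1}) :
    (∫ p in {p : ℝ × ℝ | p.1 ∈ I ∧ lo p.1 < p.2 ∧ p.2 < hi p.1}, f p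
      = ∫ x, I.indicator (fun x => ∫ y in Set.Ioo (lo x) (hi x), f (x, y)) x)
    ∧ Integrable (fun x => I.indicator (fun x => ∫ y in Set.Ioo (lo x) (hi x), f (x, y)) x) := by
  set S := {p : ℝ × ℝ | p.1 ∈ I ∧ lo p.1 < p.2 ∧ p.2 < hi p.1} with hSdef
  have hS : MeasurableSet S := by
    have : S = (Prod.fst ⁻¹' I) ∩
        ({p : ℝ × ℝ | lo p.1 < p.2} ∩ {p : ℝ × ℝ | p.2 < hi p.1}) := by
      ext p; simp [hSdef, Set.mem_setOf_eq, and_assoc]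
    rw [this]
    exact (measurable_fst hI).inter
      ((measurableSet_lt (hlo.comp measurable_fst) measurable_snd).inter
        (measurableSet_lt measurable_snd (hhi.comp measurable_fst)))
  have hind : Integrable (S.indicator f) := (integrable_indicator_iff hS).2 hf
  have hindp : Integrable (S.indicator f) (volume.prod volume) := by
    rwa [← MeasureTheory.Measure.volume_eq_prod]
  have sect : ∀ x : ℝ, ∫ y, S.indicator f (x, y) =
      I.indicator (fun x => ∫ y in Set.Ioo (lo x) (hi x), f (x, y)) x := by
    intro x
    by_cases hx : x ∈ I
    · rw [Set.indicator_of_mem hx, ← integral_indicator measurableSet_Ioo]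
      congr 1; funext y
      by_cases hy : y ∈ Set.Ioo (lo x) (hi x)
      · rw [Set.indicator_of_mem hy, Set.indicator_of_mem]
        exact ⟨hx, hy.1, hy.2⟩
      · rw [Set.indicator_of_notMem hy, Set.indicator_of_notMem]
        intro hmem
        exact hy ⟨hmem.2.1, hmem.2.2⟩
    · rw [Set.indicator_of_notMem hx]
      have hz : ∀ y : ℝ, S.indicator f (x, y) = 0 := fun y =>
        Set.indicator_of_notMem (fun hmem => hx hmem.1) _
      simp [hz]
  constructor
  · calc ∫ p in S, f p = ∫ p, S.indicator f p := (integral_indicator hS).symm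
      _ = ∫ p, S.indicator f p ∂(volume.prod volume) := by rw [MeasureTheory.Measure.volume_eq_prod]
      _ = ∫ x, ∫ y, S.indicator f (x, y) := integral_prod _ hindp
      _ = _ := by simp_rw [sect]
  · have h := hindp.integral_prod_left
    simp_rw [sect] at h
    exact h

set_option maxHeartbeats 1000000 in
/-- Concentrated-integral estimate: the rescaled `L²` integral over the narrow oscillating
strip near the top boundary is controlled by the `L²` norms of `v` and its vertical
derivative in the thin domain. -/
theorem concentrated_integral_estimate_thin_domain
    (a b : ℝ) (hab : a < b) (γ ε : ℝ) (hγ : 0 < γ) (hε : ε ∈ Set.Ioo (0 : ℝ) 1)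
    (K : ℝ → ℝ) (hKcont : ContinuousOn K (Set.Icc a b))
    (K₀ K₁ : ℝ) (hK₀ : 0 < K₀)
    (hKbd : ∀ x ∈ Set.Icc a b, K₀ ≤ K x ∧ K x ≤ K₁)
    (H : ℝ → ℝ) (hHmeas : Measurable H)
    (H₁ : ℝ) (hHbd : ∀ x ∈ Set.Icc a b, 0 ≤ H x ∧ H x ≤ H₁)
    (hsmall : ε ^ γ * H₁ ≤ K₀)
    (Ra θ₁ : Set (ℝ × ℝ))
    (hRa : Ra = {p : ℝ × ℝ | p.1 ∈ Set.Icc a b ∧ 0 < p.2 ∧ p.2 < ε * K p.1})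
    (hθ₁ : θ₁ = {p : ℝ × ℝ | p.1 ∈ Set.Icc a b ∧
      ε * (K p.1 - ε ^ γ * H p.1) < p.2 ∧ p.2 < ε * K p.1})
    (v : ℝ × ℝ → ℝ) (U : Set (ℝ × ℝ)) (hU : IsOpen U) (hUR : closure Ra ⊆ U)
    (hv : ContDiffOn ℝ 1 v U) :
    (1 / ε ^ γ) * ∫ p in θ₁, (v p) ^ 2 ≤
      (2 * H₁ / K₀) * (∫ p in Ra, (v p) ^ 2) +
        ε ^ 2 * H₁ * K₁ * ∫ p in Ra, (fderiv ℝ v p (0, 1)) ^ 2 := by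
  obtain ⟨hε0, hε1⟩ := hε
  set E := ε ^ γ with hEdef
  have hE : 0 < E := Real.rpow_pos_of_pos hε0 γ
  have haI : a ∈ Set.Icc a b := ⟨le_refl a, hab.le⟩
  have hH₁ : 0 ≤ H₁ := le_trans (hHbd a haI).1 (hHbd a haI).2
  have hK₀K₁ : K₀ ≤ K₁ := le_trans (hKbd a haI).1 (hKbd a haI).2
  have hK₁ : 0 < K₁ := lt_of_lt_of_le hK₀ hK₀K₁
  -- continuous extension of K
  set Kc : ℝ → ℝ := fun x => K (max a (min b x)) with hKcdef
  have hKcEq : ∀ x ∈ Set.Icc a b, Kc x = K x := by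
    intro x hx
    rw [hKcdef]
    simp only
    rw [min_eq_right hx.2, max_eq_right hx.1]
  have hKccont : Continuous Kc := by
    apply hKcont.comp_continuous
    · exact continuous_const.max (continuous_const.min continuous_id)
    · intro x
      constructor
      · exact le_max_left _ _
      · exact max_le hab.le (min_le_left _ _)
  -- rewritten sets
  have hRa' : Ra = {p : ℝ × ℝ | p.1 ∈ Set.Icc a b ∧
      (fun _ : ℝ => (0:ℝ)) p.1 < p.2 ∧ p.2 < (fun x => ε * Kc x) p.1} := by
    rw [hRa]; ext p
    simp only [Set.mem_setOf_eq]
    refine and_congr_right fun h1 => ?_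
    rw [hKcEq p.1 h1]
  have hθ₁' : θ₁ = {p : ℝ × ℝ | p.1 ∈ Set.Icc a b ∧
      (fun x => ε * (Kc x - E * H x)) p.1 < p.2 ∧ p.2 < (fun x => ε * Kc x) p.1} := by
    rw [hθ₁]; ext p
    simp only [Set.mem_setOf_eq, ← hEdef]
    refine and_congr_right fun h1 => ?_
    rw [hKcEq p.1 h1]
  -- θ₁ ⊆ Ra
  have hsub : θ₁ ⊆ Ra := by
    rw [hRa, hθ₁]
    rintro p ⟨h1, h2, h3⟩
    refine ⟨h1, lt_of_le_of_lt ?_ h2, h3⟩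
    have h4 := hHbd p.1 h1
    have h5 := hKbd p.1 h1
    have hEH : E * H p.1 ≤ K p.1 := by
      calc E * H p.1 ≤ E * H₁ := by nlinarith [hE.le]
        _ ≤ K₀ := hsmall
        _ ≤ K p.1 := h5.1
    have : (0:ℝ) ≤ K p.1 - E * H p.1 := by linarith
    positivity
  -- compactness of closure Ra
  have hRabd : Ra ⊆ Set.Icc a b ×ˢ Set.Icc 0 (ε * K₁) := by
    rw [hRa]
    rintro p ⟨h1, h2, h3⟩
    exact ⟨h1, h2.le, h3.le.trans (mul_le_mul_of_nonneg_left (hKbd p.1 h1).2 hε0.le)⟩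
  have hcomp : IsCompact (closure Ra) :=
    (isCompact_Icc.prod isCompact_Icc).of_isClosed_subset isClosed_closure
      (closure_minimal hRabd (isClosed_Icc.prod isClosed_Icc))
  -- continuity of integrands
  have hvc : ContinuousOn v U := hv.continuousOn
  have hdc : ContinuousOn (fun p => fderiv ℝ v p (0, 1)) U := by
    have h1 := hv.continuousOn_fderiv_of_isOpen hU le_rfl
    exact ((ContinuousLinearMap.apply ℝ ℝ ((0:ℝ), (1:ℝ))).continuous).comp_continuousOn h1
  have hfint : IntegrableOn (fun p => (v p) ^ 2) Ra :=
    (((hvc.mono hUR).pow 2).integrableOn_compact hcomp).mono_set subset_closure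
  have hgint : IntegrableOn (fun p => (fderiv ℝ v p (0, 1)) ^ 2) Ra :=
    (((hdc.mono hUR).pow 2).integrableOn_compact hcomp).mono_set subset_closure
  have hfintθ : IntegrableOn (fun p => (v p) ^ 2) θ₁ := hfint.mono_set hsub
  -- measurability for slicing
  have hImeas : MeasurableSet (Set.Icc a b) := measurableSet_Icc
  have hKcm : Measurable Kc := hKccont.measurable
  have hhim : Measurable (fun x => ε * Kc x) := hKcm.const_mul ε
  have hlom : Measurable (fun x => ε * (Kc x - E * H x)) :=
    (hKcm.sub (hHmeas.const_mul E)).const_mul ε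
  -- slice the three integrals
  obtain ⟨e1, i1⟩ := slice_integral_eq (Set.Icc a b) hImeas (fun _ => 0) (fun x => ε * Kc x)
    measurable_const hhim (fun p => (v p) ^ 2) (by rw [← hRa']; exact hfint)
  obtain ⟨e2, i2⟩ := slice_integral_eq (Set.Icc a b) hImeas (fun _ => 0) (fun x => ε * Kc x)
    measurable_const hhim (fun p => (fderiv ℝ v p (0, 1)) ^ 2) (by rw [← hRa']; exact hgint)
  obtain ⟨e3, i3⟩ := slice_integral_eq (Set.Icc a b) hImeas (fun x => ε * (Kc x - E * H x))
    (fun x => ε * Kc x) hlom hhim (fun p => (v p) ^ 2) (by rw [← hθ₁']; exact hfintθ)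
  rw [← hRa'] at e1 e2
  rw [← hθ₁'] at e3
  -- main estimate
  have main : ∫ p in θ₁, (v p) ^ 2 ≤
      E * ((2 * H₁ / K₀) * (∫ p in Ra, (v p) ^ 2)
        + ε ^ 2 * H₁ * K₁ * ∫ p in Ra, (fderiv ℝ v p (0, 1)) ^ 2) := by
    rw [e1, e2, e3]
    rw [← integral_const_mul, ← integral_const_mul, ← integral_add (i1.const_mul _)
      (i2.const_mul _), ← integral_const_mul]
    apply integral_mono i3 (((i1.const_mul _).add (i2.const_mul _)).const_mul _)
    intro x
    by_cases hx : x ∈ Set.Icc a b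
    · simp only [Pi.add_apply, Set.indicator_of_mem hx]
      have hKx := hKbd x hx
      have hHx := hHbd x hx
      have hKx0 : 0 < K x := lt_of_lt_of_le hK₀ hKx.1
      rw [hKcEq x hx]
      have hc : 0 < ε * K x := mul_pos hε0 hKx0
      have hEH : E * H x ≤ K x := by
        calc E * H x ≤ E * H₁ := mul_le_mul_of_nonneg_left hHx.2 hE.le
          _ ≤ K₀ := hsmall
          _ ≤ K x := hKx.1
      have hlb0 : 0 ≤ ε * (K x - E * H x) := mul_nonneg hε0.le (by linarith)
      have hlbc : ε * (K x - E * H x) ≤ ε * K x := by nlinarith [mul_nonneg hE.le hHx.1, hε0.le]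
      have hs : 0 < ε * K₁ := mul_pos hε0 hK₁
      -- the slice is inside U
      have hsliceU : ∀ t ∈ Set.Icc 0 (ε * K x), (x, t) ∈ U := by
        intro t ht
        apply hUR
        have hsub2 : ({x} : Set ℝ) ×ˢ Set.Ioo 0 (ε * K x) ⊆ Ra := by
          rintro ⟨x', y⟩ ⟨hx', hy⟩
          simp only [Set.mem_singleton_iff] at hx'
          subst hx'
          rw [hRa]
          exact ⟨hx, hy.1, hy.2⟩
        have hmem : (x, t) ∈ closure (({x} : Set ℝ) ×ˢ Set.Ioo 0 (ε * K x)) := by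
          rw [closure_prod_eq, closure_Ioo hc.ne]
          exact ⟨by simp, ht⟩
        exact closure_mono hsub2 hmem
      have hderiv : ∀ t ∈ Set.Icc 0 (ε * K x),
          HasDerivAt (fun t => v (x, t)) (fderiv ℝ v (x, t) (0, 1)) t := by
        intro t ht
        have hdiff : DifferentiableAt ℝ v (x, t) :=
          (hv.differentiableOn one_ne_zero).differentiableAt (hU.mem_nhds (hsliceU t ht))
        have hline : HasDerivAt (fun t : ℝ => ((x : ℝ), t)) ((0:ℝ), (1:ℝ)) t :=
          HasDerivAt.prodMk (hasDerivAt_const t x) (hasDerivAt_id t)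
        exact hdiff.hasFDerivAt.comp_hasDerivAt t hline
      have hcont' : ContinuousOn (fun t => fderiv ℝ v (x, t) (0, 1)) (Set.Icc 0 (ε * K x)) := by
        apply hdc.comp ((continuous_const.prodMk continuous_id).continuousOn)
        intro t ht
        exact hsliceU t ht
      have h1D := oneD_slice (ε * K x) (ε * (K x - E * H x)) (ε * K₁) hc hlb0 hlbc hs
        (fun t => v (x, t)) (fun t => fderiv ℝ v (x, t) (0, 1)) hderiv hcont'
      refine h1D.trans ?_
      set A := ∫ t in Set.Ioo 0 (ε * K x), (v (x, t)) ^ 2 with hAdef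
      set C := ∫ t in Set.Ioo 0 (ε * K x), (fderiv ℝ v (x, t) (0, 1)) ^ 2 with hCdef
      have hA0 : 0 ≤ A := setIntegral_nonneg measurableSet_Ioo fun t _ => sq_nonneg _
      have hC0 : 0 ≤ C := setIntegral_nonneg measurableSet_Ioo fun t _ => sq_nonneg _
      have hcoef1 : (ε * K x - ε * (K x - E * H x)) * (1 / (ε * K x) + 1 / (ε * K₁))
          ≤ E * (2 * H₁ / K₀) := by
        have heq : (ε * K x - ε * (K x - E * H x)) * (1 / (ε * K x) + 1 / (ε * K₁))
            = E * (H x / K x + H x / K₁) := by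
          field_simp
          ring
        rw [heq]
        have d1 : H x / K x ≤ H₁ / K₀ := div_le_div₀ hH₁ hHx.2 hK₀ hKx.1
        have d2 : H x / K₁ ≤ H₁ / K₀ := div_le_div₀ hH₁ hHx.2 hK₀ hK₀K₁
        have : H x / K x + H x / K₁ ≤ 2 * H₁ / K₀ := by
          have : (2:ℝ) * H₁ / K₀ = H₁ / K₀ + H₁ / K₀ := by ring
          linarith [d1, d2]
        exact mul_le_mul_of_nonneg_left this hE.le
      have hcoef2 : (ε * K x - ε * (K x - E * H x)) * (ε * K₁) ≤ E * (ε ^ 2 * H₁ * K₁) := by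
        have heq : (ε * K x - ε * (K x - E * H x)) * (ε * K₁) = E * (ε ^ 2 * (H x * K₁)) := by
          ring
        rw [heq]
        have h2a : H x * K₁ ≤ H₁ * K₁ := mul_le_mul_of_nonneg_right hHx.2 hK₁.le
        have h2b : ε ^ 2 * (H x * K₁) ≤ ε ^ 2 * (H₁ * K₁) :=
          mul_le_mul_of_nonneg_left h2a (sq_nonneg ε)
        calc E * (ε ^ 2 * (H x * K₁)) ≤ E * (ε ^ 2 * (H₁ * K₁)) :=
              mul_le_mul_of_nonneg_left h2b hE.le
          _ = E * (ε ^ 2 * H₁ * K₁) := by ring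
      calc (ε * K x - ε * (K x - E * H x)) * ((1 / (ε * K x) + 1 / (ε * K₁)) * A + (ε * K₁) * C)
          = ((ε * K x - ε * (K x - E * H x)) * (1 / (ε * K x) + 1 / (ε * K₁))) * A
            + ((ε * K x - ε * (K x - E * H x)) * (ε * K₁)) * C := by ring
        _ ≤ (E * (2 * H₁ / K₀)) * A + (E * (ε ^ 2 * H₁ * K₁)) * C :=
            add_le_add (mul_le_mul_of_nonneg_right hcoef1 hA0)
              (mul_le_mul_of_nonneg_right hcoef2 hC0)
        _ = E * (2 * H₁ / K₀ * A + ε ^ 2 * H₁ * K₁ * C) := by ring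
    · simp [Pi.add_apply, Set.indicator_of_notMem hx]
  -- divide by E
  have hfin := mul_le_mul_of_nonneg_left main (le_of_lt (by positivity : (0:ℝ) < 1 / E))
  calc (1 / E) * ∫ p in θ₁, (v p) ^ 2
      ≤ (1 / E) * (E * ((2 * H₁ / K₀) * (∫ p in Ra, (v p) ^ 2)
        + ε ^ 2 * H₁ * K₁ * ∫ p in Ra, (fderiv ℝ v p (0, 1)) ^ 2)) := hfin
    _ = (2 * H₁ / K₀) * (∫ p in Ra, (v p) ^ 2)
        + ε ^ 2 * H₁ * K₁ * ∫ p in Ra, (fderiv ℝ v p (0, 1)) ^ 2 := by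
        field_simp
end

section
/- Let I = [a,b] ⊂ ℝ with a < b, and let K_0, K_1 > 0. For each ε ∈ (0,1) let K_ε : I → ℝ be measurable with K_0 ≤ K_ε(x) ≤ K_1 for almost every x ∈ I, and let φ_ε ∈ L²(I). Suppose there exist σ, P ∈ L²(I) such that, as ε → 0⁺, K_ε φ_ε → σ strongly in L²(I) (i.e. ‖K_ε φ_ε − σ‖_{L²(I)} → 0) and 1/K_ε converges weakly in L²(I) to P. Then 1/K_1 ≤ P ≤ 1/K_0 almost everywhere in I (in particular Pσ ∈ L²(I)), and φ_ε converges weakly in L²(I) to Pσ as ε → 0⁺. -/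
open MeasureTheory Filter Set
open scoped ENNReal

private lemma aux_int_mul {μ : Measure ℝ} {u v : ℝ → ℝ} (hu : MemLp u 2 μ) (hv : MemLp v 2 μ) :
    Integrable (fun x => u x * v x) μ := by
  have h2 : Integrable (fun x => (u x ^ 2 + v x ^ 2) / 2) μ :=
    (hu.integrable_sq.add hv.integrable_sq).div_const 2
  refine h2.mono' (hu.aestronglyMeasurable.mul hv.aestronglyMeasurable) (ae_of_all _ fun x => ?_)
  rw [Real.norm_eq_abs, abs_mul]
  nlinarith [sq_nonneg (|u x| - |v x|), sq_abs (u x), sq_abs (v x)]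

private lemma aux_cs {μ : Measure ℝ} {u v : ℝ → ℝ} (hu : MemLp u 2 μ) (hv : MemLp v 2 μ) :
    ∫ x, |u x * v x| ∂μ ≤ (eLpNorm u 2 μ).toReal * (eLpNorm v 2 μ).toReal := by
  have hpq : (2:ℝ).HolderConjugate 2 := Real.HolderConjugate.two_two
  have h2 : (ENNReal.ofReal (2:ℝ)) = 2 := by
    rw [ENNReal.ofReal_ofNat]
  have hu' : MemLp u (ENNReal.ofReal (2:ℝ)) μ := by rw [h2]; exact hu
  have hv' : MemLp v (ENNReal.ofReal (2:ℝ)) μ := by rw [h2]; exact hv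
  have key := integral_mul_norm_le_Lp_mul_Lq (μ := μ) hpq hu' hv'
  have eu : (eLpNorm u 2 μ).toReal = (∫ a, ‖u a‖ ^ (2:ℝ) ∂μ) ^ (1/2 : ℝ) := by
    rw [hu.eLpNorm_eq_integral_rpow_norm two_ne_zero ENNReal.ofNat_ne_top,
      ENNReal.toReal_ofReal (by positivity)]
    norm_num
  have ev : (eLpNorm v 2 μ).toReal = (∫ a, ‖v a‖ ^ (2:ℝ) ∂μ) ^ (1/2 : ℝ) := by
    rw [hv.eLpNorm_eq_integral_rpow_norm two_ne_zero ENNReal.ofNat_ne_top,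
      ENNReal.toReal_ofReal (by positivity)]
    norm_num
  rw [eu, ev]
  have : ∫ x, |u x * v x| ∂μ = ∫ x, ‖u x‖ * ‖v x‖ ∂μ := by
    congr 1; funext x; rw [abs_mul, Real.norm_eq_abs, Real.norm_eq_abs]
  rw [this]
  exact key

private noncomputable def trunc (n : ℕ) (t : ℝ) : ℝ := max (-(n:ℝ)) (min (n:ℝ) t)

private lemma trunc_abs_le (n : ℕ) (t : ℝ) : |trunc n t| ≤ |t| := by
  unfold trunc
  rcases le_total 0 t with h | h
  · have h0 : (0:ℝ) ≤ min (n:ℝ) t := le_min (Nat.cast_nonneg n) h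
    rw [max_eq_right (le_trans (neg_nonpos.2 (Nat.cast_nonneg n)) h0),
      abs_of_nonneg h0, abs_of_nonneg h]
    exact min_le_right _ _
  · have h1 : min (n:ℝ) t = t := min_eq_right (h.trans (Nat.cast_nonneg n))
    rw [h1, abs_of_nonpos h,
      abs_of_nonpos (max_le (neg_nonpos.2 (Nat.cast_nonneg n)) h)]
    exact neg_le_neg (le_max_right _ _)

private lemma trunc_abs_le_n (n : ℕ) (t : ℝ) : |trunc n t| ≤ n := by
  rw [abs_le, trunc]
  constructor
  · have := le_max_left (-(n:ℝ)) (min (n:ℝ) t); linarith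
  · exact max_le (le_trans (neg_nonpos.2 (Nat.cast_nonneg n)) (Nat.cast_nonneg n)) (min_le_left _ _)

private lemma trunc_tendsto (t : ℝ) : Tendsto (fun n : ℕ => trunc n t) atTop (nhds t) := by
  refine tendsto_atTop_of_eventually_const (i₀ := ⌈|t|⌉₊) fun n hn => ?_
  have hnt : |t| ≤ (n:ℝ) := le_trans (Nat.le_ceil _) (Nat.cast_le.2 hn)
  have h1 : min (n:ℝ) t = t := min_eq_right ((le_abs_self t).trans hnt)
  have h2 : -(n:ℝ) ≤ t := by
    have := neg_abs_le t; linarith [neg_le_neg hnt]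
  rw [trunc, h1, max_eq_right h2]

private lemma trunc_continuous (n : ℕ) : Continuous (trunc n) :=
  continuous_const.max (continuous_const.min continuous_id)

/-- If `K_ε φ_ε → σ` strongly in `L²(I)` and `1/K_ε ⇀ P` weakly in `L²(I)`, with
`K₀ ≤ K_ε ≤ K₁`, then `1/K₁ ≤ P ≤ 1/K₀` a.e. and `φ_ε ⇀ P σ` weakly in `L²(I)`. -/
theorem weak_limit_of_flux_quotient
    (a b : ℝ) (hab : a < b) (K₀ K₁ : ℝ) (hK₀ : 0 < K₀) (hK₁ : 0 < K₁)
    (K φ : ℝ → ℝ → ℝ)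
    (hKmeas : ∀ ε ∈ Set.Ioo (0 : ℝ) 1, Measurable (K ε))
    (hKbd : ∀ ε ∈ Set.Ioo (0 : ℝ) 1,
      ∀ᵐ x ∂(volume.restrict (Set.Icc a b)), K₀ ≤ K ε x ∧ K ε x ≤ K₁)
    (hφ : ∀ ε ∈ Set.Ioo (0 : ℝ) 1, MemLp (φ ε) 2 (volume.restrict (Set.Icc a b)))
    (σ P : ℝ → ℝ)
    (hσ : MemLp σ 2 (volume.restrict (Set.Icc a b)))
    (hP : MemLp P 2 (volume.restrict (Set.Icc a b)))
    (hstrong : Tendsto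
      (fun ε : ℝ => eLpNorm (fun x => K ε x * φ ε x - σ x) 2
        (volume.restrict (Set.Icc a b)))
      (nhdsWithin 0 (Set.Ioi 0)) (nhds 0))
    (hweak : ∀ g : ℝ → ℝ, MemLp g 2 (volume.restrict (Set.Icc a b)) →
      Tendsto (fun ε : ℝ => ∫ x in Set.Icc a b, (K ε x)⁻¹ * g x)
        (nhdsWithin 0 (Set.Ioi 0))
        (nhds (∫ x in Set.Icc a b, P x * g x))) :
    (∀ᵐ x ∂(volume.restrict (Set.Icc a b)), 1 / K₁ ≤ P x ∧ P x ≤ 1 / K₀) ∧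
    MemLp (fun x => P x * σ x) 2 (volume.restrict (Set.Icc a b)) ∧
    ∀ g : ℝ → ℝ, MemLp g 2 (volume.restrict (Set.Icc a b)) →
      Tendsto (fun ε : ℝ => ∫ x in Set.Icc a b, φ ε x * g x)
        (nhdsWithin 0 (Set.Ioi 0))
        (nhds (∫ x in Set.Icc a b, P x * σ x * g x)) := by
  set μ := volume.restrict (Set.Icc a b) with hμdef
  haveI : IsFiniteMeasure μ :=
    ⟨by rw [hμdef, Measure.restrict_apply_univ]; exact measure_Icc_lt_top⟩
  have hl01 : Ioo (0:ℝ) 1 ∈ nhdsWithin (0:ℝ) (Ioi 0) :=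
    Ioo_mem_nhdsGT_of_mem ⟨le_refl _, one_pos⟩
  have hKinv : ∀ ε ∈ Ioo (0:ℝ) 1, ∀ᵐ x ∂μ, K₁⁻¹ ≤ (K ε x)⁻¹ ∧ (K ε x)⁻¹ ≤ K₀⁻¹ := by
    intro ε hε
    filter_upwards [hKbd ε hε] with x hx
    have hxpos : 0 < K ε x := lt_of_lt_of_le hK₀ hx.1
    exact ⟨inv_anti₀ hxpos hx.2, inv_anti₀ hK₀ hx.1⟩
  have hKinvmeas : ∀ ε ∈ Ioo (0:ℝ) 1, AEStronglyMeasurable (fun x => (K ε x)⁻¹) μ :=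
    fun ε hε => ((hKmeas ε hε).inv).aestronglyMeasurable
  have hKinvnorm : ∀ ε ∈ Ioo (0:ℝ) 1, ∀ᵐ x ∂μ, ‖(K ε x)⁻¹‖ ≤ K₀⁻¹ := by
    intro ε hε
    filter_upwards [hKinv ε hε] with x hx
    rw [Real.norm_eq_abs, abs_of_nonneg (le_trans (by positivity) hx.1)]
    exact hx.2
  -- set-integral bounds on P
  have hsetP : ∀ s : Set ℝ, MeasurableSet s →
      K₁⁻¹ * (μ s).toReal ≤ ∫ x in s, P x ∂μ ∧ (∫ x in s, P x ∂μ) ≤ K₀⁻¹ * (μ s).toReal := by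
    intro s hs
    have hg : MemLp (s.indicator (fun _ => (1:ℝ))) 2 μ := (memLp_const 1).indicator hs
    have hcong : ∀ w : ℝ → ℝ, (fun x => w x * s.indicator (fun _ => (1:ℝ)) x) = s.indicator w := by
      intro w; funext x; by_cases hx : x ∈ s <;> simp [hx]
    have hconv := hweak _ hg
    have hPval : (∫ x, P x * s.indicator (fun _ => (1:ℝ)) x ∂μ) = ∫ x in s, P x ∂μ := by
      rw [hcong P, integral_indicator hs]
    rw [hPval] at hconv
    have hKa : ∀ᶠ ε in nhdsWithin (0:ℝ) (Ioi 0),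
        K₁⁻¹ * (μ s).toReal ≤ (∫ x, (K ε x)⁻¹ * s.indicator (fun _ => (1:ℝ)) x ∂μ) ∧
        (∫ x, (K ε x)⁻¹ * s.indicator (fun _ => (1:ℝ)) x ∂μ) ≤ K₀⁻¹ * (μ s).toReal := by
      refine eventually_of_mem hl01 fun ε hε => ?_
      have hint : Integrable (fun x => (K ε x)⁻¹) μ :=
        (integrable_const (K₀⁻¹ : ℝ)).mono' (hKinvmeas ε hε) (hKinvnorm ε hε)
      have hval : (∫ x, (K ε x)⁻¹ * s.indicator (fun _ => (1:ℝ)) x ∂μ)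
          = ∫ x in s, (K ε x)⁻¹ ∂μ := by
        rw [hcong _, integral_indicator hs]
      rw [hval]
      constructor
      · calc K₁⁻¹ * (μ s).toReal = ∫ _ in s, (K₁⁻¹ : ℝ) ∂μ := by
              rw [setIntegral_const, smul_eq_mul, mul_comm, measureReal_def]
          _ ≤ ∫ x in s, (K ε x)⁻¹ ∂μ :=
              setIntegral_mono_ae (integrable_const _).integrableOn hint.integrableOn
                ((hKinv ε hε).mono fun x hx => hx.1)
      · calc (∫ x in s, (K ε x)⁻¹ ∂μ) ≤ ∫ _ in s, (K₀⁻¹ : ℝ) ∂μ :=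
              setIntegral_mono_ae hint.integrableOn (integrable_const _).integrableOn
                ((hKinv ε hε).mono fun x hx => hx.2)
          _ = K₀⁻¹ * (μ s).toReal := by rw [setIntegral_const, smul_eq_mul, mul_comm, measureReal_def]
    constructor
    · exact ge_of_tendsto hconv (hKa.mono fun ε h => h.1)
    · exact le_of_tendsto hconv (hKa.mono fun ε h => h.2)
  have hPint : Integrable P μ := hP.integrable one_le_two
  have hPlow : ∀ᵐ x ∂μ, K₁⁻¹ ≤ P x := by
    have h0 : 0 ≤ᵐ[μ] fun x => P x - K₁⁻¹ := by
      refine ae_nonneg_of_forall_setIntegral_nonneg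
        (hPint.sub (integrable_const _)) fun s hs _ => ?_
      rw [integral_sub hPint.integrableOn (integrable_const _).integrableOn,
        setIntegral_const, smul_eq_mul, measureReal_def]
      have := (hsetP s hs).1
      linarith
    filter_upwards [h0] with x hx
    exact sub_nonneg.1 hx
  have hPhigh : ∀ᵐ x ∂μ, P x ≤ K₀⁻¹ := by
    have h0 : 0 ≤ᵐ[μ] fun x => K₀⁻¹ - P x := by
      refine ae_nonneg_of_forall_setIntegral_nonneg
        ((integrable_const _).sub hPint) fun s hs _ => ?_
      rw [integral_sub (integrable_const _).integrableOn hPint.integrableOn,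
        setIntegral_const, smul_eq_mul, measureReal_def]
      have := (hsetP s hs).2
      linarith
    filter_upwards [h0] with x hx
    exact sub_nonneg.1 hx
  have hPbd : ∀ᵐ x ∂μ, 1 / K₁ ≤ P x ∧ P x ≤ 1 / K₀ := by
    filter_upwards [hPlow, hPhigh] with x h1 h2
    rw [one_div, one_div]; exact ⟨h1, h2⟩
  have hPabs : ∀ᵐ x ∂μ, ‖P x‖ ≤ K₀⁻¹ := by
    filter_upwards [hPlow, hPhigh] with x h1 h2
    rw [Real.norm_eq_abs, abs_of_nonneg (le_trans (by positivity) h1)]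
    exact h2
  have hPσ : MemLp (fun x => P x * σ x) 2 μ := by
    refine (hσ.const_mul K₀⁻¹).of_le (hP.aestronglyMeasurable.mul hσ.aestronglyMeasurable) ?_
    filter_upwards [hPabs] with x hx
    rw [norm_mul, norm_mul]
    exact mul_le_mul_of_nonneg_right (hx.trans (le_abs_self _)) (norm_nonneg _)
  refine ⟨hPbd, hPσ, ?_⟩
  intro g hg
  set G := (eLpNorm g 2 μ).toReal with hG
  have hbound : ∀ (q w g' : ℝ → ℝ), AEStronglyMeasurable q μ → (∀ᵐ x ∂μ, ‖q x‖ ≤ K₀⁻¹) →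
      MemLp w 2 μ → MemLp g' 2 μ →
      |∫ x, q x * (w x * g' x) ∂μ| ≤ K₀⁻¹ * ((eLpNorm w 2 μ).toReal * (eLpNorm g' 2 μ).toReal) := by
    intro q w g' hq hqb hw hg'
    have hwg : Integrable (fun x => w x * g' x) μ := aux_int_mul hw hg'
    have hqwg : Integrable (fun x => q x * (w x * g' x)) μ := hwg.bdd_mul hq hqb
    have h1 : |∫ x, q x * (w x * g' x) ∂μ| ≤ ∫ x, ‖q x * (w x * g' x)‖ ∂μ := by
      simpa [Real.norm_eq_abs] using
        norm_integral_le_integral_norm (μ := μ) (fun x => q x * (w x * g' x))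
    have h2 : (∫ x, ‖q x * (w x * g' x)‖ ∂μ) ≤ ∫ x, K₀⁻¹ * |w x * g' x| ∂μ := by
      refine integral_mono_ae hqwg.norm (hwg.abs.const_mul _) ?_
      filter_upwards [hqb] with x hx
      rw [norm_mul, Real.norm_eq_abs (w x * g' x)]
      exact mul_le_mul_of_nonneg_right hx (abs_nonneg _)
    have h3 : (∫ x, K₀⁻¹ * |w x * g' x| ∂μ) = K₀⁻¹ * ∫ x, |w x * g' x| ∂μ :=
      integral_const_mul _ _
    calc |∫ x, q x * (w x * g' x) ∂μ| ≤ ∫ x, ‖q x * (w x * g' x)‖ ∂μ := h1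
      _ ≤ K₀⁻¹ * ∫ x, |w x * g' x| ∂μ := by rw [← h3]; exact h2
      _ ≤ _ := mul_le_mul_of_nonneg_left (aux_cs hw hg') (by positivity)
  have hfmem : ∀ ε ∈ Ioo (0:ℝ) 1, MemLp (fun x => K ε x * φ ε x - σ x) 2 μ := by
    intro ε hε
    refine MemLp.sub ?_ hσ
    refine ((hφ ε hε).const_mul K₁).of_le
      ((hKmeas ε hε).aestronglyMeasurable.mul (hφ ε hε).aestronglyMeasurable) ?_
    filter_upwards [hKbd ε hε] with x hx
    rw [norm_mul, norm_mul]
    refine mul_le_mul_of_nonneg_right ?_ (norm_nonneg _)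
    rw [Real.norm_eq_abs, Real.norm_eq_abs, abs_of_nonneg (le_trans hK₀.le hx.1), abs_of_pos hK₁]
    exact hx.2
  have hstrongR : Tendsto (fun ε => (eLpNorm (fun x => K ε x * φ ε x - σ x) 2 μ).toReal)
      (nhdsWithin (0:ℝ) (Ioi 0)) (nhds 0) := by
    have h := (ENNReal.tendsto_toReal (by simp)).comp hstrong
    simpa [Function.comp_def] using h
  set A : ℝ → ℝ := fun ε => ∫ x, (K ε x)⁻¹ * ((K ε x * φ ε x - σ x) * g x) ∂μ with hA
  set B : ℝ → ℝ := fun ε => ∫ x, (K ε x)⁻¹ * (σ x * g x) ∂μ with hB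
  have hsplit : ∀ᶠ ε in nhdsWithin (0:ℝ) (Ioi 0),
      (∫ x, φ ε x * g x ∂μ) = A ε + B ε := by
    refine eventually_of_mem hl01 fun ε hε => ?_
    have hint1 : Integrable (fun x => (K ε x)⁻¹ * ((K ε x * φ ε x - σ x) * g x)) μ :=
      (aux_int_mul (hfmem ε hε) hg).bdd_mul (hKinvmeas ε hε) (hKinvnorm ε hε)
    have hint2 : Integrable (fun x => (K ε x)⁻¹ * (σ x * g x)) μ :=
      (aux_int_mul hσ hg).bdd_mul (hKinvmeas ε hε) (hKinvnorm ε hε)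
    rw [hA, hB]
    rw [← integral_add hint1 hint2]
    refine integral_congr_ae ?_
    filter_upwards [hKbd ε hε] with x hx
    have hne : K ε x ≠ 0 := ne_of_gt (lt_of_lt_of_le hK₀ hx.1)
    field_simp
    ring
  have hAtends : Tendsto A (nhdsWithin (0:ℝ) (Ioi 0)) (nhds 0) := by
    have hb : ∀ᶠ ε in nhdsWithin (0:ℝ) (Ioi 0), ‖A ε‖ ≤
        K₀⁻¹ * ((eLpNorm (fun x => K ε x * φ ε x - σ x) 2 μ).toReal * G) := by
      refine eventually_of_mem hl01 fun ε hε => ?_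
      rw [Real.norm_eq_abs]
      exact hbound _ _ _ (hKinvmeas ε hε) (hKinvnorm ε hε) (hfmem ε hε) hg
    have hbt : Tendsto (fun ε =>
        K₀⁻¹ * ((eLpNorm (fun x => K ε x * φ ε x - σ x) 2 μ).toReal * G))
        (nhdsWithin (0:ℝ) (Ioi 0)) (nhds 0) := by
      have := (hstrongR.mul_const G).const_mul K₀⁻¹
      simpa using this
    exact tendsto_zero_iff_norm_tendsto_zero.2
      (squeeze_zero' (Eventually.of_forall fun ε => norm_nonneg _) hb hbt)
  -- the B part via truncation
  have hsnmem : ∀ n : ℕ, MemLp (fun x => trunc n (σ x)) 2 μ := fun n =>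
    hσ.of_le ((trunc_continuous n).comp_aestronglyMeasurable hσ.aestronglyMeasurable)
      (Eventually.of_forall fun x => by
        simpa [Real.norm_eq_abs] using trunc_abs_le n (σ x))
  have hsngmem : ∀ n : ℕ, MemLp (fun x => trunc n (σ x) * g x) 2 μ := fun n =>
    (hg.const_mul (n:ℝ)).of_le ((hsnmem n).aestronglyMeasurable.mul hg.aestronglyMeasurable)
      (Eventually.of_forall fun x => by
        rw [norm_mul, norm_mul, Real.norm_eq_abs ((n:ℝ)), Real.norm_eq_abs (trunc n (σ x))]
        exact mul_le_mul_of_nonneg_right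
          ((trunc_abs_le_n n (σ x)).trans (le_abs_self _)) (norm_nonneg _))
  have h1 : ∀ n : ℕ, Tendsto (fun ε => ∫ x, (K ε x)⁻¹ * (trunc n (σ x) * g x) ∂μ)
      (nhdsWithin (0:ℝ) (Ioi 0)) (nhds (∫ x, P x * (trunc n (σ x) * g x) ∂μ)) :=
    fun n => hweak _ (hsngmem n)
  have hdiffmem : ∀ n : ℕ, MemLp (fun x => σ x - trunc n (σ x)) 2 μ := fun n => hσ.sub (hsnmem n)
  set d' : ℕ → ℝ := fun n => (eLpNorm (fun x => σ x - trunc n (σ x)) 2 μ).toReal with hd'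
  have hd'0 : Tendsto d' atTop (nhds 0) := by
    have hval : ∀ n, d' n = Real.sqrt (∫ x, (σ x - trunc n (σ x))^2 ∂μ) := by
      intro n
      have hcongr : (fun x => ‖σ x - trunc n (σ x)‖ ^ ((2:ℝ≥0∞).toReal))
          = fun x => (σ x - trunc n (σ x))^2 := by
        funext x
        rw [show ((2:ℝ≥0∞).toReal) = ((2:ℕ):ℝ) by norm_num, Real.rpow_natCast,
          Real.norm_eq_abs, sq_abs]
      show (eLpNorm (fun x => σ x - trunc n (σ x)) 2 μ).toReal
          = Real.sqrt (∫ x, (σ x - trunc n (σ x))^2 ∂μ)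
      rw [(hdiffmem n).eLpNorm_eq_integral_rpow_norm two_ne_zero ENNReal.ofNat_ne_top,
        ENNReal.toReal_ofReal (by positivity), hcongr, Real.sqrt_eq_rpow]
      norm_num
    have hd2 : Tendsto (fun n : ℕ => ∫ x, (σ x - trunc n (σ x))^2 ∂μ) atTop (nhds 0) := by
      have h := tendsto_integral_of_dominated_convergence (μ := μ)
        (F := fun (n : ℕ) x => (σ x - trunc n (σ x))^2) (f := fun _ => (0:ℝ))
        (bound := fun x => 4 * σ x ^ 2)
        (fun n => by
          have hm := hσ.aestronglyMeasurable.sub (hsnmem n).aestronglyMeasurable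
          simpa [pow_two, Pi.mul_def, Pi.sub_def] using hm.mul hm)
        (hσ.integrable_sq.const_mul 4)
        (fun n => Eventually.of_forall fun x => by
          rw [Real.norm_eq_abs, abs_of_nonneg (sq_nonneg _)]
          have h1 : |trunc n (σ x)| ≤ |σ x| := trunc_abs_le _ _
          have h2 : |σ x - trunc n (σ x)| ≤ 2 * |σ x| :=
            (abs_sub _ _).trans (by linarith)
          calc (σ x - trunc n (σ x))^2 = |σ x - trunc n (σ x)|^2 := (sq_abs _).symm
            _ ≤ (2 * |σ x|)^2 := pow_le_pow_left₀ (abs_nonneg _) h2 2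
            _ = 4 * σ x ^ 2 := by rw [mul_pow, sq_abs]; ring)
        (Eventually.of_forall fun x => by
          have h := (tendsto_const_nhds (x := σ x) (f := atTop)).sub (trunc_tendsto (σ x))
          simpa using h.pow 2)
      simpa using h
    have := (Real.continuous_sqrt.tendsto 0).comp hd2
    refine Tendsto.congr (fun n => (hval n).symm) ?_
    simpa [Function.comp_def] using this
  have hLdiff : ∀ n : ℕ, |(∫ x, P x * (σ x * g x) ∂μ)
      - ∫ x, P x * (trunc n (σ x) * g x) ∂μ| ≤ K₀⁻¹ * (d' n * G) := by
    intro n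
    have e1 : Integrable (fun x => P x * (σ x * g x)) μ :=
      (aux_int_mul hσ hg).bdd_mul hP.aestronglyMeasurable hPabs
    have e2 : Integrable (fun x => P x * (trunc n (σ x) * g x)) μ :=
      (aux_int_mul (hsnmem n) hg).bdd_mul hP.aestronglyMeasurable hPabs
    have heq : (∫ x, P x * (σ x * g x) ∂μ) - ∫ x, P x * (trunc n (σ x) * g x) ∂μ
        = ∫ x, P x * ((σ x - trunc n (σ x)) * g x) ∂μ := by
      rw [← integral_sub e1 e2]; congr 1; funext x; ring
    rw [heq]
    exact hbound _ _ _ hP.aestronglyMeasurable hPabs (hdiffmem n) hg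
  have hBdiff : ∀ (n : ℕ), ∀ ε ∈ Ioo (0:ℝ) 1,
      |B ε - ∫ x, (K ε x)⁻¹ * (trunc n (σ x) * g x) ∂μ| ≤ K₀⁻¹ * (d' n * G) := by
    intro n ε hε
    have e1 : Integrable (fun x => (K ε x)⁻¹ * (σ x * g x)) μ :=
      (aux_int_mul hσ hg).bdd_mul (hKinvmeas ε hε) (hKinvnorm ε hε)
    have e2 : Integrable (fun x => (K ε x)⁻¹ * (trunc n (σ x) * g x)) μ :=
      (aux_int_mul (hsnmem n) hg).bdd_mul (hKinvmeas ε hε) (hKinvnorm ε hε)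
    have heq : B ε - (∫ x, (K ε x)⁻¹ * (trunc n (σ x) * g x) ∂μ)
        = ∫ x, (K ε x)⁻¹ * ((σ x - trunc n (σ x)) * g x) ∂μ := by
      rw [hB, ← integral_sub e1 e2]; congr 1; funext x; ring
    rw [heq]
    exact hbound _ _ _ (hKinvmeas ε hε) (hKinvnorm ε hε) (hdiffmem n) hg
  have hBtends : Tendsto B (nhdsWithin (0:ℝ) (Ioi 0))
      (nhds (∫ x, P x * (σ x * g x) ∂μ)) := by
    rw [Metric.tendsto_nhds]
    intro η hη
    have h3 : Tendsto (fun n => K₀⁻¹ * (d' n * G)) atTop (nhds 0) := by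
      have := (hd'0.mul_const G).const_mul K₀⁻¹
      simpa using this
    have hev : ∀ᶠ n in atTop, K₀⁻¹ * (d' n * G) < η/3 :=
      (tendsto_order.1 h3).2 (η/3) (by linarith)
    obtain ⟨n, hn⟩ := hev.exists
    have h4 := (Metric.tendsto_nhds.1 (h1 n)) (η/3) (by linarith)
    filter_upwards [h4, eventually_of_mem hl01 (fun ε hε => hε)] with ε hε1 hε2
    have b1 := hBdiff n ε hε2
    have b2 := hLdiff n
    rw [Real.dist_eq] at hε1 ⊢
    have t1 := abs_sub_le (B ε) (∫ x, (K ε x)⁻¹ * (trunc n (σ x) * g x) ∂μ)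
      (∫ x, P x * (σ x * g x) ∂μ)
    have t2 := abs_sub_le (∫ x, (K ε x)⁻¹ * (trunc n (σ x) * g x) ∂μ)
      (∫ x, P x * (trunc n (σ x) * g x) ∂μ) (∫ x, P x * (σ x * g x) ∂μ)
    have b2' : |(∫ x, P x * (trunc n (σ x) * g x) ∂μ) - ∫ x, P x * (σ x * g x) ∂μ|
        ≤ K₀⁻¹ * (d' n * G) := by
      rw [abs_sub_comm]; exact b2
    linarith
  have hfinal := hAtends.add hBtends
  rw [zero_add] at hfinal
  have hassoc : (∫ x, P x * σ x * g x ∂μ) = ∫ x, P x * (σ x * g x) ∂μ := by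
    congr 1; funext x; ring
  rw [hassoc]
  exact Tendsto.congr' (hsplit.mono fun ε h => h.symm) hfinal
end

section
/- Let I = [a,b] ⊂ ℝ with a < b, let γ > 0, ε ∈ (0,1), c > 0. Let K : I → ℝ and H : I → ℝ be measurable with 0 < K_0 ≤ K(x) ≤ K_1 and 0 ≤ H(x) ≤ H_1, let k² : I → ℝ be measurable, and define the strip θ^ε = {(x,y) ∈ ℝ² : x ∈ I, ε(k²(x) − ε^γ H(x)) < y < ε k²(x)}. Let f ∈ L²(θ^ε) satisfy (1/ε^{γ+1}) ∫_{θ^ε} f² dx dy ≤ c, and define f̂ : I → ℝ by f̂(x) = (1/(ε K(x))) ∫_{ε(k²(x) − ε^γ H(x))}^{ε k²(x)} f(x,y) dy. Suppose ŵ : I → ℝ is continuously differentiable and satisfies the energy identity ∫_I K(x) ( ŵ'(x)² + ŵ(x)² ) dx = (1/ε^γ) ∫_I K(x) f̂(x) ŵ(x) dx. Then ( ∫_I ( ŵ'(x)² + ŵ(x)² ) dx )^{1/2} ≤ (c H_1)^{1/2} / K_0; in particular the bound is independent of ε. -/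
open MeasureTheory Filter Set

lemma fubini_regionBetween {al be : ℝ → ℝ} {s : Set ℝ} (hal : Measurable al)
    (hbe : Measurable be) (hs : MeasurableSet s) (G : ℝ × ℝ → ℝ)
    (hG : IntegrableOn G (regionBetween al be s)) :
    ∫ p in regionBetween al be s, G p =
      ∫ x in s, ∫ y in Ioo (al x) (be x), G (x, y) := by
  have hm : MeasurableSet (regionBetween al be s) :=
    measurableSet_regionBetween hal hbe hs
  rw [← integral_indicator hm]
  have hint : Integrable ((regionBetween al be s).indicator G)
      (volume.prod volume) := by
    rw [← Measure.volume_eq_prod ℝ ℝ]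
    exact (integrable_indicator_iff hm).2 hG
  rw [Measure.volume_eq_prod ℝ ℝ,
    integral_prod _ hint, ← integral_indicator hs]
  congr 1
  funext x
  by_cases hx : x ∈ s
  · rw [indicator_of_mem hx, ← integral_indicator measurableSet_Ioo]
    congr 1
    funext y
    by_cases hy : y ∈ Ioo (al x) (be x)
    · rw [indicator_of_mem hy,
        indicator_of_mem (show (x, y) ∈ regionBetween al be s from ⟨hx, hy⟩)]
    · rw [indicator_of_notMem hy,
        indicator_of_notMem (fun h => hy h.2)]
  · rw [indicator_of_notMem hx]
    have h0 : (fun y => (regionBetween al be s).indicator G (x, y)) = fun _ => 0 := by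
      funext y; exact indicator_of_notMem (fun h => hx h.1) _
    rw [h0, integral_zero]

/-- Uniform a priori `H¹`-bound for the one-dimensional reduced problem with a
concentrated right-hand side. -/
theorem one_dimensional_reduced_a_priori_bound
    (a b : ℝ) (hab : a < b) (γ ε c : ℝ) (hγ : 0 < γ) (hε : ε ∈ Set.Ioo (0 : ℝ) 1)
    (hc : 0 < c)
    (K H k₂ : ℝ → ℝ) (hKmeas : Measurable K) (hHmeas : Measurable H)
    (hk₂meas : Measurable k₂)
    (K₀ K₁ H₁ : ℝ) (hK₀ : 0 < K₀)
    (hKbd : ∀ x ∈ Set.Icc a b, K₀ ≤ K x ∧ K x ≤ K₁)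
    (hHbd : ∀ x ∈ Set.Icc a b, 0 ≤ H x ∧ H x ≤ H₁)
    (θ : Set (ℝ × ℝ))
    (hθ : θ = {p : ℝ × ℝ | p.1 ∈ Set.Icc a b ∧
      ε * (k₂ p.1 - ε ^ γ * H p.1) < p.2 ∧ p.2 < ε * k₂ p.1})
    (f : ℝ × ℝ → ℝ) (hf : MemLp f 2 (volume.restrict θ))
    (hfbd : (1 / ε ^ (γ + 1)) * ∫ p in θ, (f p) ^ 2 ≤ c)
    (fhat : ℝ → ℝ)
    (hfhat : ∀ x, fhat x = (1 / (ε * K x)) *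
      ∫ y in (ε * (k₂ x - ε ^ γ * H x))..(ε * k₂ x), f (x, y))
    (w w' : ℝ → ℝ)
    (hderiv : ∀ x ∈ Set.Icc a b, HasDerivAt w (w' x) x)
    (hw'cont : ContinuousOn w' (Set.Icc a b))
    (henergy : ∫ x in Set.Icc a b, K x * ((w' x) ^ 2 + (w x) ^ 2) =
      (1 / ε ^ γ) * ∫ x in Set.Icc a b, K x * fhat x * w x) :
    Real.sqrt (∫ x in Set.Icc a b, ((w' x) ^ 2 + (w x) ^ 2)) ≤
      Real.sqrt (c * H₁) / K₀ := by
  obtain ⟨hε0, hε1⟩ := hε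
  have hεne : ε ≠ 0 := hε0.ne'
  set I := Set.Icc a b with hI
  set al : ℝ → ℝ := fun x => ε * (k₂ x - ε ^ γ * H x) with hal
  set be : ℝ → ℝ := fun x => ε * k₂ x with hbe
  have hθR : θ = regionBetween al be I := by
    rw [hθ]; rfl
  have halm : Measurable al :=
    measurable_const.mul (hk₂meas.sub (measurable_const.mul hHmeas))
  have hbem : Measurable be := measurable_const.mul hk₂meas
  have hIm : MeasurableSet I := measurableSet_Icc
  have hθm : MeasurableSet θ := by
    rw [hθR]; exact measurableSet_regionBetween halm hbem hIm
  set P : ℝ := ε ^ (γ + 1) with hPdef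
  have hP : 0 < P := Real.rpow_pos_of_pos hε0 _
  have hPe : P = ε * ε ^ γ := by
    rw [hPdef, Real.rpow_add hε0, Real.rpow_one]; ring
  have hεγ : (0:ℝ) < ε ^ γ := Real.rpow_pos_of_pos hε0 _
  have hba : ∀ x ∈ I, be x - al x = P * H x := by
    intro x _; rw [hPe]; simp only [hal, hbe]; ring
  have hle : ∀ x ∈ I, al x ≤ be x := by
    intro x hx
    have h1 := (hHbd x hx).1
    have h2 := hba x hx
    nlinarith [mul_nonneg hP.le h1]
  have haI : a ∈ I := left_mem_Icc.2 hab.le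
  have hH₁ : 0 ≤ H₁ := le_trans (hHbd a haI).1 (hHbd a haI).2
  have hwcont : ContinuousOn w I := fun x hx =>
    (hderiv x hx).continuousAt.continuousWithinAt
  -- continuous bounded extension of w
  set W : ℝ → ℝ := fun x => w (min b (max a x)) with hW
  have hclamp : ∀ x, min b (max a x) ∈ I := fun x =>
    ⟨le_min hab.le (le_max_left _ _), min_le_left _ _⟩
  have hWcont : Continuous W :=
    hwcont.comp_continuous
      (continuous_const.min (continuous_const.max continuous_id)) hclamp
  have hWeq : ∀ x ∈ I, W x = w x := by
    intro x hx
    simp only [hW]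
    rw [max_eq_right hx.1, min_eq_right hx.2]
  obtain ⟨x₀, hx₀I, hx₀⟩ := isCompact_Icc.exists_isMaxOn (nonempty_Icc.2 hab.le)
    (continuous_abs.comp_continuousOn hwcont)
  set M := |w x₀| with hM
  have hWbd : ∀ x, ‖W x‖ ≤ M := fun x => by
    rw [Real.norm_eq_abs]
    exact hx₀ (hclamp x)
  -- θ has finite measure
  have hθfin : volume θ < ⊤ := by
    rw [hθR, Measure.volume_eq_prod ℝ ℝ,
      volume_regionBetween_eq_lintegral' halm hbem hIm]
    calc ∫⁻ x in I, ENNReal.ofReal ((be - al) x)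
        ≤ ∫⁻ _ in I, ENNReal.ofReal (P * H₁) := by
          refine setLIntegral_mono measurable_const fun x hx => ?_
          refine ENNReal.ofReal_le_ofReal ?_
          rw [Pi.sub_apply, hba x hx]
          exact mul_le_mul_of_nonneg_left (hHbd x hx).2 hP.le
      _ = ENNReal.ofReal (P * H₁) * volume I := by
          rw [setLIntegral_const]
      _ < ⊤ := by
          refine ENNReal.mul_lt_top ?_ ?_
          · exact ENNReal.ofReal_lt_top
          · rw [hI, Real.volume_Icc]; exact ENNReal.ofReal_lt_top
  haveI hfinθ : IsFiniteMeasure (volume.restrict θ) :=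
    ⟨by rwa [Measure.restrict_apply_univ]⟩
  have hWfstm : AEStronglyMeasurable (fun p : ℝ × ℝ => W p.1) (volume.restrict θ) :=
    (hWcont.comp continuous_fst).aestronglyMeasurable
  have hWm : MemLp (fun p : ℝ × ℝ => W p.1) 2 (volume.restrict θ) :=
    MemLp.of_bound hWfstm M (Eventually.of_forall fun p => hWbd p.1)
  have hfint : Integrable f (volume.restrict θ) := hf.integrable one_le_two
  have hfWint : IntegrableOn (fun p : ℝ × ℝ => W p.1 * f p) θ :=
    hfint.bdd_mul hWfstm (Eventually.of_forall fun p => hWbd p.1)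
  have hW2int : IntegrableOn (fun p : ℝ × ℝ => (W p.1) ^ 2) θ := hWm.integrable_sq
  -- 1D integrability
  have hvcont : ContinuousOn (fun x => w' x ^ 2 + w x ^ 2) I :=
    (hw'cont.pow 2).add (hwcont.pow 2)
  have hvint : IntegrableOn (fun x => w' x ^ 2 + w x ^ 2) I :=
    hvcont.integrableOn_compact isCompact_Icc
  have hvnn : ∀ x, 0 ≤ w' x ^ 2 + w x ^ 2 := fun x => by positivity
  have hKvint : IntegrableOn (fun x => K x * (w' x ^ 2 + w x ^ 2)) I := by
    refine Integrable.bdd_mul (c := K₁) hvint hKmeas.aestronglyMeasurable ?_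
    refine (ae_restrict_iff' hIm).2 (Eventually.of_forall fun x hx => ?_)
    rw [Real.norm_eq_abs, abs_of_pos (lt_of_lt_of_le hK₀ (hKbd x hx).1)]
    exact (hKbd x hx).2
  set E : ℝ := ∫ x in I, (w' x ^ 2 + w x ^ 2) with hE
  have hE0 : 0 ≤ E := setIntegral_nonneg hIm fun x _ => hvnn x
  have step1 : K₀ * E ≤ ∫ x in I, K x * (w' x ^ 2 + w x ^ 2) := by
    have h := setIntegral_mono_on (μ := volume) (s := I)
      (f := fun x => K₀ * (w' x ^ 2 + w x ^ 2))
      (g := fun x => K x * (w' x ^ 2 + w x ^ 2))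
      (hvint.const_mul K₀) hKvint hIm
      (fun x hx => mul_le_mul_of_nonneg_right (hKbd x hx).1 (hvnn x))
    rwa [integral_const_mul] at h
  set T : ℝ := ∫ p in θ, W p.1 * f p with hT
  have hfW' : IntegrableOn (fun p : ℝ × ℝ => W p.1 * f p) (regionBetween al be I) := by
    rwa [← hθR]
  have hW2' : IntegrableOn (fun p : ℝ × ℝ => (W p.1) ^ 2) (regionBetween al be I) := by
    rwa [← hθR]
  have hRf : ∫ x in I, K x * fhat x * w x = (1 / ε) * T := by
    have hTeq : T = ∫ x in I, W x * ∫ y in Ioo (al x) (be x), f (x, y) := by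
      rw [hT, hθR, fubini_regionBetween halm hbem hIm _ hfW']
      refine setIntegral_congr_fun hIm fun x _ => ?_
      exact integral_const_mul (W x) (fun y => f (x, y))
    rw [hTeq, ← integral_const_mul (1/ε)
      (fun x => W x * ∫ y in Ioo (al x) (be x), f (x, y))]
    refine setIntegral_congr_fun hIm fun x hx => ?_
    have hK0x : K x ≠ 0 := (lt_of_lt_of_le hK₀ (hKbd x hx).1).ne'
    rw [hfhat x, hWeq x hx]
    have hintv : (∫ y in (ε * (k₂ x - ε ^ γ * H x))..(ε * k₂ x), f (x, y)) =
        ∫ y in Ioo (al x) (be x), f (x, y) := by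
      rw [intervalIntegral.integral_of_le (hle x hx), integral_Ioc_eq_integral_Ioo]
    rw [hintv]
    field_simp
  have hen2 : ∫ x in I, K x * (w' x ^ 2 + w x ^ 2) = (1 / P) * T := by
    rw [henergy, hRf, hPe]
    ring
  set Sf : ℝ := ∫ p in θ, (f p) ^ 2 with hSf
  set SW : ℝ := ∫ p in θ, (W p.1) ^ 2 with hSW
  have hSf0 : 0 ≤ Sf := integral_nonneg fun p => sq_nonneg _
  have hSW0 : 0 ≤ SW := integral_nonneg fun p => sq_nonneg _
  have hrpow2 : ∀ r : ℝ, |r| ^ (2:ℝ) = r ^ 2 := fun r => by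
    rw [show (2:ℝ) = ((2:ℕ):ℝ) by norm_num, Real.rpow_natCast, sq_abs]
  have hCS : T ≤ Real.sqrt SW * Real.sqrt Sf := by
    have h2 : Real.HolderConjugate 2 2 := Real.HolderConjugate.two_two
    have hofr : ENNReal.ofReal (2:ℝ) = 2 := by
      rw [ENNReal.ofReal_ofNat]
    have hWa : MemLp (fun p : ℝ × ℝ => |W p.1|) (ENNReal.ofReal 2) (volume.restrict θ) := by
      rw [hofr]; simpa [Real.norm_eq_abs] using hWm.norm
    have hfa : MemLp (fun p : ℝ × ℝ => |f p|) (ENNReal.ofReal 2) (volume.restrict θ) := by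
      rw [hofr]; simpa [Real.norm_eq_abs] using hf.norm
    have hH := integral_mul_le_Lp_mul_Lq_of_nonneg h2
      (Eventually.of_forall fun p => abs_nonneg (W p.1))
      (Eventually.of_forall fun p => abs_nonneg (f p)) hWa hfa
    calc T ≤ ∫ p in θ, |W p.1| * |f p| := by
          rw [hT]
          refine le_trans (le_abs_self _) ?_
          simpa [Real.norm_eq_abs, abs_mul] using
            norm_integral_le_integral_norm (μ := volume.restrict θ)
              (fun p : ℝ × ℝ => W p.1 * f p)
      _ ≤ (∫ p in θ, |W p.1| ^ (2:ℝ)) ^ (1/(2:ℝ)) *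
            (∫ p in θ, |f p| ^ (2:ℝ)) ^ (1/(2:ℝ)) := hH
      _ = Real.sqrt SW * Real.sqrt Sf := by
          simp only [hrpow2]
          rw [← hSW, ← hSf, ← Real.sqrt_eq_rpow, ← Real.sqrt_eq_rpow]
  have hSfle : Sf ≤ c * P := by
    have h := mul_le_mul_of_nonneg_left hfbd hP.le
    rw [show P * (1 / P * Sf) = Sf from by field_simp] at h
    linarith
  have hSWeq : SW = ∫ x in I, (P * H x) * (w x) ^ 2 := by
    rw [hSW, hθR, fubini_regionBetween halm hbem hIm _ hW2']
    refine setIntegral_congr_fun hIm fun x hx => ?_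
    show (∫ _ in Ioo (al x) (be x), W x ^ 2) = P * H x * w x ^ 2
    rw [setIntegral_const, Real.volume_real_Ioo_of_le (hle x hx), smul_eq_mul,
      hba x hx, hWeq x hx]
  have hPHint : IntegrableOn (fun x => (P * H x) * (w x) ^ 2) I := by
    refine Integrable.bdd_mul (c := P * H₁)
      ((hwcont.pow 2).integrableOn_compact isCompact_Icc)
      (measurable_const.mul hHmeas).aestronglyMeasurable ?_
    refine (ae_restrict_iff' hIm).2 (Eventually.of_forall fun x hx => ?_)
    rw [Real.norm_eq_abs, abs_of_nonneg (mul_nonneg hP.le (hHbd x hx).1)]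
    exact mul_le_mul_of_nonneg_left (hHbd x hx).2 hP.le
  have hSWle : SW ≤ P * H₁ * E := by
    rw [hSWeq]
    have hmono : ∫ x in I, (P * H x) * (w x) ^ 2 ≤
        ∫ x in I, (P * H₁) * (w' x ^ 2 + w x ^ 2) := by
      refine setIntegral_mono_on hPHint (hvint.const_mul _) hIm fun x hx => ?_
      have h1 : P * H x * w x ^ 2 ≤ P * H₁ * w x ^ 2 :=
        mul_le_mul_of_nonneg_right
          (mul_le_mul_of_nonneg_left (hHbd x hx).2 hP.le) (sq_nonneg _)
      have h2 : P * H₁ * w x ^ 2 ≤ P * H₁ * (w' x ^ 2 + w x ^ 2) :=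
        mul_le_mul_of_nonneg_left (by nlinarith [sq_nonneg (w' x)])
          (mul_nonneg hP.le hH₁)
      linarith
    rw [integral_const_mul] at hmono
    calc ∫ x in I, (P * H x) * (w x) ^ 2 ≤ (P * H₁) * E := hmono
      _ = P * H₁ * E := by ring
  have hss : Real.sqrt P * Real.sqrt P = P := Real.mul_self_sqrt hP.le
  have key : K₀ * E ≤ Real.sqrt c * Real.sqrt H₁ * Real.sqrt E := by
    have h1 : K₀ * E ≤ (1/P) * T := by rw [← hen2]; exact step1
    have h3 : Real.sqrt SW ≤ Real.sqrt (P * H₁ * E) := Real.sqrt_le_sqrt hSWle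
    have h4 : Real.sqrt Sf ≤ Real.sqrt (c * P) := Real.sqrt_le_sqrt hSfle
    have h5 : (1/P) * T ≤ (1/P) * (Real.sqrt (P * H₁ * E) * Real.sqrt (c * P)) := by
      refine mul_le_mul_of_nonneg_left ?_ (by positivity)
      exact le_trans hCS
        (mul_le_mul h3 h4 (Real.sqrt_nonneg _) (Real.sqrt_nonneg _))
    have h6 : (1/P) * (Real.sqrt (P * H₁ * E) * Real.sqrt (c * P)) =
        Real.sqrt c * Real.sqrt H₁ * Real.sqrt E := by
      rw [Real.sqrt_mul (mul_nonneg hP.le hH₁), Real.sqrt_mul hP.le,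
        Real.sqrt_mul hc.le]
      field_simp
      linear_combination Real.sqrt H₁ * Real.sqrt E * hss
    rw [h6] at h5
    linarith
  rw [Real.sqrt_mul hc.le, le_div_iff₀ hK₀]
  rcases eq_or_lt_of_le (Real.sqrt_nonneg E) with h0 | h0
  · rw [← h0, zero_mul]; positivity
  · have h7 : (Real.sqrt E * K₀) * Real.sqrt E ≤
        (Real.sqrt c * Real.sqrt H₁) * Real.sqrt E := by
      calc (Real.sqrt E * K₀) * Real.sqrt E
          = K₀ * (Real.sqrt E * Real.sqrt E) := by ring
        _ = K₀ * E := by rw [Real.mul_self_sqrt hE0]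
        _ ≤ _ := key
    exact le_of_mul_le_mul_right h7 h0
end

section
/- Let I = [a,b] ⊂ ℝ with a < b, let γ > 0, ε ∈ (0,1), c > 0, let K : I → ℝ be continuous with 0 < K_0 ≤ K(x) ≤ K_1, and let H : I → ℝ be measurable with 0 ≤ H(x) ≤ H_1 and ε^γ H_1 ≤ K_0. Define R_a^ε = {(x,y) ∈ ℝ² : x ∈ I, 0 < y < ε K(x)} and θ₁^ε = {(x,y) ∈ ℝ² : x ∈ I, ε(K(x) − ε^γ H(x)) < y < ε K(x)}. Let f ∈ L²(θ₁^ε) satisfy (1/ε^{γ+1}) ∫_{θ₁^ε} f² dx dy ≤ c, and suppose v is continuously differentiable on an open set containing the closure of R_a^ε and satisfies the energy identity ∫_{R_a^ε} ( |∇v|² + v² ) dx dy = (1/ε^γ) ∫_{θ₁^ε} f v dx dy. Then (1/ε) ∫_{R_a^ε} ( |∇v|² + v² ) dx dy ≤ c · max(2H_1/K_0, H_1 K_1); in particular the bound is independent of ε. -/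
open MeasureTheory Filter Set

section helpers

lemma aux_amgm {t : ℝ} (ht : 0 < t) (A B : ℝ) : 2*A*B ≤ t*A^2 + B^2/t := by
  rw [← sub_nonneg]
  have h : t*A^2 + B^2/t - 2*A*B = (t*A - B)^2 / t := by field_simp; ring
  rw [h]; positivity

lemma slice_bound (L d t : ℝ) (hL : 0 < L) (hd : 0 ≤ d) (hdL : d ≤ L) (ht : 0 < t)
    (w w' : ℝ → ℝ) (hw : ∀ y ∈ Icc (0:ℝ) L, HasDerivAt w (w' y) y)
    (hw' : ContinuousOn w' (Icc 0 L)) :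
    ∫ y in Ioo (L - d) L, (w y)^2 ≤
      d * ((1/L + t) * (∫ y in Ioo (0:ℝ) L, (w y)^2) +
        (1/t) * ∫ y in Ioo (0:ℝ) L, (w' y)^2) := by
  have hwc : ContinuousOn w (Icc 0 L) :=
    fun y hy => (hw y hy).continuousAt.continuousWithinAt
  have hw2c : ContinuousOn (fun y => w y ^ 2) (Icc 0 L) := hwc.pow 2
  have hw'2c : ContinuousOn (fun y => w' y ^ 2) (Icc 0 L) := hw'.pow 2
  set Iw := ∫ y in Ioo (0:ℝ) L, (w y)^2 with hIwdef
  set Iw' := ∫ y in Ioo (0:ℝ) L, (w' y)^2 with hIw'def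
  have hIw : IntegrableOn (fun y => w y ^ 2) (Icc 0 L) := hw2c.integrableOn_Icc
  have hIw' : IntegrableOn (fun y => w' y ^ 2) (Icc 0 L) := hw'2c.integrableOn_Icc
  -- min point
  obtain ⟨s₀, hs₀, hmin⟩ :=
    isCompact_Icc.exists_isMinOn (⟨0, left_mem_Icc.2 hL.le⟩ : (Icc (0:ℝ) L).Nonempty) hw2c
  have h1 : L * w s₀ ^ 2 ≤ Iw := by
    have hconst : (∫ _y in Ioo (0:ℝ) L, w s₀ ^ 2) = L * w s₀ ^ 2 := by
      rw [setIntegral_const, Real.volume_real_Ioo_of_le (by linarith), smul_eq_mul,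
        sub_zero]
    have hmono : (∫ _y in Ioo (0:ℝ) L, w s₀ ^ 2) ≤ Iw := by
      refine setIntegral_mono_on (integrableOn_const ?_)
        (hIw.mono_set Ioo_subset_Icc_self) measurableSet_Ioo
        (fun y hy => hmin (Ioo_subset_Icc_self hy))
      rw [Real.volume_Ioo]; exact ENNReal.ofReal_ne_top
    linarith [hconst ▸ hmono]
  set G := ∫ u in (0:ℝ)..L, (t * w u ^ 2 + w' u ^ 2 / t) with hGdef
  have hii : ∀ p q : ℝ, p ∈ Icc (0:ℝ) L → q ∈ Icc (0:ℝ) L →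
      IntervalIntegrable (fun u => t * w u ^ 2 + w' u ^ 2 / t) volume p q := by
    intro p q hp hq
    exact (((continuousOn_const.mul hw2c).add (hw'2c.div_const t)).mono
      (uIcc_subset_Icc hp hq)).intervalIntegrable
  have hsub : ∀ p q : ℝ, 0 ≤ p → p ≤ q → q ≤ L →
      (∫ u in p..q, (t * w u ^ 2 + w' u ^ 2 / t)) ≤ G := by
    intro p q h0p hpq hqL
    have hpI : p ∈ Icc (0:ℝ) L := ⟨h0p, hpq.trans hqL⟩
    have hqI : q ∈ Icc (0:ℝ) L := ⟨h0p.trans hpq, hqL⟩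
    have e1 := intervalIntegral.integral_add_adjacent_intervals
      (hii 0 p (left_mem_Icc.2 hL.le) hpI) (hii p q hpI hqI)
    have e2 := intervalIntegral.integral_add_adjacent_intervals
      (hii 0 q (left_mem_Icc.2 hL.le) hqI) (hii q L hqI (right_mem_Icc.2 hL.le))
    have n1 : (0:ℝ) ≤ ∫ u in (0:ℝ)..p, (t * w u ^ 2 + w' u ^ 2 / t) :=
      intervalIntegral.integral_nonneg h0p (fun u _ => by positivity)
    have n2 : (0:ℝ) ≤ ∫ u in q..L, (t * w u ^ 2 + w' u ^ 2 / t) :=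
      intervalIntegral.integral_nonneg hqL (fun u _ => by positivity)
    have : G = (∫ u in (0:ℝ)..p, (t * w u ^ 2 + w' u ^ 2 / t)) +
        (∫ u in p..q, (t * w u ^ 2 + w' u ^ 2 / t)) +
        (∫ u in q..L, (t * w u ^ 2 + w' u ^ 2 / t)) := by
      rw [e1, e2]
    linarith
  have hkey : ∀ y ∈ Icc (0:ℝ) L, w y ^ 2 ≤ w s₀ ^ 2 + G := by
    intro y hy
    have hsub' : uIcc s₀ y ⊆ Icc 0 L := uIcc_subset_Icc hs₀ hy
    have hd2 : ∀ u ∈ uIcc s₀ y, HasDerivAt (fun z => w z ^ 2) (2 * w u * w' u) u := by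
      intro u hu
      have h := (hw u (hsub' hu)).pow 2
      exact h.congr_deriv (by norm_num)
    have hcont2 : ContinuousOn (fun u => 2 * w u * w' u) (uIcc s₀ y) :=
      ((continuousOn_const.mul (hwc.mono hsub')).mul (hw'.mono hsub'))
    have hint : IntervalIntegrable (fun u => 2 * w u * w' u) volume s₀ y :=
      hcont2.intervalIntegrable
    have hftc := intervalIntegral.integral_eq_sub_of_hasDerivAt hd2 hint
    rcases le_total s₀ y with hc | hc
    · have hmono : (∫ u in s₀..y, 2 * w u * w' u) ≤
          ∫ u in s₀..y, (t * w u ^ 2 + w' u ^ 2 / t) := by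
        refine intervalIntegral.integral_mono_on hc hint (hii s₀ y hs₀ hy)
          (fun u _ => aux_amgm ht _ _)
      have := hsub s₀ y hs₀.1 hc hy.2
      linarith [hftc ▸ (hmono.trans this)]
    · have hftc' : (∫ u in y..s₀, -(2 * w u * w' u)) = w y ^ 2 - w s₀ ^ 2 := by
        rw [intervalIntegral.integral_neg, ← intervalIntegral.integral_symm, hftc]
      have hmono : (∫ u in y..s₀, -(2 * w u * w' u)) ≤
          ∫ u in y..s₀, (t * w u ^ 2 + w' u ^ 2 / t) := by
        refine intervalIntegral.integral_mono_on hc hint.symm.neg (hii y s₀ hy hs₀)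
          (fun u _ => ?_)
        have h := aux_amgm ht (w u) (-(w' u))
        rw [neg_sq] at h
        nlinarith [h]
      have := hsub y s₀ hy.1 hc hs₀.2
      linarith [hftc' ▸ (hmono.trans this)]
  have hGsplit : G = t * Iw + (1/t) * Iw' := by
    have i1 : IntervalIntegrable (fun u => t * w u ^ 2) volume 0 L :=
      ((continuousOn_const.mul hw2c).mono (by rw [uIcc_of_le hL.le])).intervalIntegrable
    have i2 : IntervalIntegrable (fun u => w' u ^ 2 / t) volume 0 L :=
      ((hw'2c.div_const t).mono (by rw [uIcc_of_le hL.le])).intervalIntegrable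
    rw [hGdef, intervalIntegral.integral_add i1 i2, intervalIntegral.integral_const_mul,
      intervalIntegral.integral_div]
    rw [intervalIntegral.integral_of_le hL.le, intervalIntegral.integral_of_le hL.le,
      integral_Ioc_eq_integral_Ioo, integral_Ioc_eq_integral_Ioo]
    rw [← hIwdef, ← hIw'def]; ring
  have hws₀ : w s₀ ^ 2 ≤ (1/L) * Iw := by
    rw [← sub_nonneg]
    have e : (1/L) * Iw - w s₀ ^ 2 = (Iw - L * w s₀ ^ 2) / L := by field_simp
    have h2 : (0:ℝ) ≤ Iw - L * w s₀ ^ 2 := by linarith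
    rw [e]; positivity
  -- integrate over the strip
  have hstrip : (∫ y in Ioo (L - d) L, (w y)^2) ≤ d * (w s₀ ^ 2 + G) := by
    have hsubset : Ioo (L - d) L ⊆ Icc (0:ℝ) L :=
      fun y hy => ⟨le_trans (by linarith) hy.1.le, hy.2.le⟩
    have hconst : (∫ _y in Ioo (L - d) L, (w s₀ ^ 2 + G)) = d * (w s₀ ^ 2 + G) := by
      rw [setIntegral_const, Real.volume_real_Ioo_of_le (by linarith), smul_eq_mul]
      ring_nf
    rw [← hconst]
    refine setIntegral_mono_on (hIw.mono_set hsubset)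
      (integrableOn_const (by rw [Real.volume_Ioo]; exact ENNReal.ofReal_ne_top))
      measurableSet_Ioo (fun y hy => hkey y (hsubset hy))
  calc (∫ y in Ioo (L - d) L, (w y)^2) ≤ d * (w s₀ ^ 2 + G) := hstrip
    _ ≤ d * ((1/L) * Iw + (t * Iw + (1/t) * Iw')) := by
        apply mul_le_mul_of_nonneg_left _ hd
        rw [← hGsplit]; linarith
    _ = d * ((1/L + t) * Iw + (1/t) * Iw') := by ring


lemma aux_const {ε γ H₁ K₀ K₁ Hx Kx A B : ℝ} (hε0 : 0 < ε) (hε1 : ε ≤ 1)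
    (hH0 : 0 ≤ Hx) (hH1 : Hx ≤ H₁) (hK₀ : 0 < K₀) (hKx : K₀ ≤ Kx) (hK₁ : Kx ≤ K₁)
    (hA : 0 ≤ A) (hB : 0 ≤ B) :
    (ε * (ε ^ γ * Hx)) * ((1/(ε * Kx) + 1/K₀) * A + (1/(1/K₀)) * B) ≤
      ε ^ γ * ((2 * H₁ / K₀) * A + (H₁ * K₁) * B) := by
  have hεγ : 0 < ε ^ γ := Real.rpow_pos_of_pos hε0 γ
  have hKx0 : 0 < Kx := hK₀.trans_le hKx
  have hH₁ : 0 ≤ H₁ := hH0.trans hH1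
  have h1 : (ε * (ε ^ γ * Hx)) * (1/(ε * Kx) + 1/K₀) ≤ ε ^ γ * (2 * H₁ / K₀) := by
    have e1 : (ε * (ε ^ γ * Hx)) * (1/(ε * Kx) + 1/K₀)
        = ε ^ γ * (Hx / Kx) + ε * (ε ^ γ * (Hx / K₀)) := by
      field_simp
    have b1 : Hx / Kx ≤ H₁ / K₀ := div_le_div₀ hH₁ hH1 hK₀ hKx
    have b2 : ε * (ε ^ γ * (Hx / K₀)) ≤ ε ^ γ * (H₁ / K₀) := by
      have b2a : ε * (ε ^ γ * (Hx / K₀)) ≤ ε ^ γ * (Hx / K₀) :=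
        mul_le_of_le_one_left (by positivity) hε1
      have b2b : ε ^ γ * (Hx / K₀) ≤ ε ^ γ * (H₁ / K₀) :=
        mul_le_mul_of_nonneg_left ((div_le_div_iff_of_pos_right hK₀).mpr hH1) hεγ.le
      linarith
    have b3 : ε ^ γ * (Hx / Kx) ≤ ε ^ γ * (H₁ / K₀) := mul_le_mul_of_nonneg_left b1 hεγ.le
    calc (ε * (ε ^ γ * Hx)) * (1/(ε * Kx) + 1/K₀)
        = ε ^ γ * (Hx / Kx) + ε * (ε ^ γ * (Hx / K₀)) := e1
      _ ≤ ε ^ γ * (H₁ / K₀) + ε ^ γ * (H₁ / K₀) := add_le_add b3 b2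
      _ = ε ^ γ * (2 * H₁ / K₀) := by ring
  have h2 : (ε * (ε ^ γ * Hx)) * (1/(1/K₀)) ≤ ε ^ γ * (H₁ * K₁) := by
    rw [one_div_one_div]
    have hεH : ε * Hx ≤ H₁ := le_trans (mul_le_of_le_one_left hH0 hε1) hH1
    have : (ε * Hx) * K₀ ≤ H₁ * K₁ :=
      mul_le_mul hεH (hKx.trans hK₁) hK₀.le hH₁
    calc (ε * (ε ^ γ * Hx)) * K₀ = ε ^ γ * ((ε * Hx) * K₀) := by ring
      _ ≤ ε ^ γ * (H₁ * K₁) := mul_le_mul_of_nonneg_left this hεγ.le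
  calc (ε * (ε ^ γ * Hx)) * ((1/(ε * Kx) + 1/K₀) * A + (1/(1/K₀)) * B)
      = ((ε * (ε ^ γ * Hx)) * (1/(ε * Kx) + 1/K₀)) * A
        + ((ε * (ε ^ γ * Hx)) * (1/(1/K₀))) * B := by ring
    _ ≤ (ε ^ γ * (2 * H₁ / K₀)) * A + (ε ^ γ * (H₁ * K₁)) * B :=
        add_le_add (mul_le_mul_of_nonneg_right h1 hA) (mul_le_mul_of_nonneg_right h2 hB)
    _ = ε ^ γ * ((2 * H₁ / K₀) * A + (H₁ * K₁) * B) := by ring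

lemma aux_cancel {T X : ℝ} (hT : 0 < T) (h : T ^ 2 ≤ X * T) : T ≤ X := by
  nlinarith

lemma region_measurable {s : Set ℝ} (hs : MeasurableSet s) {l u : ℝ → ℝ}
    (hl : Measurable l) (hu : Measurable u) :
    MeasurableSet {p : ℝ × ℝ | p.1 ∈ s ∧ l p.1 < p.2 ∧ p.2 < u p.1} := by
  have h1 : MeasurableSet {p : ℝ × ℝ | p.1 ∈ s} := measurable_fst hs
  have h2 : MeasurableSet {p : ℝ × ℝ | l p.1 < p.2} :=
    measurableSet_lt (hl.comp measurable_fst) measurable_snd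
  have h3 : MeasurableSet {p : ℝ × ℝ | p.2 < u p.1} :=
    measurableSet_lt measurable_snd (hu.comp measurable_fst)
  exact (h1.inter (h2.inter h3))

lemma fubini_region {s : Set ℝ} (hs : MeasurableSet s) {l u : ℝ → ℝ}
    (hl : Measurable l) (hu : Measurable u) (g : ℝ × ℝ → ℝ) (S : Set (ℝ × ℝ))
    (hSdef : S = {p : ℝ × ℝ | p.1 ∈ s ∧ l p.1 < p.2 ∧ p.2 < u p.1})
    (hg : IntegrableOn g S) :
    (∫ p in S, g p) = (∫ x in s, ∫ y in Ioo (l x) (u x), g (x, y)) ∧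
    IntegrableOn (fun x => ∫ y in Ioo (l x) (u x), g (x, y)) s := by
  subst hSdef
  set A := {p : ℝ × ℝ | p.1 ∈ s ∧ l p.1 < p.2 ∧ p.2 < u p.1} with hAdef
  have hA : MeasurableSet A := region_measurable hs hl hu
  have hInd : Integrable (A.indicator g) volume := (integrable_indicator_iff hA).2 hg
  have hInd' : Integrable (A.indicator g) ((volume : Measure ℝ).prod volume) := by
    rwa [← Measure.volume_eq_prod]
  have key : ∀ x, (∫ y, A.indicator g (x, y)) =
      s.indicator (fun x => ∫ y in Ioo (l x) (u x), g (x, y)) x := by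
    intro x
    by_cases hx : x ∈ s
    · rw [indicator_of_mem hx, ← integral_indicator measurableSet_Ioo]
      congr 1
      funext y
      by_cases hy : y ∈ Ioo (l x) (u x)
      · rw [indicator_of_mem hy, indicator_of_mem]
        exact ⟨hx, hy.1, hy.2⟩
      · rw [indicator_of_notMem hy, indicator_of_notMem]
        intro h
        exact hy ⟨h.2.1, h.2.2⟩
    · rw [indicator_of_notMem hx]
      have hz : ∀ y, A.indicator g (x, y) = 0 :=
        fun y => indicator_of_notMem (fun h => hx h.1) g
      simp only [hz, integral_zero]
  constructor
  · rw [← integral_indicator hA]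
    calc (∫ p, A.indicator g p) = ∫ p, A.indicator g p ∂((volume : Measure ℝ).prod volume) := by
          rw [← Measure.volume_eq_prod]
      _ = ∫ x, ∫ y, A.indicator g (x, y) := integral_prod _ hInd'
      _ = ∫ x, s.indicator (fun x => ∫ y in Ioo (l x) (u x), g (x, y)) x := by
          simp only [key]
      _ = ∫ x in s, ∫ y in Ioo (l x) (u x), g (x, y) := integral_indicator hs
  · have h2 := hInd'.integral_prod_left
    have h3 : (fun x => ∫ y, A.indicator g (x, y)) =
        s.indicator (fun x => ∫ y in Ioo (l x) (u x), g (x, y)) := funext key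
    rw [h3] at h2
    exact (integrable_indicator_iff hs).1 h2

end helpers

/-- Uniform a priori `H¹`-bound, in the rescaled norm, for the Neumann problem on the
rectified thin domain with right-hand side concentrated in the narrow strip. -/
theorem thin_domain_a_priori_bound
    (a b : ℝ) (hab : a < b) (γ ε c : ℝ) (hγ : 0 < γ) (hε : ε ∈ Set.Ioo (0 : ℝ) 1)
    (hc : 0 < c)
    (K : ℝ → ℝ) (hKcont : ContinuousOn K (Set.Icc a b))
    (K₀ K₁ : ℝ) (hK₀ : 0 < K₀)
    (hKbd : ∀ x ∈ Set.Icc a b, K₀ ≤ K x ∧ K x ≤ K₁)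
    (H : ℝ → ℝ) (hHmeas : Measurable H)
    (H₁ : ℝ) (hHbd : ∀ x ∈ Set.Icc a b, 0 ≤ H x ∧ H x ≤ H₁)
    (hsmall : ε ^ γ * H₁ ≤ K₀)
    (Ra θ₁ : Set (ℝ × ℝ))
    (hRa : Ra = {p : ℝ × ℝ | p.1 ∈ Set.Icc a b ∧ 0 < p.2 ∧ p.2 < ε * K p.1})
    (hθ₁ : θ₁ = {p : ℝ × ℝ | p.1 ∈ Set.Icc a b ∧
      ε * (K p.1 - ε ^ γ * H p.1) < p.2 ∧ p.2 < ε * K p.1})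
    (f : ℝ × ℝ → ℝ) (hf : MemLp f 2 (volume.restrict θ₁))
    (hfbd : (1 / ε ^ (γ + 1)) * ∫ p in θ₁, (f p) ^ 2 ≤ c)
    (v : ℝ × ℝ → ℝ) (U : Set (ℝ × ℝ)) (hU : IsOpen U) (hUR : closure Ra ⊆ U)
    (hv : ContDiffOn ℝ 1 v U)
    (henergy : ∫ p in Ra,
        ((fderiv ℝ v p (1, 0)) ^ 2 + (fderiv ℝ v p (0, 1)) ^ 2 + (v p) ^ 2) =
      (1 / ε ^ γ) * ∫ p in θ₁, f p * v p) :
    (1 / ε) * ∫ p in Ra,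
        ((fderiv ℝ v p (1, 0)) ^ 2 + (fderiv ℝ v p (0, 1)) ^ 2 + (v p) ^ 2) ≤
      c * max (2 * H₁ / K₀) (H₁ * K₁) := by
  obtain ⟨hε0, hε1⟩ := hε
  have hεγ : 0 < ε ^ γ := Real.rpow_pos_of_pos hε0 γ
  have hεγ1 : ε ^ γ ≤ 1 := Real.rpow_le_one hε0.le hε1.le hγ.le
  have haI : a ∈ Icc a b := left_mem_Icc.2 hab.le
  have hH₁ : 0 ≤ H₁ := (hHbd a haI).1.trans (hHbd a haI).2
  have hK₀K₁ : K₀ ≤ K₁ := (hKbd a haI).1.trans (hKbd a haI).2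
  set M : ℝ := max (2 * H₁ / K₀) (H₁ * K₁) with hMdef
  have hM : 0 ≤ M :=
    le_trans (mul_nonneg hH₁ (hK₀.trans_le hK₀K₁).le) (le_max_right _ _)
  -- continuous extension of K
  set K' : ℝ → ℝ := fun x => K (projIcc a b hab.le x) with hK'def
  have hK'cont : Continuous K' :=
    hKcont.comp_continuous (continuous_subtype_val.comp continuous_projIcc)
      (fun x => (projIcc a b hab.le x).2)
  have hK'eq : ∀ x ∈ Icc a b, K' x = K x := by
    intro x hx
    simp only [hK'def, projIcc_of_mem hab.le hx]
  have hK'bd : ∀ x ∈ Icc a b, K₀ ≤ K' x ∧ K' x ≤ K₁ := by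
    intro x hx; rw [hK'eq x hx]; exact hKbd x hx
  set hi : ℝ → ℝ := fun x => ε * K' x with hhidef
  set lo : ℝ → ℝ := fun x => ε * (K' x - ε ^ γ * H x) with hlodef
  set zer : ℝ → ℝ := fun _ => (0:ℝ) with hzerdef
  have hmeas_hi : Measurable hi := hK'cont.measurable.const_mul ε
  have hmeas_lo : Measurable lo :=
    (hK'cont.measurable.sub (hHmeas.const_mul (ε ^ γ))).const_mul ε
  have hRaeq : Ra = {p : ℝ × ℝ | p.1 ∈ Icc a b ∧ zer p.1 < p.2 ∧ p.2 < hi p.1} := by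
    rw [hRa]; ext p
    simp only [mem_setOf_eq, hhidef, hzerdef]
    constructor
    · rintro ⟨h1, h2, h3⟩
      exact ⟨h1, h2, by rw [hK'eq p.1 h1]; exact h3⟩
    · rintro ⟨h1, h2, h3⟩
      rw [hK'eq p.1 h1] at h3
      exact ⟨h1, h2, h3⟩
  have hθeq : θ₁ = {p : ℝ × ℝ | p.1 ∈ Icc a b ∧ lo p.1 < p.2 ∧ p.2 < hi p.1} := by
    rw [hθ₁]; ext p
    simp only [mem_setOf_eq, hhidef, hlodef]
    constructor
    · rintro ⟨h1, h2, h3⟩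
      exact ⟨h1, by rw [hK'eq p.1 h1]; exact h2, by rw [hK'eq p.1 h1]; exact h3⟩
    · rintro ⟨h1, h2, h3⟩
      rw [hK'eq p.1 h1] at h2 h3
      exact ⟨h1, h2, h3⟩
  have hRam : MeasurableSet Ra := by
    rw [hRaeq]; exact region_measurable measurableSet_Icc measurable_const hmeas_hi
  have hθm : MeasurableSet θ₁ := by
    rw [hθeq]; exact region_measurable measurableSet_Icc hmeas_lo hmeas_hi
  -- geometry
  have hHK : ∀ x ∈ Icc a b, ε ^ γ * H x ≤ K' x := by
    intro x hx
    calc ε ^ γ * H x ≤ ε ^ γ * H₁ :=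
          mul_le_mul_of_nonneg_left (hHbd x hx).2 hεγ.le
      _ ≤ K₀ := hsmall
      _ ≤ K' x := (hK'bd x hx).1
  have hlo_nonneg : ∀ x ∈ Icc a b, 0 ≤ lo x := by
    intro x hx
    have := hHK x hx
    simp only [hlodef]
    nlinarith [hε0]
  have hθRa : θ₁ ⊆ Ra := by
    rw [hθeq, hRaeq]
    rintro p ⟨h1, h2, h3⟩
    exact ⟨h1, lt_of_le_of_lt (hlo_nonneg p.1 h1) h2, h3⟩
  -- compactness and integrability
  have hQc : IsCompact (Icc a b ×ˢ Icc (0:ℝ) (ε * K₁)) := isCompact_Icc.prod isCompact_Icc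
  have hRaQ : Ra ⊆ Icc a b ×ˢ Icc (0:ℝ) (ε * K₁) := by
    rw [hRaeq]
    rintro p ⟨h1, h2, h3⟩
    refine ⟨h1, le_of_lt h2, ?_⟩
    calc p.2 ≤ ε * K' p.1 := le_of_lt h3
      _ ≤ ε * K₁ := mul_le_mul_of_nonneg_left (hK'bd p.1 h1).2 hε0.le
  have hclc : IsCompact (closure Ra) :=
    hQc.of_isClosed_subset isClosed_closure (closure_minimal hRaQ hQc.isClosed)
  have hRaU : Ra ⊆ U := subset_closure.trans hUR
  have hfinRa : volume Ra ≠ ⊤ := ((measure_mono hRaQ).trans_lt hQc.measure_lt_top).ne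
  have hfinθ : volume θ₁ ≠ ⊤ := ((measure_mono hθRa).trans_lt hfinRa.lt_top).ne
  -- continuity of pieces
  have hvU : ContinuousOn v U := hv.continuousOn
  have hDU : ContinuousOn (fun p => fderiv ℝ v p) U := hv.continuousOn_fderiv_of_isOpen hU le_rfl
  have hD1U : ContinuousOn (fun p => fderiv ℝ v p (1, 0)) U := hDU.clm_apply continuousOn_const
  have hD2U : ContinuousOn (fun p => fderiv ℝ v p (0, 1)) U := hDU.clm_apply continuousOn_const
  have hgU : ContinuousOn (fun p => (fderiv ℝ v p (1, 0)) ^ 2 + (fderiv ℝ v p (0, 1)) ^ 2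
      + (v p) ^ 2) U := ((hD1U.pow 2).add (hD2U.pow 2)).add (hvU.pow 2)
  have hint_of_cont : ∀ g : ℝ × ℝ → ℝ, ContinuousOn g U → IntegrableOn g Ra := by
    intro g hg
    exact ((hg.mono hUR).integrableOn_compact hclc).mono_set subset_closure
  have int_v2_Ra : IntegrableOn (fun p => (v p) ^ 2) Ra := hint_of_cont _ (hvU.pow 2)
  have int_D1_Ra : IntegrableOn (fun p => (fderiv ℝ v p (1, 0)) ^ 2) Ra :=
    hint_of_cont _ (hD1U.pow 2)
  have int_D2_Ra : IntegrableOn (fun p => (fderiv ℝ v p (0, 1)) ^ 2) Ra :=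
    hint_of_cont _ (hD2U.pow 2)
  have int_v2_θ : IntegrableOn (fun p => (v p) ^ 2) θ₁ := int_v2_Ra.mono_set hθRa
  -- names for the main quantities
  set T : ℝ := ∫ p in Ra,
      ((fderiv ℝ v p (1, 0)) ^ 2 + (fderiv ℝ v p (0, 1)) ^ 2 + (v p) ^ 2) with hTdef
  set J1 : ℝ := ∫ p in Ra, (fderiv ℝ v p (1, 0)) ^ 2 with hJ1def
  set J2 : ℝ := ∫ p in Ra, (fderiv ℝ v p (0, 1)) ^ 2 with hJ2def
  set Jv : ℝ := ∫ p in Ra, (v p) ^ 2 with hJvdef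
  set Sθ : ℝ := ∫ p in θ₁, (v p) ^ 2 with hSdef
  set F : ℝ := ∫ p in θ₁, (f p) ^ 2 with hFdef
  have hT0 : 0 ≤ T := integral_nonneg (fun p => by positivity)
  have hJ10 : 0 ≤ J1 := integral_nonneg (fun p => by positivity)
  have hJ20 : 0 ≤ J2 := integral_nonneg (fun p => by positivity)
  have hJv0 : 0 ≤ Jv := integral_nonneg (fun p => by positivity)
  have hS0 : 0 ≤ Sθ := integral_nonneg (fun p => by positivity)
  have hF0 : 0 ≤ F := integral_nonneg (fun p => by positivity)
  have iadd : IntegrableOn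
      (fun p => (fderiv ℝ v p (1, 0)) ^ 2 + (fderiv ℝ v p (0, 1)) ^ 2) Ra :=
    int_D1_Ra.add int_D2_Ra
  have hsplit : T = J1 + J2 + Jv := by
    have e1 : (∫ p in Ra, ((fderiv ℝ v p (1, 0)) ^ 2 + (fderiv ℝ v p (0, 1)) ^ 2 + (v p) ^ 2))
        = (∫ p in Ra, ((fderiv ℝ v p (1, 0)) ^ 2 + (fderiv ℝ v p (0, 1)) ^ 2))
          + ∫ p in Ra, (v p) ^ 2 := integral_add iadd int_v2_Ra
    have e2 : (∫ p in Ra, ((fderiv ℝ v p (1, 0)) ^ 2 + (fderiv ℝ v p (0, 1)) ^ 2))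
        = (∫ p in Ra, (fderiv ℝ v p (1, 0)) ^ 2) + ∫ p in Ra, (fderiv ℝ v p (0, 1)) ^ 2 :=
      integral_add int_D1_Ra int_D2_Ra
    rw [hTdef, e1, e2, hJ1def, hJ2def, hJvdef]
  -- step 1: the trace inequality  Sθ ≤ ε^γ * M * T
  have hmeas_zer : Measurable zer := by rw [hzerdef]; exact measurable_const
  have hpoint : ∀ x ∈ Icc a b,
      (∫ y in Ioo (lo x) (hi x), (v (x, y)) ^ 2) ≤
      ε ^ γ * ((2 * H₁ / K₀) * (∫ y in Ioo (0:ℝ) (hi x), (v (x, y)) ^ 2)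
        + (H₁ * K₁) * (∫ y in Ioo (0:ℝ) (hi x), (fderiv ℝ v (x, y) (0, 1)) ^ 2)) := by
    intro x hx
    have hK'x := hK'bd x hx
    have hLpos : 0 < hi x := by
      simp only [hhidef]
      exact mul_pos hε0 (lt_of_lt_of_le hK₀ hK'x.1)
    have hxclos : ∀ y ∈ Icc (0:ℝ) (hi x), (x, y) ∈ closure Ra := by
      intro y hy
      have hsub0 : {x} ×ˢ Ioo (0:ℝ) (hi x) ⊆ Ra := by
        rw [hRaeq]
        rintro p ⟨hp1, hp2⟩
        simp only [mem_singleton_iff] at hp1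
        exact ⟨hp1 ▸ hx, hp2.1, hp1 ▸ hp2.2⟩
      have h1 : closure ({x} ×ˢ Ioo (0:ℝ) (hi x)) ⊆ closure Ra := closure_mono hsub0
      rw [closure_prod_eq, closure_singleton, closure_Ioo hLpos.ne] at h1
      exact h1 ⟨rfl, hy⟩
    have hmemU : ∀ y ∈ Icc (0:ℝ) (hi x), (x, y) ∈ U := fun y hy => hUR (hxclos y hy)
    have hw : ∀ y ∈ Icc (0:ℝ) (hi x),
        HasDerivAt (fun s : ℝ => v (x, s)) (fderiv ℝ v (x, y) (0, 1)) y := by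
      intro y hy
      have hdiff : DifferentiableAt ℝ v (x, y) :=
        (hv.contDiffAt (hU.mem_nhds (hmemU y hy))).differentiableAt one_ne_zero
      have hline : HasDerivAt (fun s : ℝ => ((x : ℝ), s)) ((0 : ℝ), (1 : ℝ)) y :=
        (hasDerivAt_const y x).prodMk (hasDerivAt_id y)
      exact hdiff.hasFDerivAt.comp_hasDerivAt y hline
    have hw'cont : ContinuousOn (fun y => fderiv ℝ v (x, y) (0, 1)) (Icc (0:ℝ) (hi x)) := by
      apply hD2U.comp ((continuous_const.prodMk continuous_id).continuousOn)
      exact fun y hy => hmemU y hy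
    have hd0 : 0 ≤ ε * (ε ^ γ * H x) :=
      mul_nonneg hε0.le (mul_nonneg hεγ.le (hHbd x hx).1)
    have hdL : ε * (ε ^ γ * H x) ≤ hi x := by
      simp only [hhidef]
      exact mul_le_mul_of_nonneg_left (hHK x hx) hε0.le
    have hlo' : lo x = hi x - ε * (ε ^ γ * H x) := by
      simp only [hlodef, hhidef]; ring
    have ht : (0:ℝ) < 1 / K₀ := by positivity
    have hslice := slice_bound (hi x) (ε * (ε ^ γ * H x)) (1 / K₀) hLpos hd0 hdL ht
      (fun s => v (x, s)) (fun y => fderiv ℝ v (x, y) (0, 1)) hw hw'cont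
    rw [← hlo'] at hslice
    refine le_trans hslice ?_
    have hA0 : 0 ≤ ∫ y in Ioo (0:ℝ) (hi x), (v (x, y)) ^ 2 :=
      integral_nonneg (fun y => sq_nonneg _)
    have hB0 : 0 ≤ ∫ y in Ioo (0:ℝ) (hi x), (fderiv ℝ v (x, y) (0, 1)) ^ 2 :=
      integral_nonneg (fun y => sq_nonneg _)
    have := aux_const (γ := γ) hε0 hε1.le (hHbd x hx).1 (hHbd x hx).2 hK₀ hK'x.1 hK'x.2 hA0 hB0
    calc (ε * (ε ^ γ * H x)) * ((1 / hi x + 1 / K₀) *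
            (∫ y in Ioo (0:ℝ) (hi x), (v (x, y)) ^ 2) +
          (1 / (1 / K₀)) * ∫ y in Ioo (0:ℝ) (hi x), (fderiv ℝ v (x, y) (0, 1)) ^ 2)
        = (ε * (ε ^ γ * H x)) * ((1 / (ε * K' x) + 1 / K₀) *
            (∫ y in Ioo (0:ℝ) (hi x), (v (x, y)) ^ 2) +
          (1 / (1 / K₀)) * ∫ y in Ioo (0:ℝ) (hi x), (fderiv ℝ v (x, y) (0, 1)) ^ 2) := by
          rw [hhidef]
      _ ≤ _ := this
  obtain ⟨hFθeq, hFθint⟩ := fubini_region measurableSet_Icc hmeas_lo hmeas_hi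
      (fun p => (v p) ^ 2) θ₁ hθeq int_v2_θ
  obtain ⟨hFveq, hFvint⟩ := fubini_region measurableSet_Icc hmeas_zer hmeas_hi
      (fun p => (v p) ^ 2) Ra hRaeq int_v2_Ra
  obtain ⟨hFDeq, hFDint⟩ := fubini_region measurableSet_Icc hmeas_zer hmeas_hi
      (fun p => (fderiv ℝ v p (0, 1)) ^ 2) Ra hRaeq int_D2_Ra
  simp only [hzerdef] at hFveq hFvint hFDeq hFDint
  have htrace : Sθ ≤ ε ^ γ * M * T := by
    have hmono : (∫ x in Icc a b, ∫ y in Ioo (lo x) (hi x), (v (x, y)) ^ 2)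
        ≤ ∫ x in Icc a b, ε ^ γ * ((2 * H₁ / K₀) *
            (∫ y in Ioo (0:ℝ) (hi x), (v (x, y)) ^ 2)
          + (H₁ * K₁) * (∫ y in Ioo (0:ℝ) (hi x), (fderiv ℝ v (x, y) (0, 1)) ^ 2)) := by
      refine setIntegral_mono_on hFθint ?_ measurableSet_Icc hpoint
      exact (((hFvint.const_mul _).add (hFDint.const_mul _)).const_mul _)
    have hlin : (∫ x in Icc a b, ε ^ γ * ((2 * H₁ / K₀) *
            (∫ y in Ioo (0:ℝ) (hi x), (v (x, y)) ^ 2)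
          + (H₁ * K₁) * (∫ y in Ioo (0:ℝ) (hi x), (fderiv ℝ v (x, y) (0, 1)) ^ 2)))
        = ε ^ γ * ((2 * H₁ / K₀) * Jv + (H₁ * K₁) * J2) := by
      rw [integral_const_mul,
        integral_add (hFvint.const_mul _) (hFDint.const_mul _),
        integral_const_mul, integral_const_mul, hJvdef, hJ2def, hFveq, hFDeq]
    have hcomb : (2 * H₁ / K₀) * Jv + (H₁ * K₁) * J2 ≤ M * T := by
      have hα : 2 * H₁ / K₀ ≤ M := le_max_left _ _
      have hβ : H₁ * K₁ ≤ M := le_max_right _ _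
      have c1 : (2 * H₁ / K₀) * Jv ≤ M * Jv := mul_le_mul_of_nonneg_right hα hJv0
      have c2 : (H₁ * K₁) * J2 ≤ M * J2 := mul_le_mul_of_nonneg_right hβ hJ20
      have c3 : M * T = M * J1 + M * J2 + M * Jv := by rw [hsplit]; ring
      have c4 : 0 ≤ M * J1 := mul_nonneg hM hJ10
      linarith
    calc Sθ = ∫ x in Icc a b, ∫ y in Ioo (lo x) (hi x), (v (x, y)) ^ 2 := by
          rw [hSdef]; exact hFθeq
      _ ≤ _ := hmono
      _ = ε ^ γ * ((2 * H₁ / K₀) * Jv + (H₁ * K₁) * J2) := hlin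
      _ ≤ ε ^ γ * (M * T) := mul_le_mul_of_nonneg_left hcomb hεγ.le
      _ = ε ^ γ * M * T := by ring
  -- step 2: Cauchy-Schwarz  ∫ f v ≤ √F √Sθ
  have hCS : (∫ p in θ₁, f p * v p) ≤ Real.sqrt F * Real.sqrt Sθ := by
    haveI : Fact (volume θ₁ < ⊤) := ⟨hfinθ.lt_top⟩
    have hvaesm : AEStronglyMeasurable v (volume.restrict θ₁) :=
      (hvU.mono (hθRa.trans hRaU)).aestronglyMeasurable hθm
    obtain ⟨Cv, hCv⟩ := hclc.exists_bound_of_continuousOn (hvU.mono hUR)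
    have hvbd : ∀ᵐ p ∂(volume.restrict θ₁), ‖v p‖ ≤ Cv := by
      filter_upwards [ae_restrict_mem hθm] with p hp
      exact hCv p (subset_closure (hθRa hp))
    have hvmem : MemLp v 2 (volume.restrict θ₁) := MemLp.of_bound hvaesm Cv hvbd
    have hconj : Real.HolderConjugate 2 2 := Real.HolderConjugate.two_two
    have hfp : MemLp f (ENNReal.ofReal 2) (volume.restrict θ₁) := by
      simpa using hf
    have hvp : MemLp v (ENNReal.ofReal 2) (volume.restrict θ₁) := by
      simpa using hvmem
    have hHold := integral_mul_norm_le_Lp_mul_Lq hconj hfp hvp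
    have hfint : Integrable f (volume.restrict θ₁) := hf.integrable one_le_two
    have hfv_int : Integrable (fun p => f p * v p) (volume.restrict θ₁) := by
      have h := hfint.bdd_mul hvaesm hvbd
      exact h.congr (ae_of_all _ (fun p => mul_comm _ _))
    have habs_int : Integrable (fun p => ‖f p‖ * ‖v p‖) (volume.restrict θ₁) := by
      refine hfv_int.abs.congr (ae_of_all _ (fun p => ?_))
      simp [abs_mul]
    have h1 : (∫ p in θ₁, f p * v p) ≤ ∫ p in θ₁, ‖f p‖ * ‖v p‖ := by
      refine integral_mono hfv_int habs_int (fun p => ?_)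
      calc f p * v p ≤ |f p * v p| := le_abs_self _
        _ = ‖f p‖ * ‖v p‖ := by simp [abs_mul]
    have e2 : (∫ p in θ₁, ‖f p‖ ^ (2:ℝ)) = F := by
      rw [hFdef]
      apply integral_congr_ae
      filter_upwards with p
      rw [show (2:ℝ) = ((2:ℕ):ℝ) by norm_num, Real.rpow_natCast]
      simp [sq_abs]
    have e3 : (∫ p in θ₁, ‖v p‖ ^ (2:ℝ)) = Sθ := by
      rw [hSdef]
      apply integral_congr_ae
      filter_upwards with p
      rw [show (2:ℝ) = ((2:ℕ):ℝ) by norm_num, Real.rpow_natCast]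
      simp [sq_abs]
    have e4 : F ^ ((1:ℝ)/2) = Real.sqrt F := (Real.sqrt_eq_rpow F).symm
    have e5 : Sθ ^ ((1:ℝ)/2) = Real.sqrt Sθ := (Real.sqrt_eq_rpow Sθ).symm
    rw [e2, e3, e4, e5] at hHold
    exact h1.trans hHold
  -- step 3: conclusion
  have hFbd : F ≤ c * ε ^ (γ + 1) := by
    have hp : 0 < ε ^ (γ + 1) := Real.rpow_pos_of_pos hε0 _
    have h2 := mul_le_mul_of_nonneg_left hfbd hp.le
    rw [← mul_assoc, mul_one_div, div_self hp.ne'] at h2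
    linarith
  have hTchain : T ≤ Real.sqrt (c * ε * (M * T)) := by
    have h1 : T ≤ (1 / ε ^ γ) * (Real.sqrt F * Real.sqrt Sθ) := by
      rw [henergy]
      exact mul_le_mul_of_nonneg_left hCS (by positivity)
    have h2 : Real.sqrt F * Real.sqrt Sθ ≤
        Real.sqrt (c * ε ^ (γ + 1)) * Real.sqrt (ε ^ γ * (M * T)) := by
      apply mul_le_mul (Real.sqrt_le_sqrt hFbd)
        (Real.sqrt_le_sqrt (by rw [← mul_assoc]; exact htrace))
        (Real.sqrt_nonneg _) (Real.sqrt_nonneg _)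
    have h3 : Real.sqrt (c * ε ^ (γ + 1)) * Real.sqrt (ε ^ γ * (M * T)) =
        ε ^ γ * Real.sqrt (c * ε * (M * T)) := by
      rw [← Real.sqrt_mul (by positivity) (ε ^ γ * (M * T))]
      rw [show c * ε ^ (γ + 1) * (ε ^ γ * (M * T)) = (ε ^ γ) ^ 2 * (c * ε * (M * T)) by
        rw [Real.rpow_add hε0, Real.rpow_one]; ring]
      rw [Real.sqrt_mul (by positivity) (c * ε * (M * T)), Real.sqrt_sq hεγ.le]
    calc T ≤ (1 / ε ^ γ) * (Real.sqrt F * Real.sqrt Sθ) := h1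
      _ ≤ (1 / ε ^ γ) * (ε ^ γ * Real.sqrt (c * ε * (M * T))) := by
          rw [← h3]
          exact mul_le_mul_of_nonneg_left h2 (by positivity)
      _ = Real.sqrt (c * ε * (M * T)) := by field_simp
  have hTsq : T ^ 2 ≤ c * ε * (M * T) := by
    have hXnn : 0 ≤ c * ε * (M * T) := by positivity
    calc T ^ 2 ≤ Real.sqrt (c * ε * (M * T)) ^ 2 := by
          exact pow_le_pow_left₀ hT0 hTchain 2
      _ = c * ε * (M * T) := Real.sq_sqrt hXnn
  rcases eq_or_lt_of_le hT0 with hT | hT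
  · rw [← hT, mul_zero]
    positivity
  · have hTle : T ≤ c * ε * M :=
      aux_cancel hT (le_of_le_of_eq hTsq (by ring))
    rw [one_div, inv_mul_le_iff₀ hε0]
    calc T ≤ c * ε * M := hTle
      _ = ε * (c * M) := by ring
end
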